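/- arXiv:1311.0697 — 11 statements merged into one kernel-verified Lean document; each statement's English description precedes it below -/
import Mathlib

section
/- Let Γ be a profinite group, 𝔊 a profinite Γ-group and η : Γ → 𝔊 a generating cocycle with kernel Δ. For any family (a_i)_{i∈I} of ideals of 𝔊 and any family (Λ_i)_{i∈I} of closed subgroups of Γ containing Δ one has S(⋂_{i∈I} a_i) = ⋂_{i∈I} S(a_i) and J(⋁_{i∈I} Λ_i) = ⋁_{i∈I} J(Λ_i), where ⋁ of closed subgroups (resp. of ideals) denotes the smallest closed subgroup (resp. smallest ideal) containing all members of the family. -/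
/-- An *ideal* of a topological `Γ`-group `𝔊`: a closed, normal, `Γ`-invariant subgroup. -/
def IsIdealSG (Γ : Type*) {𝔊 : Type*} [Group 𝔊] [TopologicalSpace 𝔊] [SMul Γ 𝔊]
    (a : Subgroup 𝔊) : Prop :=
  IsClosed (a : Set 𝔊) ∧ a.Normal ∧ ∀ (γ : Γ) (g : 𝔊), g ∈ a → γ • g ∈ a

/-- `cogalJ Γ η X` is the smallest ideal of the `Γ`-group `𝔊` containing `η '' X`. -/
def cogalJ (Γ : Type*) {𝔊 : Type*} [Group 𝔊] [TopologicalSpace 𝔊] [SMul Γ 𝔊]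
    (η : Γ → 𝔊) (X : Set Γ) : Subgroup 𝔊 :=
  sInf {a : Subgroup 𝔊 | IsIdealSG Γ a ∧ ∀ γ ∈ X, η γ ∈ a}

/-- The smallest ideal of the `Γ`-group `𝔊` containing all members of a family of subgroups. -/
def idealSup (Γ : Type*) {𝔊 : Type*} [Group 𝔊] [TopologicalSpace 𝔊] [SMul Γ 𝔊]
    (S : Set (Subgroup 𝔊)) : Subgroup 𝔊 :=
  sInf {a : Subgroup 𝔊 | IsIdealSG Γ a ∧ ∀ b ∈ S, b ≤ a}

/-- For a generating cocycle `η : Γ → 𝔊`, the operator `S = η ⁻¹(·)` turns arbitrary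
intersections of ideals into intersections, and the operator `J` turns arbitrary joins of
closed subgroups containing `Δ = ker η` (the smallest closed subgroup containing the union)
into joins of ideals (the smallest ideal containing the union). -/
theorem cogalS_inter_and_cogalJ_sup
    {Γ 𝔊 : Type*} [Group Γ] [TopologicalSpace Γ] [IsTopologicalGroup Γ]
    [CompactSpace Γ] [T2Space Γ] [TotallyDisconnectedSpace Γ]
    [Group 𝔊] [TopologicalSpace 𝔊] [IsTopologicalGroup 𝔊]
    [CompactSpace 𝔊] [T2Space 𝔊] [TotallyDisconnectedSpace 𝔊]
    [MulDistribMulAction Γ 𝔊] [ContinuousSMul Γ 𝔊]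
    (η : Γ → 𝔊) (hcont : Continuous η)
    (hcoc : ∀ σ τ : Γ, η (σ * τ) = η σ * σ • η τ)
    (hgen : (Subgroup.closure (Set.range η)).topologicalClosure = ⊤)
    {I : Type*} :
    (∀ a : I → Subgroup 𝔊, (∀ i, IsIdealSG Γ (a i)) →
        η ⁻¹' ((⨅ i, a i : Subgroup 𝔊) : Set 𝔊) = ⋂ i, η ⁻¹' ((a i : Set 𝔊))) ∧
    (∀ Λ : I → Subgroup Γ,
        (∀ i, IsClosed ((Λ i : Set Γ)) ∧ ∀ γ : Γ, η γ = 1 → γ ∈ Λ i) →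
        cogalJ Γ η (((⨆ i, Λ i : Subgroup Γ).topologicalClosure : Subgroup Γ) : Set Γ) =
          idealSup Γ {b : Subgroup 𝔊 | ∃ i, b = cogalJ Γ η ((Λ i : Set Γ))}) := by
  have hη1 : η 1 = 1 := by
    have h := hcoc 1 1
    rw [one_smul, mul_one] at h
    exact (left_eq_mul.mp h)
  constructor
  · intro a ha
    ext γ
    simp [Set.mem_iInter]
  · intro Λ hΛ
    unfold cogalJ idealSup
    congr 1
    ext a
    simp only [Set.mem_setOf_eq]
    constructor
    · rintro ⟨hideal, hmem⟩
      refine ⟨hideal, ?_⟩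
      rintro b ⟨i, rfl⟩
      refine sInf_le ⟨hideal, ?_⟩
      intro γ hγ
      exact hmem γ (Subgroup.le_topologicalClosure _ (le_iSup Λ i hγ))
    · rintro ⟨hideal, hmem⟩
      refine ⟨hideal, ?_⟩
      obtain ⟨hclosed, hnormal, hinv⟩ := hideal
      set S : Subgroup Γ :=
        { carrier := η ⁻¹' a
          one_mem' := by simp [hη1, a.one_mem]
          mul_mem' := by
            intro σ τ hσ hτ
            simp only [Set.mem_preimage, SetLike.mem_coe, hcoc] at *
            exact a.mul_mem hσ (hinv σ _ hτ)
          inv_mem' := by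
            intro σ hσ
            simp only [Set.mem_preimage, SetLike.mem_coe] at *
            have h1 : η σ * σ • η σ⁻¹ = 1 := by rw [← hcoc]; simp [hη1]
            have h2 : (η σ)⁻¹ = σ • η σ⁻¹ := inv_eq_of_mul_eq_one_right h1
            have h3 : σ • η σ⁻¹ ∈ a := h2 ▸ a.inv_mem hσ
            have h4 := hinv σ⁻¹ _ h3
            rwa [inv_smul_smul] at h4 } with hS
      have hSclosed : IsClosed (S : Set Γ) := hclosed.preimage hcont
      have hle : (⨆ i, Λ i).topologicalClosure ≤ S := by
        apply Subgroup.topologicalClosure_minimal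
        · apply iSup_le
          intro i γ hγ
          have hmemJ : η γ ∈ cogalJ Γ η (Λ i : Set Γ) := by
            refine Subgroup.mem_sInf.mpr ?_
            rintro b ⟨-, hb⟩
            exact hb γ hγ
          exact hmem _ ⟨i, rfl⟩ hmemJ
        · exact hSclosed
      intro γ hγ
      exact hle hγ
end

section
/- Let η : Γ → 𝔊 be a generating cocycle, Δ := ker η, Δ' := Fix_Γ(𝔊), Δ'' := {σ ∈ Γ : γ•η(σ) = η(γσγ⁻¹) for all γ ∈ Γ}, Δ̄ := Δ' ∩ Δ'' and Δ̃ := Δ ∩ Δ'. Then: (1) Δ'' is a closed normal subgroup of Γ and is the largest closed normal subgroup Λ of Γ such that η(γσγ⁻¹) = γ•η(σ) for all σ ∈ Λ and γ ∈ Γ; in particular Δ̄ is a closed normal subgroup of Γ containing Δ̃; (2) if 𝔊 is abelian then Δ' ⊆ Δ'', so Δ̄ = Δ'; (3) η(Δ̄) is a subgroup of 𝔊 contained in the center C(𝔊) of 𝔊 and η(Δ̄) = J(Δ̄), so η(Δ̄) is an ideal of 𝔊; (4) Δ̄ = Δ' ∩ η⁻¹(C(𝔊)); (5) η restricts to an isomorphism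 of topological groups from Δ̄/Δ̃ onto η(Δ̄). -/
/-- Properties of a generating cocycle `η : Γ → 𝔊`, where
`Δ = ker η`, `Δ' = Fix_Γ(𝔊)`, `Δ'' = {σ | ∀ γ, γ • η σ = η (γσγ⁻¹)}`, `Δ̄ = Δ' ∩ Δ''`,
`Δ̃ = Δ ∩ Δ'`:
(1) `Δ''` is the carrier of a closed normal subgroup of `Γ`, and it is the largest closed
normal subgroup `Λ` such that `η (γσγ⁻¹) = γ • η σ` for all `σ ∈ Λ`, `γ ∈ Γ`; in particular
`Δ̄` carries a closed normal subgroup containing `Δ̃`;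
(2) if `𝔊` is abelian then `Δ' ⊆ Δ''`, so `Δ̄ = Δ'`;
(3) `η(Δ̄)` is (the carrier of) a subgroup of `𝔊` contained in the center, equal to `J(Δ̄)`,
hence an ideal of `𝔊`;
(4) `Δ̄ = Δ' ∩ η⁻¹(C(𝔊))`;
(5) `η` restricts to an isomorphism of topological groups `Δ̄/Δ̃ ≅ η(Δ̄)`. -/
theorem generating_cocycle_properties
    {Γ 𝔊 : Type*} [Group Γ] [TopologicalSpace Γ] [IsTopologicalGroup Γ]
    [CompactSpace Γ] [T2Space Γ] [TotallyDisconnectedSpace Γ]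
    [Group 𝔊] [TopologicalSpace 𝔊] [IsTopologicalGroup 𝔊]
    [CompactSpace 𝔊] [T2Space 𝔊] [TotallyDisconnectedSpace 𝔊]
    [MulDistribMulAction Γ 𝔊] [ContinuousSMul Γ 𝔊]
    (η : Γ → 𝔊) (hcont : Continuous η)
    (hcoc : ∀ σ τ : Γ, η (σ * τ) = η σ * σ • η τ)
    (hgen : (Subgroup.closure (Set.range η)).topologicalClosure = ⊤)
    (Δ Δ' Δ'' Δbar Δtilde : Set Γ)
    (hΔ : Δ = η ⁻¹' {1})
    (hΔ' : Δ' = {γ : Γ | ∀ g : 𝔊, γ • g = g})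
    (hΔ'' : Δ'' = {σ : Γ | ∀ γ : Γ, γ • η σ = η (γ * σ * γ⁻¹)})
    (hΔbar : Δbar = Δ' ∩ Δ'')
    (hΔtilde : Δtilde = Δ ∩ Δ') :
    -- (1)
    ((∃ N : Subgroup Γ, (N : Set Γ) = Δ'' ∧ N.Normal ∧ IsClosed (N : Set Γ)) ∧
      (∀ Λ : Subgroup Γ, Λ.Normal → IsClosed (Λ : Set Γ) →
        (∀ σ ∈ Λ, ∀ γ : Γ, η (γ * σ * γ⁻¹) = γ • η σ) → (Λ : Set Γ) ⊆ Δ'') ∧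
      (∃ Nb : Subgroup Γ, (Nb : Set Γ) = Δbar ∧ Nb.Normal ∧ IsClosed (Nb : Set Γ)) ∧
      Δtilde ⊆ Δbar) ∧
    -- (2)
    ((∀ a b : 𝔊, a * b = b * a) → Δ' ⊆ Δ'' ∧ Δbar = Δ') ∧
    -- (3)
    (∃ H : Subgroup 𝔊, (H : Set 𝔊) = η '' Δbar ∧ H ≤ Subgroup.center 𝔊 ∧
      ((cogalJ Γ η Δbar : Subgroup 𝔊) : Set 𝔊) = η '' Δbar ∧ IsIdealSG Γ H) ∧
    -- (4)
    (Δbar = Δ' ∩ η ⁻¹' ((Subgroup.center 𝔊 : Subgroup 𝔊) : Set 𝔊)) ∧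
    -- (5)
    (∃ N : Subgroup Γ, (N : Set Γ) = Δbar ∧
      ∃ M : Subgroup N, ((M : Set N) = {x : N | (x : Γ) ∈ Δtilde}) ∧
        ∃ H : Subgroup 𝔊, (H : Set 𝔊) = η '' Δbar ∧
          ∃ e : (N ⧸ M) ≃ₜ H,
            (∀ x : N, ((e (QuotientGroup.mk x) : H) : 𝔊) = η (x : Γ)) ∧
            (∀ x y : N, ((e (QuotientGroup.mk (x * y)) : H) : 𝔊) =
              ((e (QuotientGroup.mk x) : H) : 𝔊) * ((e (QuotientGroup.mk y) : H) : 𝔊))) := by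
  subst hΔ hΔ' hΔ'' hΔbar hΔtilde
  -- basic cocycle identities
  have hone : η 1 = 1 := by
    have h := hcoc 1 1
    simp only [one_mul, one_smul] at h
    exact (left_eq_mul.mp h)
  have hinvsmul : ∀ γ : Γ, γ • η γ⁻¹ = (η γ)⁻¹ := by
    intro γ
    have h := hcoc γ γ⁻¹
    rw [mul_inv_cancel, hone] at h
    exact (inv_eq_of_mul_eq_one_right h.symm).symm
  have hinv2 : ∀ δ : Γ, η δ⁻¹ = (δ⁻¹ • η δ)⁻¹ := by
    intro δ
    calc η δ⁻¹ = δ⁻¹ • (δ • η δ⁻¹) := (inv_smul_smul δ _).symm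
    _ = δ⁻¹ • (η δ)⁻¹ := by rw [hinvsmul]
    _ = (δ⁻¹ • η δ)⁻¹ := smul_inv' _ _
  -- the key conjugation identity for σ fixing 𝔊
  have hconj : ∀ σ : Γ, (∀ g : 𝔊, σ • g = g) → ∀ γ : Γ,
      η (γ * σ * γ⁻¹) = η γ * γ • η σ * (η γ)⁻¹ := by
    intro σ hσ γ
    have : γ * σ * γ⁻¹ = γ * (σ * γ⁻¹) := by group
    rw [this, hcoc γ (σ * γ⁻¹), hcoc σ γ⁻¹, hσ (η γ⁻¹), smul_mul', hinvsmul, mul_assoc]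
  -- Δ'' membership closure properties
  have hmul'' : ∀ σ τ : Γ, (∀ γ : Γ, γ • η σ = η (γ * σ * γ⁻¹)) →
      (∀ γ : Γ, γ • η τ = η (γ * τ * γ⁻¹)) →
      ∀ γ : Γ, γ • η (σ * τ) = η (γ * (σ * τ) * γ⁻¹) := by
    intro σ τ hσ hτ γ
    have h1 : γ • η (σ * τ) = η (γ * σ * γ⁻¹) * (γ * σ) • η τ := by
      rw [hcoc σ τ, smul_mul', hσ γ, smul_smul]
    have h2 : η (γ * (σ * τ) * γ⁻¹) = η (γ * σ * γ⁻¹) * (γ * σ) • η τ := by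
      rw [show γ * (σ * τ) * γ⁻¹ = (γ * σ * γ⁻¹) * (γ * τ * γ⁻¹) by group,
        hcoc, ← hτ γ, smul_smul, show γ * σ * γ⁻¹ * γ = γ * σ by group]
    rw [h1, h2]
  have hinv'' : ∀ σ : Γ, (∀ γ : Γ, γ • η σ = η (γ * σ * γ⁻¹)) →
      ∀ γ : Γ, γ • η σ⁻¹ = η (γ * σ⁻¹ * γ⁻¹) := by
    intro σ hσ γ
    rw [hinv2 σ, show γ * σ⁻¹ * γ⁻¹ = (γ * σ * γ⁻¹)⁻¹ by group, hinv2 (γ * σ * γ⁻¹),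
      ← hσ γ]
    simp only [smul_inv', smul_smul]
    rw [show (γ * σ * γ⁻¹)⁻¹ * γ = γ * σ⁻¹ by group]
  have hone'' : ∀ γ : Γ, γ • η (1 : Γ) = η (γ * 1 * γ⁻¹) := by
    intro γ; simp [hone]
  -- the subgroup with carrier Δ''
  let N'' : Subgroup Γ :=
    { carrier := {σ : Γ | ∀ γ : Γ, γ • η σ = η (γ * σ * γ⁻¹)}
      one_mem' := hone''
      mul_mem' := fun {σ τ} hσ hτ => hmul'' σ τ hσ hτ
      inv_mem' := fun {σ} hσ => hinv'' σ hσ }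
  have hN''normal : N''.Normal := by
    constructor
    intro σ hσ τ γ
    rw [← hσ τ, smul_smul, hσ (γ * τ),
      show γ * τ * σ * (γ * τ)⁻¹ = γ * (τ * σ * τ⁻¹) * γ⁻¹ by group]
  have hN''closed : IsClosed (N'' : Set Γ) := by
    have : (N'' : Set Γ) = ⋂ γ : Γ, {σ : Γ | γ • η σ = η (γ * σ * γ⁻¹)} := by
      ext σ; simp only [Set.mem_iInter]; rfl
    rw [this]
    refine isClosed_iInter fun γ => isClosed_eq ?_ ?_
    · exact hcont.const_smul γ
    · exact hcont.comp (((continuous_const.mul continuous_id).mul continuous_const))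
  -- the subgroup with carrier Δ'
  let N' : Subgroup Γ :=
    { carrier := {γ : Γ | ∀ g : 𝔊, γ • g = g}
      one_mem' := fun g => one_smul _ _
      mul_mem' := fun {a b} ha hb g => by rw [mul_smul, hb g, ha g]
      inv_mem' := fun {a} ha g => by
        conv_lhs => rw [show g = a • g from (ha g).symm]
        exact inv_smul_smul a g }
  have hN'normal : N'.Normal := by
    constructor
    intro σ hσ τ g
    rw [mul_smul, mul_smul, hσ (τ⁻¹ • g), smul_inv_smul]
  have hN'closed : IsClosed (N' : Set Γ) := by
    have : (N' : Set Γ) = ⋂ g : 𝔊, {γ : Γ | γ • g = g} := by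
      ext σ; simp only [Set.mem_iInter]; rfl
    rw [this]
    exact isClosed_iInter fun g =>
      isClosed_eq (continuous_id.smul continuous_const) continuous_const
  -- the subgroup with carrier Δbar
  let Nb : Subgroup Γ := N' ⊓ N''
  have hNbcarrier : (Nb : Set Γ) =
      {γ : Γ | ∀ g : 𝔊, γ • g = g} ∩ {σ : Γ | ∀ γ : Γ, γ • η σ = η (γ * σ * γ⁻¹)} := rfl
  have hNbnormal : Nb.Normal := by
    constructor
    intro σ hσ τ
    exact ⟨hN'normal.conj_mem σ hσ.1 τ, hN''normal.conj_mem σ hσ.2 τ⟩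
  have hNbclosed : IsClosed (Nb : Set Γ) := by
    rw [hNbcarrier]; exact hN'closed.inter hN''closed
  -- Δtilde ⊆ Δbar
  have htilde_sub : (η ⁻¹' {1} ∩ {γ : Γ | ∀ g : 𝔊, γ • g = g} : Set Γ) ⊆
      {γ : Γ | ∀ g : 𝔊, γ • g = g} ∩ {σ : Γ | ∀ γ : Γ, γ • η σ = η (γ * σ * γ⁻¹)} := by
    rintro σ ⟨h1, h2⟩
    have hη : η σ = 1 := h1
    refine ⟨h2, fun γ => ?_⟩
    rw [hconj σ h2 γ, hη, smul_one, mul_one, mul_inv_cancel]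
  -- centrality of η '' Δbar
  have hsmul_center : ∀ (γ : Γ) (g : 𝔊), g ∈ Subgroup.center 𝔊 →
      γ • g ∈ Subgroup.center 𝔊 := by
    intro γ g hg
    rw [Subgroup.mem_center_iff] at hg ⊢
    intro x
    conv_lhs => rw [show x = γ • (γ⁻¹ • x) from (smul_inv_smul γ x).symm]
    conv_rhs => rw [show x = γ • (γ⁻¹ • x) from (smul_inv_smul γ x).symm]
    rw [← smul_mul', ← smul_mul', hg]
  have hcenter : ∀ σ : Γ, (∀ g : 𝔊, σ • g = g) →
      (∀ γ : Γ, γ • η σ = η (γ * σ * γ⁻¹)) → η σ ∈ Subgroup.center 𝔊 := by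
    intro σ hσ' hσ''
    have hcomm : ∀ τ : Γ, η τ * η σ = η σ * η τ := by
      intro τ
      have h1 : η (σ * τ) = η σ * η τ := by rw [hcoc, hσ' (η τ)]
      have h2 : η (σ * τ) = η τ * η σ := by
        rw [show σ * τ = τ * (τ⁻¹ * σ * τ) by group, hcoc]
        congr 1
        have h := hσ'' τ⁻¹
        rw [inv_inv] at h
        rw [← h, smul_smul, mul_inv_cancel, one_smul]
      rw [← h1, h2]
    have hK : (⊤ : Subgroup 𝔊) ≤ Subgroup.centralizer {η σ} := by
      rw [← hgen]
      apply Subgroup.topologicalClosure_minimal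
      · refine (Subgroup.closure_le _).mpr ?_
        rintro x ⟨τ, rfl⟩
        simp only [SetLike.mem_coe, Subgroup.mem_centralizer_iff]
        rintro h hh
        rw [Set.mem_singleton_iff] at hh
        subst hh
        exact (hcomm τ).symm
      · have hset : (Subgroup.centralizer {η σ} : Set 𝔊) = {x | η σ * x = x * η σ} := by
          ext x
          simp only [SetLike.mem_coe, Subgroup.mem_centralizer_iff, Set.mem_singleton_iff,
            forall_eq, Set.mem_setOf_eq]
        rw [hset]
        exact isClosed_eq (continuous_const.mul continuous_id) (continuous_id.mul continuous_const)
    rw [Subgroup.mem_center_iff]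
    intro g
    exact (Subgroup.mem_centralizer_iff.mp (hK (Subgroup.mem_top g)) (η σ) rfl).symm
  -- η is multiplicative on Δbar
  have hmulbar : ∀ σ τ : Γ, (∀ g : 𝔊, σ • g = g) → η (σ * τ) = η σ * η τ := by
    intro σ τ hσ
    rw [hcoc, hσ (η τ)]
  -- the homomorphism φ : Nb →* 𝔊
  let φ : Nb →* 𝔊 := MonoidHom.mk' (fun x => η (x : Γ)) (by
    rintro ⟨σ, hσ⟩ ⟨τ, hτ⟩
    exact hmulbar σ τ hσ.1)
  have hφrange : ((φ.range : Subgroup 𝔊) : Set 𝔊) =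
      η '' ({γ : Γ | ∀ g : 𝔊, γ • g = g} ∩ {σ : Γ | ∀ γ : Γ, γ • η σ = η (γ * σ * γ⁻¹)}) := by
    ext x
    constructor
    · rintro ⟨⟨σ, hσ⟩, rfl⟩
      exact ⟨σ, hσ, rfl⟩
    · rintro ⟨σ, hσ, rfl⟩
      exact ⟨⟨σ, hσ⟩, rfl⟩
  have hφrange_center : φ.range ≤ Subgroup.center 𝔊 := by
    rintro x ⟨⟨σ, hσ⟩, rfl⟩
    exact hcenter σ hσ.1 hσ.2
  -- φ.range is closed
  have hNbcompact : IsCompact (Nb : Set Γ) := hNbclosed.isCompact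
  have hφrange_closed : IsClosed ((φ.range : Subgroup 𝔊) : Set 𝔊) := by
    rw [hφrange, ← hNbcarrier]
    exact (hNbcompact.image hcont).isClosed
  have hφrange_normal : φ.range.Normal := by
    constructor
    intro n hn g
    have := Subgroup.mem_center_iff.mp (hφrange_center hn) g
    rw [this, mul_assoc, mul_inv_cancel, mul_one]
    exact hn
  have hφrange_invar : ∀ (γ : Γ) (g : 𝔊), g ∈ φ.range → γ • g ∈ φ.range := by
    rintro γ g ⟨⟨σ, hσ⟩, rfl⟩
    have : γ • η σ = η (γ * σ * γ⁻¹) := hσ.2 γ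
    rw [show φ ⟨σ, hσ⟩ = η σ from rfl, this]
    exact ⟨⟨γ * σ * γ⁻¹, hNbnormal.conj_mem σ hσ γ⟩, rfl⟩
  have hφrange_ideal : IsIdealSG Γ φ.range :=
    ⟨hφrange_closed, hφrange_normal, hφrange_invar⟩
  refine ⟨⟨⟨N'', rfl, hN''normal, hN''closed⟩, ?_, ⟨Nb, hNbcarrier, hNbnormal, hNbclosed⟩,
    htilde_sub⟩, ?_, ?_, ?_, ?_⟩
  -- (1) largest
  · intro Λ _ _ hΛ σ hσ γ
    exact (hΛ σ hσ γ).symm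
  -- (2)
  · intro hab
    have hsub : ({γ : Γ | ∀ g : 𝔊, γ • g = g} : Set Γ) ⊆
        {σ : Γ | ∀ γ : Γ, γ • η σ = η (γ * σ * γ⁻¹)} := by
      intro σ hσ γ
      rw [hconj σ hσ γ, hab (η γ) (γ • η σ), mul_assoc, mul_inv_cancel, mul_one]
    exact ⟨hsub, Set.inter_eq_self_of_subset_left hsub⟩
  -- (3)
  · refine ⟨φ.range, hφrange, hφrange_center, ?_, hφrange_ideal⟩
    have : cogalJ Γ η ({γ : Γ | ∀ g : 𝔊, γ • g = g} ∩
        {σ : Γ | ∀ γ : Γ, γ • η σ = η (γ * σ * γ⁻¹)}) = φ.range := by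
      apply le_antisymm
      · apply sInf_le
        exact ⟨hφrange_ideal, fun σ hσ => ⟨⟨σ, hσ⟩, rfl⟩⟩
      · apply le_sInf
        rintro a ⟨_, ha⟩ x ⟨⟨σ, hσ⟩, rfl⟩
        exact ha σ hσ
    rw [this, hφrange]
  -- (4)
  · ext σ
    constructor
    · rintro ⟨h1, h2⟩
      exact ⟨h1, hcenter σ h1 h2⟩
    · rintro ⟨h1, h2⟩
      refine ⟨h1, fun γ => ?_⟩
      have hc : γ • η σ ∈ Subgroup.center 𝔊 := hsmul_center γ _ h2
      rw [hconj σ h1 γ, Subgroup.mem_center_iff.mp hc (η γ), mul_assoc,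
        mul_inv_cancel, mul_one]
  -- (5)
  · refine ⟨Nb, hNbcarrier, φ.ker, ?_, φ.range, hφrange, ?_⟩
    · ext x
      simp only [SetLike.mem_coe, MonoidHom.mem_ker, Set.mem_setOf_eq, Set.mem_inter_iff,
        Set.mem_preimage, Set.mem_singleton_iff]
      constructor
      · intro h
        exact ⟨h, x.2.1⟩
      · intro h
        exact h.1
    · haveI : CompactSpace Nb := isCompact_iff_compactSpace.mp hNbcompact
      let e₀ := QuotientGroup.quotientKerEquivRange φ
      have hcont0 : Continuous (fun x : Nb => ((φ x : 𝔊))) :=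
        hcont.comp continuous_subtype_val
      have hconte : Continuous (e₀ : Nb ⧸ φ.ker → φ.range) := by
        rw [(QuotientGroup.isQuotientMap_mk φ.ker).continuous_iff]
        exact Continuous.subtype_mk hcont0 _
      refine ⟨(hconte.homeoOfEquivCompactToT2 (f := e₀.toEquiv)), fun x => rfl,
        fun x y => ?_⟩
      show (φ (x * y) : 𝔊) = φ x * φ y
      exact map_mul φ x y
end

section
/- Let Γ be a profinite group, 𝔊 a profinite Γ-group, η : Γ → 𝔊 a continuous 1-cocycle with kernel Δ := η⁻¹(1). Let E := 𝔊 ⋊ Γ be the semidirect product (with multiplication (g,γ)(g',γ') = (g·(γ•g'), γγ')), Γ₁ := {(1,γ) : γ ∈ Γ} and Γ₂ := {(η(γ),γ) : γ ∈ Γ}, which are closed subgroups of E. Then the following are equivalent: (1) η is surjective; (2) for every open ideal a of 𝔊 the induced cocycle η_a : Γ → 𝔊/a is surjective; (3) the continuous injection Γ/Δ → 𝔊 induced by η is a homeomorphism; (4) E = Γ₁·Γ₂; (5) E = Γ₂·Γ₁; (6) the continuous map Γ × 𝔊 → 𝔊, (γ,g) ↦ η(γ)·(γ•g), is a transitive action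 of Γ on the underlying profinite space of 𝔊 whose stabilizer of the neutral element is Δ. -/
/-- For a profinite group `Γ`, a profinite `Γ`-group `𝔊` and a continuous 1-cocycle
`η : Γ → 𝔊` with kernel `Δ = η⁻¹(1)`, with `E = 𝔊 ⋊ Γ`, `Γ₁` the canonical copy of `Γ` and
`Γ₂ = {(η γ, γ)}` the copy determined by `η`, the following are equivalent:
(1) `η` is surjective;
(2) for every open ideal `a` of `𝔊` the induced cocycle `η_a : Γ → 𝔊/a` is surjective;
(3) the continuous injection `Γ/Δ → 𝔊` induced by `η` is a homeomorphism;
(4) `E = Γ₁·Γ₂`;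
(5) `E = Γ₂·Γ₁`;
(6) `(γ,g) ↦ η(γ)·(γ•g)` is a transitive action of `Γ` on `𝔊` with stabilizer `Δ` of `1`. -/
theorem surjective_cocycle_TFAE
    {Γ 𝔊 : Type*} [Group Γ] [TopologicalSpace Γ] [IsTopologicalGroup Γ]
    [CompactSpace Γ] [T2Space Γ] [TotallyDisconnectedSpace Γ]
    [Group 𝔊] [TopologicalSpace 𝔊] [IsTopologicalGroup 𝔊]
    [CompactSpace 𝔊] [T2Space 𝔊] [TotallyDisconnectedSpace 𝔊]
    [MulDistribMulAction Γ 𝔊] [ContinuousSMul Γ 𝔊]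
    (η : Γ → 𝔊) (hcont : Continuous η)
    (hcoc : ∀ σ τ : Γ, η (σ * τ) = η σ * σ • η τ) :
    List.TFAE
      [Function.Surjective η,
       ∀ a : Subgroup 𝔊, IsIdealSG Γ a → IsOpen (a : Set 𝔊) →
          Function.Surjective (fun γ : Γ => (QuotientGroup.mk (η γ) : 𝔊 ⧸ a)),
       ∃ D : Subgroup Γ, (D : Set Γ) = η ⁻¹' {1} ∧
          ∃ h : (Γ ⧸ D) ≃ₜ 𝔊, ∀ γ : Γ, h (QuotientGroup.mk γ) = η γ,
       ∀ e : 𝔊 ⋊[MulDistribMulAction.toMulAut Γ 𝔊] Γ, ∃ γ₁ γ₂ : Γ,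
          e = SemidirectProduct.inr γ₁ *
              (⟨η γ₂, γ₂⟩ : 𝔊 ⋊[MulDistribMulAction.toMulAut Γ 𝔊] Γ),
       ∀ e : 𝔊 ⋊[MulDistribMulAction.toMulAut Γ 𝔊] Γ, ∃ γ₁ γ₂ : Γ,
          e = (⟨η γ₁, γ₁⟩ : 𝔊 ⋊[MulDistribMulAction.toMulAut Γ 𝔊] Γ) *
              SemidirectProduct.inr γ₂,
       (∀ σ τ : Γ, ∀ g : 𝔊, η (σ * τ) * (σ * τ) • g = η σ * σ • (η τ * τ • g)) ∧
         (∀ g g' : 𝔊, ∃ γ : Γ, η γ * γ • g = g') ∧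
         {γ : Γ | η γ * γ • (1 : 𝔊) = 1} = η ⁻¹' {1}] := by
  have hone : η 1 = (1 : 𝔊) := by
    have h := hcoc 1 1
    rw [mul_one, one_smul] at h
    exact (left_eq_mul.mp h)
  have hinv : ∀ σ : Γ, η σ⁻¹ = σ⁻¹ • (η σ)⁻¹ := by
    intro σ
    have h := hcoc σ σ⁻¹
    rw [mul_inv_cancel, hone] at h
    have h2 : σ • η σ⁻¹ = (η σ)⁻¹ := eq_inv_of_mul_eq_one_right h.symm
    rw [← h2, inv_smul_smul]
  tfae_have 1 → 2 := by
    intro h1 a _ _ x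
    obtain ⟨g, rfl⟩ := QuotientGroup.mk_surjective x
    obtain ⟨γ, rfl⟩ := h1 g
    exact ⟨γ, rfl⟩
  tfae_have 2 → 1 := by
    intro h2 g
    by_contra hg
    push_neg at hg
    have hrange : IsClosed (Set.range η) := (isCompact_range hcont).isClosed
    have hU : IsOpen {x : 𝔊 | g * x ∉ Set.range η} := by
      have : {x : 𝔊 | g * x ∉ Set.range η} = (fun x => g * x) ⁻¹' (Set.range η)ᶜ := rfl
      rw [this]
      exact hrange.isOpen_compl.preimage (continuous_mul_left g)
    have h1U : (1 : 𝔊) ∈ {x : 𝔊 | g * x ∉ Set.range η} := by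
      simpa using fun γ h => hg γ h
    obtain ⟨W, ⟨hW1, hWclopen⟩, hWU⟩ :=
      (nhds_basis_clopen (1 : 𝔊)).mem_iff.mp (hU.mem_nhds h1U)
    obtain ⟨H, hHW⟩ :=
      IsTopologicalGroup.exist_openNormalSubgroup_sub_clopen_nhds_of_one hWclopen hW1
    set M : Subgroup 𝔊 :=
      { carrier := {x : 𝔊 | ∀ γ : Γ, γ • x ∈ H.toSubgroup}
        one_mem' := fun γ => by rw [smul_one]; exact one_mem H.toSubgroup
        mul_mem' := fun {a b} ha hb γ => by
          rw [smul_mul']; exact mul_mem (ha γ) (hb γ)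
        inv_mem' := fun {a} ha γ => by
          rw [smul_inv']; exact inv_mem (ha γ) } with hM
    have hMideal : IsIdealSG Γ M := by
      refine ⟨?_, ⟨?_⟩, ?_⟩
      · have : (M : Set 𝔊) = ⋂ γ : Γ, (fun x => γ • x) ⁻¹' (H.toSubgroup : Set 𝔊) := by
          ext x; simp [hM, Set.mem_iInter]
        rw [this]
        exact isClosed_iInter fun γ =>
          H.toOpenSubgroup.isClosed.preimage (continuous_const_smul γ)
      · intro n hn x γ
        rw [smul_mul', smul_mul', smul_inv']
        exact H.isNormal'.conj_mem _ (hn γ) _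
      · intro γ x hx δ
        rw [← mul_smul]
        exact hx (δ * γ)
    have hMopen : IsOpen (M : Set 𝔊) := by
      have hn : IsOpen {p : Γ × 𝔊 | p.1 • p.2 ∈ (H.toSubgroup : Set 𝔊)} :=
        H.toOpenSubgroup.isOpen.preimage continuous_smul
      obtain ⟨u, v, _, hvopen, hsu, htv, huv⟩ :=
        generalized_tube_lemma isCompact_univ isCompact_singleton hn
          (by rintro ⟨γ, x⟩ ⟨-, hx⟩
              simp only [Set.mem_singleton_iff] at hx
              subst hx
              show γ • (1 : 𝔊) ∈ (H.toSubgroup : Set 𝔊)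
              rw [smul_one]; exact one_mem _)
      apply Subgroup.isOpen_of_mem_nhds
      apply Filter.mem_of_superset (hvopen.mem_nhds (htv rfl))
      intro x hx γ
      exact huv (Set.mk_mem_prod (hsu trivial) hx)
    obtain ⟨γ, hγ⟩ := h2 M hMideal hMopen (QuotientGroup.mk g)
    have hmem : (η γ)⁻¹ * g ∈ M := QuotientGroup.eq.mp hγ
    have : g⁻¹ * η γ ∈ M := by
      have := inv_mem hmem
      simpa using this
    have h1 : g⁻¹ * η γ ∈ H.toSubgroup := by simpa using this 1
    exact hWU (hHW h1) ⟨γ, by group⟩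
  tfae_have 1 → 3 := by
    intro h1
    set D : Subgroup Γ :=
      { carrier := η ⁻¹' {1}
        one_mem' := by simp [hone]
        mul_mem' := fun {a b} ha hb => by
          simp only [Set.mem_preimage, Set.mem_singleton_iff] at *
          rw [hcoc, ha, hb, smul_one, mul_one]
        inv_mem' := fun {a} ha => by
          simp only [Set.mem_preimage, Set.mem_singleton_iff] at *
          rw [hinv, ha, inv_one, smul_one] } with hDdef
    refine ⟨D, rfl, ?_⟩
    have hrel : ∀ a b : Γ, @Setoid.r _ (QuotientGroup.leftRel D) a b → η a = η b := by
      intro a b hab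
      rw [QuotientGroup.leftRel_apply] at hab
      have : η (a⁻¹ * b) = 1 := hab
      have hb : η b = η a := by
        have := hcoc a (a⁻¹ * b)
        rw [mul_inv_cancel_left] at this
        rw [this, hab, smul_one, mul_one]
      exact hb.symm
    set f : Γ ⧸ D → 𝔊 := Quotient.lift η hrel with hf
    have hfmk : ∀ γ : Γ, f (QuotientGroup.mk γ) = η γ := fun γ => rfl
    have hfinj : Function.Injective f := by
      intro x y
      induction x using QuotientGroup.induction_on
      induction y using QuotientGroup.induction_on
      rename_i a b
      intro hab
      rw [hfmk, hfmk] at hab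
      apply QuotientGroup.eq.mpr
      show η (a⁻¹ * b) = 1
      rw [hcoc, hinv, hab, ← smul_mul', inv_mul_cancel, smul_one]
    have hfsurj : Function.Surjective f := by
      intro g
      obtain ⟨γ, rfl⟩ := h1 g
      exact ⟨QuotientGroup.mk γ, rfl⟩
    have hfc : Continuous f := hcont.quotient_lift hrel
    exact ⟨Continuous.homeoOfEquivCompactToT2
      (f := Equiv.ofBijective f ⟨hfinj, hfsurj⟩) hfc, fun γ => rfl⟩
  tfae_have 3 → 1 := by
    rintro ⟨D, hD, h, hh⟩ g
    obtain ⟨q, hq⟩ := h.surjective g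
    obtain ⟨γ, rfl⟩ := QuotientGroup.mk_surjective q
    exact ⟨γ, by rw [← hh γ, hq]⟩
  tfae_have 1 → 4 := by
    intro h1 e
    obtain ⟨τ, hτ⟩ := h1 (e.right⁻¹ • e.left)⁻¹
    refine ⟨e.right * τ, τ⁻¹, SemidirectProduct.ext ?_ ?_⟩
    · show e.left = 1 * (MulDistribMulAction.toMulAut Γ 𝔊 (e.right * τ)) (η τ⁻¹)
      rw [one_mul]
      show e.left = (e.right * τ) • η τ⁻¹
      rw [hinv, hτ, smul_smul, mul_assoc, mul_inv_cancel, mul_one, inv_inv, smul_inv_smul]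
    · show e.right = e.right * τ * τ⁻¹
      rw [mul_inv_cancel_right]
  tfae_have 4 → 1 := by
    intro h4 g
    obtain ⟨γ₁, γ₂, hE⟩ := h4 ⟨g⁻¹, 1⟩
    have hleft := congrArg SemidirectProduct.left hE
    have hright := congrArg SemidirectProduct.right hE
    simp only [SemidirectProduct.mul_left, SemidirectProduct.mul_right,
      SemidirectProduct.left_inr, SemidirectProduct.right_inr, one_mul] at hleft hright
    refine ⟨γ₂⁻¹, ?_⟩
    have hγ₁ : γ₁ = γ₂⁻¹ := by
      rw [eq_inv_iff_mul_eq_one]; exact hright.symm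
    have hL : g⁻¹ = γ₂⁻¹ • η γ₂ := by rw [← hγ₁]; exact hleft
    rw [hinv, smul_inv', ← hL, inv_inv]
  tfae_have 1 → 5 := by
    intro h1 e
    obtain ⟨γ₁, hγ₁⟩ := h1 e.left
    refine ⟨γ₁, γ₁⁻¹ * e.right, SemidirectProduct.ext ?_ ?_⟩
    · show e.left = η γ₁ * (MulDistribMulAction.toMulAut Γ 𝔊 γ₁) (1 : 𝔊)
      simp [hγ₁]
    · show e.right = γ₁ * (γ₁⁻¹ * e.right)
      rw [mul_inv_cancel_left]
  tfae_have 5 → 1 := by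
    intro h5 g
    obtain ⟨γ₁, γ₂, hE⟩ := h5 ⟨g, 1⟩
    have hleft := congrArg SemidirectProduct.left hE
    simp only [SemidirectProduct.mul_left, SemidirectProduct.left_inr] at hleft
    refine ⟨γ₁, ?_⟩
    have : g = η γ₁ * (MulDistribMulAction.toMulAut Γ 𝔊 γ₁) (1 : 𝔊) := hleft
    simpa using this.symm
  tfae_have 1 → 6 := by
    intro h1
    have hact : ∀ σ τ : Γ, ∀ g : 𝔊,
        η (σ * τ) * (σ * τ) • g = η σ * σ • (η τ * τ • g) := by
      intro σ τ g
      rw [hcoc, smul_mul', mul_assoc, mul_smul]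
    refine ⟨hact, ?_, ?_⟩
    · intro g g'
      obtain ⟨σ, hσ⟩ := h1 g
      obtain ⟨τ, hτ⟩ := h1 g'
      refine ⟨τ * σ⁻¹, ?_⟩
      rw [hact, hinv, hσ, smul_mul', ← smul_mul', ← smul_mul', inv_mul_cancel, smul_one,
        smul_one, mul_one, hτ]
    · ext γ
      simp
  tfae_have 6 → 1 := by
    rintro ⟨-, htrans, -⟩ g
    obtain ⟨γ, hγ⟩ := htrans 1 g
    exact ⟨γ, by simpa using hγ⟩
  tfae_finish
end

section
/- Let Γ be a profinite group and 𝔊 = ∏_{i=1}^{n} 𝔊_i a direct product of finite Γ-groups such that gcd(|𝔊_i|, |𝔊_j|) = 1 for all i ≠ j, and let η : Γ → 𝔊 be a continuous 1-cocycle. Then η is surjective if and only if for each i = 1,…,n the induced cocycle η_i : Γ → 𝔊_i (η followed by the i-th projection) is surjective. -/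
open Subgroup

/-- Two subgroups of coprime finite indices: the index of the intersection is the product. -/
lemma index_inf_of_coprime' {G : Type*} [Group G] (H K : Subgroup G)
    [H.FiniteIndex] [K.FiniteIndex] (h : Nat.Coprime H.index K.index) :
    (H ⊓ K).index = H.index * K.index := by
  refine le_antisymm Subgroup.index_inf_le (Nat.le_of_dvd ?_ ?_)
  · exact Nat.pos_of_ne_zero
      (Subgroup.index_inf_ne_zero Subgroup.FiniteIndex.index_ne_zero Subgroup.FiniteIndex.index_ne_zero)
  · exact Nat.Coprime.mul_dvd_of_dvd_of_dvd h
      (Subgroup.index_dvd_of_le inf_le_left) (Subgroup.index_dvd_of_le inf_le_right)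

/-- Two subgroups of coprime finite indices: any two left cosets intersect. -/
lemma exists_mem_coset_coset {G : Type*} [Group G] (H K : Subgroup G)
    [H.FiniteIndex] [K.FiniteIndex] (h : Nat.Coprime H.index K.index) (a b : G) :
    ∃ c : G, a⁻¹ * c ∈ H ∧ b⁻¹ * c ∈ K := by
  classical
  let f : G ⧸ (H ⊓ K) → (G ⧸ H) × (G ⧸ K) := fun q =>
    Quotient.liftOn' q (fun g => ((g : G ⧸ H), (g : G ⧸ K))) (by
      intro x y hxy
      rw [QuotientGroup.leftRel_apply] at hxy
      exact Prod.ext (QuotientGroup.eq.mpr hxy.1) (QuotientGroup.eq.mpr hxy.2))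
  have hinj : Function.Injective f := by
    intro q₁ q₂
    refine Quotient.inductionOn₂' q₁ q₂ ?_
    intro x y hxy
    have h1 : (x : G ⧸ H) = y := congrArg Prod.fst hxy
    have h2 : (x : G ⧸ K) = y := congrArg Prod.snd hxy
    exact Quotient.sound' (QuotientGroup.leftRel_apply.mpr
      ⟨QuotientGroup.eq.mp h1, QuotientGroup.eq.mp h2⟩)
  have hcard : Nat.card (G ⧸ (H ⊓ K)) = Nat.card ((G ⧸ H) × (G ⧸ K)) := by
    rw [Nat.card_prod]
    exact index_inf_of_coprime' H K h
  have hbij : Function.Bijective f :=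
    (Nat.bijective_iff_injective_and_card f).mpr ⟨hinj, hcard⟩
  obtain ⟨q, hq⟩ := hbij.surjective ((a : G ⧸ H), (b : G ⧸ K))
  obtain ⟨c, rfl⟩ := QuotientGroup.mk_surjective q
  have h1 : (c : G ⧸ H) = a := congrArg Prod.fst hq
  have h2 : (c : G ⧸ K) = b := congrArg Prod.snd hq
  exact ⟨c, QuotientGroup.eq.mp h1.symm, QuotientGroup.eq.mp h2.symm⟩

/-- Finitely many subgroups of pairwise coprime finite indices: any family of left
cosets has a common element. -/
lemma exists_mem_cosets {G : Type*} [Group G] {ι : Type*} [DecidableEq ι]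
    (K : ι → Subgroup G) [∀ i, (K i).FiniteIndex]
    (hco : ∀ i j, i ≠ j → Nat.Coprime (K i).index (K j).index) (a : ι → G)
    (s : Finset ι) : ∃ g : G, ∀ i ∈ s, (a i)⁻¹ * g ∈ K i := by
  classical
  induction s using Finset.induction_on with
  | empty => exact ⟨1, fun i hi => absurd hi (Finset.notMem_empty i)⟩
  | @insert j s hj ih =>
    -- index and finiteness of the running infimum
    have hfin : ∀ t : Finset ι, (t.inf K).FiniteIndex ∧ (t.inf K).index = ∏ i ∈ t, (K i).index := by
      intro t
      induction t using Finset.induction_on with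
      | empty =>
        rw [Finset.inf_empty]
        exact ⟨inferInstance, by simp [Subgroup.index_top]⟩
      | @insert j' t hj' ih' =>
        obtain ⟨hfi, hidx⟩ := ih'
        haveI := hfi
        have hcop : Nat.Coprime (K j').index (t.inf K).index := by
          rw [hidx]
          exact Nat.Coprime.prod_right (fun i hi => hco j' i (fun he => hj' (he ▸ hi)))
        have : ((insert j' t).inf K).index = ∏ i ∈ insert j' t, (K i).index := by
          rw [Finset.inf_insert, Finset.prod_insert hj',
            index_inf_of_coprime' _ _ hcop, hidx]
        refine ⟨⟨?_⟩, this⟩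
        rw [this, Finset.prod_insert hj']
        exact Nat.mul_ne_zero Subgroup.FiniteIndex.index_ne_zero (hidx ▸ hfi.index_ne_zero)
    obtain ⟨g, hg⟩ := ih
    obtain ⟨hfi, hidx⟩ := hfin s
    haveI := hfi
    have hcop : Nat.Coprime (s.inf K).index (K j).index := by
      rw [hidx]
      exact Nat.Coprime.prod_left (fun i hi => hco i j (fun he => hj (he ▸ hi)))
    obtain ⟨c, hc1, hc2⟩ := exists_mem_coset_coset (s.inf K) (K j) hcop g (a j)
    refine ⟨c, fun i hi => ?_⟩
    rcases Finset.mem_insert.mp hi with rfl | hi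
    · exact hc2
    · have : (a i)⁻¹ * c = ((a i)⁻¹ * g) * (g⁻¹ * c) := by group
      rw [this]
      exact (K i).mul_mem (hg i hi) (SetLike.le_def.mp (Finset.inf_le hi) hc1)

/-- Let `Γ` be a profinite group and `𝔊 = ∏ᵢ 𝔊ᵢ` a finite direct product of finite
`Γ`-groups of pairwise coprime orders, and let `η : Γ → 𝔊` be a continuous 1-cocycle.
Then `η` is surjective if and only if each component cocycle `ηᵢ : Γ → 𝔊ᵢ` is surjective. -/
theorem surjective_cocycle_coprime_product
    {Γ : Type*} [Group Γ] [TopologicalSpace Γ] [IsTopologicalGroup Γ]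
    [CompactSpace Γ] [T2Space Γ] [TotallyDisconnectedSpace Γ]
    {n : ℕ} (𝔊 : Fin n → Type*) [∀ i, Group (𝔊 i)] [∀ i, Finite (𝔊 i)]
    [∀ i, TopologicalSpace (𝔊 i)] [∀ i, DiscreteTopology (𝔊 i)]
    [∀ i, MulDistribMulAction Γ (𝔊 i)] [∀ i, ContinuousSMul Γ (𝔊 i)]
    (hcoprime : ∀ i j, i ≠ j → Nat.Coprime (Nat.card (𝔊 i)) (Nat.card (𝔊 j)))
    (η : Γ → ∀ i, 𝔊 i) (hcont : Continuous η)
    (hcoc : ∀ σ τ : Γ, η (σ * τ) = η σ * σ • η τ) :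
    Function.Surjective η ↔ ∀ i, Function.Surjective (fun γ : Γ => η γ i) := by
  classical
  have hone : η 1 = 1 := by
    have := hcoc 1 1
    rw [mul_one, one_smul] at this
    exact (left_eq_mul.mp this)
  -- components agree iff the "difference" lies in the component kernel
  have hker : ∀ (i : Fin n) (σ τ : Γ), η σ i = η τ i ↔ η (τ⁻¹ * σ) i = 1 := by
    intro i σ τ
    have h := hcoc τ (τ⁻¹ * σ)
    rw [mul_inv_cancel_left] at h
    have h' : η σ i = η τ i * τ • η (τ⁻¹ * σ) i := by
      rw [h]; rfl
    constructor
    · intro he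
      rw [he, left_eq_mul] at h'
      exact smul_left_cancel τ (by rw [h', smul_one])
    · intro he
      rw [h', he, smul_one, mul_one]
  constructor
  · intro hsurj i g
    obtain ⟨γ, hγ⟩ := hsurj (Function.update 1 i g)
    exact ⟨γ, by show η γ i = g; rw [hγ]; simp⟩
  · intro hsurj g
    -- the component kernels as subgroups
    let K : Fin n → Subgroup Γ := fun i =>
      { carrier := {γ | η γ i = 1}
        one_mem' := by simp [hone]
        mul_mem' := by
          intro a b ha hb
          have : η (a * b) i = η a i * a • η b i := by rw [hcoc a b]; rfl
          simp only [Set.mem_setOf_eq] at ha hb ⊢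
          rw [this, ha, hb, smul_one, one_mul]
        inv_mem' := by
          intro a ha
          simp only [Set.mem_setOf_eq] at ha ⊢
          have h := hcoc a⁻¹ a
          rw [inv_mul_cancel, hone] at h
          have h' := congrFun h i
          simp only [Pi.one_apply, Pi.mul_apply, Pi.smul_apply] at h'
          rw [ha, smul_one, mul_one] at h'
          exact h'.symm }
    have hmemK : ∀ (i : Fin n) (γ : Γ), γ ∈ K i ↔ η γ i = 1 := fun _ _ => Iff.rfl
    -- the induced maps on quotients are bijections onto the components
    have hquot : ∀ i : Fin n, ∃ f : Γ ⧸ K i → 𝔊 i,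
        (∀ γ : Γ, f γ = η γ i) ∧ Function.Bijective f := by
      intro i
      refine ⟨fun q => Quotient.liftOn' q (fun γ => η γ i) ?_, fun γ => rfl, ?_, ?_⟩
      · intro x y hxy
        rw [QuotientGroup.leftRel_apply] at hxy
        exact ((hker i y x).mpr hxy).symm
      · intro q₁ q₂
        refine Quotient.inductionOn₂' q₁ q₂ (fun x y hxy => Quotient.sound' ?_)
        rw [QuotientGroup.leftRel_apply]
        exact (hker i y x).mp hxy.symm
      · intro x
        obtain ⟨γ, hγ⟩ := hsurj i x
        exact ⟨(γ : Γ ⧸ K i), hγ⟩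
    choose f hf hbij using hquot
    haveI hfinq : ∀ i, Finite (Γ ⧸ K i) := fun i =>
      Finite.of_injective (f i) (hbij i).injective
    haveI : ∀ i, (K i).FiniteIndex := fun i => @Subgroup.finiteIndex_of_finite_quotient _ _ (K i) (hfinq i)
    have hidx : ∀ i, (K i).index = Nat.card (𝔊 i) := fun i =>
      Nat.card_eq_of_bijective (f i) (hbij i)
    have hco : ∀ i j, i ≠ j → Nat.Coprime (K i).index (K j).index := by
      intro i j hij
      rw [hidx i, hidx j]
      exact hcoprime i j hij
    -- choose representatives hitting each component
    choose a ha using fun i => hsurj i (g i)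
    obtain ⟨γ, hγ⟩ := exists_mem_cosets K hco a Finset.univ
    refine ⟨γ, funext fun i => ?_⟩
    exact ((hker i γ (a i)).mpr (hγ i (Finset.mem_univ i))).trans (ha i)
end

section
/- Let η : Γ → 𝔊 be a generating cocycle. Then the following are equivalent: (1) η is surjective; (2) there exists a closed subgroup Λ of Γ such that a := η(Λ) is an ideal of 𝔊 and the induced cocycle η_a : Γ → 𝔊/a is surjective. -/
/-- Surjectivity criterion for generating cocycles: a generating cocycle `η : Γ → 𝔊` is
surjective if and only if there exists a closed subgroup `Λ` of `Γ` such that `a := η(Λ)`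
is an ideal of `𝔊` and the induced cocycle `η_a : Γ → 𝔊/a` is surjective. -/
theorem surjective_of_exists_ideal_image
    {Γ 𝔊 : Type*} [Group Γ] [TopologicalSpace Γ] [IsTopologicalGroup Γ]
    [CompactSpace Γ] [T2Space Γ] [TotallyDisconnectedSpace Γ]
    [Group 𝔊] [TopologicalSpace 𝔊] [IsTopologicalGroup 𝔊]
    [CompactSpace 𝔊] [T2Space 𝔊] [TotallyDisconnectedSpace 𝔊]
    [MulDistribMulAction Γ 𝔊] [ContinuousSMul Γ 𝔊]
    (η : Γ → 𝔊) (hcont : Continuous η)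
    (hcoc : ∀ σ τ : Γ, η (σ * τ) = η σ * σ • η τ)
    (hgen : (Subgroup.closure (Set.range η)).topologicalClosure = ⊤) :
    Function.Surjective η ↔
      ∃ Λ : Subgroup Γ, IsClosed (Λ : Set Γ) ∧
        ∃ a : Subgroup 𝔊, (a : Set 𝔊) = η '' (Λ : Set Γ) ∧ IsIdealSG Γ a ∧
          Function.Surjective (fun γ : Γ => (QuotientGroup.mk (η γ) : 𝔊 ⧸ a)) := by
  have hη1 : η 1 = 1 := by
    have h := hcoc 1 1
    rw [one_mul, one_smul] at h
    exact (mul_left_cancel (a := η 1) (by rw [← h, mul_one])).symm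
  constructor
  · intro hsurj
    refine ⟨⊥, by simpa using isClosed_singleton, ⊥, ?_, ⟨by simpa using isClosed_singleton,
      inferInstance, ?_⟩, (QuotientGroup.mk_surjective).comp hsurj⟩
    · simp [Subgroup.coe_bot, hη1]
    · intro γ g hg
      rw [Subgroup.mem_bot] at hg ⊢
      rw [hg, smul_one]
  · rintro ⟨Λ, -, a, ha, ⟨-, -, hinv⟩, hqsurj⟩
    intro g
    obtain ⟨γ, hγ⟩ := hqsurj (QuotientGroup.mk g)
    have hmem : (η γ)⁻¹ * g ∈ a := (QuotientGroup.eq (s := a)).mp hγ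
    have h2 : γ⁻¹ • ((η γ)⁻¹ * g) ∈ a := hinv γ⁻¹ _ hmem
    have : γ⁻¹ • ((η γ)⁻¹ * g) ∈ η '' (Λ : Set Γ) := by rw [← ha]; exact h2
    obtain ⟨lam, -, hlam⟩ := this
    refine ⟨γ * lam, ?_⟩
    rw [hcoc, hlam, smul_smul, mul_inv_cancel, one_smul, mul_inv_cancel_left]
end

section
/- Let n ≥ 2 be an integer and let 𝒫_n be the set consisting of the odd primes dividing n, together with 2 in case 4 divides n. For a unit u of ℤ/nℤ let r_u := gcd(n, ũ − 1), where ũ ∈ ℤ is any representative of u (this gcd is well defined), for p ∈ 𝒫_n let u_p be the image of u in (ℤ/p^{v_p(n)}ℤ)^× and o(u_p) its multiplicative order, where v_p denotes the p-adic valuation. Then u^{r_u} = 1 in ℤ/nℤ if and only if all of the following hold: (i) r_u ≠ 1; (ii) for every p ∈ 𝒫_{r_u}, v_p(n) ≤ 2·v_p(r_u); (iii) for every odd prime p ∈ 𝒫_n \ 𝒫_{r_u}, 2 ≤ o(u_p) and o(u_p) divides gcd(r_u, p−1); (iv) if 2 ∈ 𝒫_n \ 𝒫_{r_u}, then ũ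 ≡ −1 (mod 2^{v_2(n)−1}). -/
lemma auxEmultNat {p m : ℕ} (hp : p.Prime) (hm : m ≠ 0) :
    emultiplicity p m = (m.factorization p : ℕ∞) := by
  haveI := Fact.mk hp
  rw [← padicValNat_eq_emultiplicity hm, Nat.factorization_def _ hp]

lemma auxEmultInt {p : ℕ} (hp : p.Prime) {z : ℤ} (hz : z ≠ 0) :
    emultiplicity (p : ℤ) z = (z.natAbs.factorization p : ℕ∞) := by
  rw [← Int.emultiplicity_natAbs, auxEmultNat hp (by simpa using hz)]

lemma enatAddOneCancel (a b : ℕ∞) : a + 1 ≤ b + 1 ↔ a ≤ b := by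
  cases a <;> cases b
  · exact iff_of_true le_rfl le_rfl
  · rw [← Nat.cast_one, ← Nat.cast_add, top_add]
    simp only [top_le_iff]
    constructor <;> intro h <;> exact absurd h (by exact_mod_cast (ENat.coe_ne_top _))
  · exact iff_of_true le_top le_top
  · rw [← Nat.cast_one, ← Nat.cast_add, ← Nat.cast_add, Nat.cast_le, Nat.cast_le]
    omega

lemma auxDvdForall {m : ℕ} (hm : m ≠ 0) (z : ℤ) :
    (m : ℤ) ∣ z ↔ ∀ p : ℕ, p.Prime → p ∣ m → (p : ℤ) ^ m.factorization p ∣ z := by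
  constructor
  · intro h p hp hpm
    refine dvd_trans ?_ h
    have := Nat.ordProj_dvd m p
    exact_mod_cast Int.natCast_dvd_natCast.mpr this
  · intro h
    rcases eq_or_ne z 0 with rfl | hz
    · simp
    rw [Int.natCast_dvd]
    rw [← Nat.factorization_le_iff_dvd hm (by simpa using hz)]
    intro p
    by_cases hp : p.Prime
    · by_cases hpm : p ∣ m
      · have := h p hp hpm
        rw [show ((p:ℤ)^m.factorization p) = ((p ^ m.factorization p : ℕ) : ℤ) by push_cast; ring,
          Int.natCast_dvd] at this
        rwa [← Nat.Prime.pow_dvd_iff_le_factorization hp (by simpa using hz)]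
      · simp [Nat.factorization_eq_zero_of_not_dvd hpm]
    · simp [Nat.factorization_eq_zero_of_not_prime _ hp]

lemma auxUnitNotDvd {n p : ℕ} (hp : p.Prime) (hpn : p ∣ n) (u : (ZMod n)ˣ) {x : ℤ}
    (hux : (x : ZMod n) = (u : ZMod n)) : ¬ (p : ℤ) ∣ x := by
  intro hd
  haveI := Fact.mk hp
  have h0 : ((x : ℤ) : ZMod p) = 0 := by
    rw [ZMod.intCast_zmod_eq_zero_iff_dvd]; exact_mod_cast hd
  have hU : IsUnit ((ZMod.castHom hpn (ZMod p)) (u : ZMod n)) := u.isUnit.map _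
  rw [← hux, map_intCast, h0] at hU
  exact hU.ne_zero rfl

/-- LTE reformulation, odd prime. -/
lemma auxOddLTE {p : ℕ} (hp : p.Prime) (hp2 : p ≠ 2) {x : ℤ} (hx1 : (p : ℤ) ∣ x - 1)
    (e r : ℕ) (hr : r ≠ 0) :
    (p : ℤ) ^ e ∣ x ^ r - 1 ↔
      (e : ℕ∞) ≤ emultiplicity (p : ℤ) (x - 1) + (r.factorization p : ℕ∞) := by
  have hx : ¬ (p : ℤ) ∣ x := by
    intro h
    have : (p : ℤ) ∣ 1 := by
      have := dvd_sub h hx1; simpa using this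
    rw [Int.natCast_dvd] at this
    exact hp.one_lt.ne' (Nat.eq_one_of_dvd_one (by simpa using this))
  have := Int.emultiplicity_pow_sub_pow hp (hp.odd_of_ne_two hp2) (by simpa using hx1) hx r
  rw [pow_dvd_iff_le_emultiplicity, one_pow] at *
  rw [this, auxEmultNat hp hr]

/-- LTE reformulation, `p = 2`. -/
lemma auxTwoLTE {x : ℤ} (hx : ¬ (2 : ℤ) ∣ x) {r : ℕ} (hre : Even r) (hr : r ≠ 0) (e : ℕ) :
    (2 : ℤ) ^ e ∣ x ^ r - 1 ↔
      (e : ℕ∞) + 1 ≤ emultiplicity 2 (x + 1) + emultiplicity 2 (x - 1)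
        + (r.factorization 2 : ℕ∞) := by
  have hx1 : (2 : ℤ) ∣ x - 1 := by
    rcases Int.even_or_odd x with h | h
    · exact absurd h.two_dvd hx
    · obtain ⟨k, hk⟩ := h; exact ⟨k, by omega⟩
  have := Int.two_pow_sub_pow (x := x) (y := 1) (n := r) (by simpa using hx1) hx hre
  rw [pow_dvd_iff_le_emultiplicity, ← enatAddOneCancel, one_pow] at *
  have h2 : emultiplicity (2:ℤ) (r:ℤ) = (r.factorization 2 : ℕ∞) := by
    rw [← auxEmultNat Nat.prime_two hr, ← Int.natCast_emultiplicity]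
    norm_num
  rw [this, h2]

lemma auxOrdCase {n p : ℕ} (hn : n ≠ 0) (hp : p.Prime) (hpn : p ∣ n) (u : (ZMod n)ˣ) {x : ℤ}
    (hux : (x : ZMod n) = (u : ZMod n)) (r : ℕ) (hrx : (r : ℤ) ∣ x - 1)
    (hpx : ¬ (p : ℤ) ∣ x - 1) :
    (p : ℤ) ^ n.factorization p ∣ x ^ r - 1 ↔
      (2 ≤ orderOf (Units.map (ZMod.castHom (Nat.ordProj_dvd n p)
            (ZMod (p ^ n.factorization p))).toMonoidHom u) ∧
       orderOf (Units.map (ZMod.castHom (Nat.ordProj_dvd n p)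
            (ZMod (p ^ n.factorization p))).toMonoidHom u) ∣ Nat.gcd r (p - 1)) := by
  set e := n.factorization p with he
  have he1 : 1 ≤ e := hp.factorization_pos_of_dvd hn hpn
  haveI := Fact.mk hp
  haveI : NeZero (p ^ e) := ⟨pow_ne_zero _ hp.pos.ne'⟩
  set U := Units.map (ZMod.castHom (Nat.ordProj_dvd n p)
      (ZMod (p ^ e))).toMonoidHom u with hUdef
  have hUval : (U : ZMod (p ^ e)) = ((x : ℤ) : ZMod (p ^ e)) := by
    rw [hUdef, Units.coe_map]
    simp only [RingHom.toMonoidHom_eq_coe, MonoidHom.coe_coe]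
    rw [← hux, map_intCast]
  have hpow : (U ^ r = 1) ↔ (p : ℤ) ^ e ∣ x ^ r - 1 := by
    rw [Units.ext_iff, Units.val_pow_eq_pow_val, hUval, Units.val_one,
      show ((x : ℤ) : ZMod (p ^ e)) ^ r = ((x ^ r : ℤ) : ZMod (p ^ e)) by push_cast; ring,
      ← sub_eq_zero,
      show ((x ^ r : ℤ) : ZMod (p ^ e)) - 1 = ((x ^ r - 1 : ℤ) : ZMod (p ^ e)) by
        push_cast; ring,
      ZMod.intCast_zmod_eq_zero_iff_dvd]
    push_cast
    rfl
  rw [← hpow, ← orderOf_dvd_iff_pow_eq_one]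
  constructor
  · intro hd
    have hne : U ≠ 1 := by
      intro h
      apply hpx
      have hx1 : ((x : ℤ) : ZMod (p ^ e)) = 1 := by rw [← hUval, h, Units.val_one]
      have h0 : ((x - 1 : ℤ) : ZMod (p ^ e)) = 0 := by push_cast; rw [sub_eq_zero]; exact hx1
      have hd' : ((p ^ e : ℕ) : ℤ) ∣ x - 1 := (ZMod.intCast_zmod_eq_zero_iff_dvd _ _).mp h0
      push_cast at hd'
      exact dvd_trans (dvd_pow_self (p : ℤ) (by omega)) hd'
    refine ⟨?_, ?_⟩
    · have h0 := orderOf_pos U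
      have h1 : orderOf U ≠ 1 := fun h => hne (orderOf_eq_one_iff.mp h)
      omega
    · have hcard : orderOf U ∣ (p ^ e).totient := by
        rw [← ZMod.card_units_eq_totient]; exact orderOf_dvd_card
      rw [Nat.totient_prime_pow hp (by omega)] at hcard
      have hpord : ¬ p ∣ orderOf U := by
        intro h
        exact hpx (dvd_trans (Int.natCast_dvd_natCast.mpr (h.trans hd)) hrx)
      have hcop : (orderOf U).Coprime (p ^ (e - 1)) :=
        ((hp.coprime_iff_not_dvd.mpr hpord).symm).pow_right _
      exact Nat.dvd_gcd hd (hcop.dvd_of_dvd_mul_left hcard)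
  · rintro ⟨-, hg⟩
    exact hg.trans (Nat.gcd_dvd_left _ _)

lemma auxPowOneIff {n : ℕ} (u : (ZMod n)ˣ) {x : ℤ} (hux : (x : ZMod n) = (u : ZMod n))
    (r : ℕ) : u ^ r = 1 ↔ (n : ℤ) ∣ x ^ r - 1 := by
  rw [Units.ext_iff, Units.val_pow_eq_pow_val, ← hux, Units.val_one,
    show ((x : ℤ) : ZMod n) ^ r = ((x ^ r : ℤ) : ZMod n) by push_cast; ring,
    ← sub_eq_zero,
    show ((x ^ r : ℤ) : ZMod n) - 1 = ((x ^ r - 1 : ℤ) : ZMod n) by push_cast; ring,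
    ZMod.intCast_zmod_eq_zero_iff_dvd]

/-- `PsetAd m` is the set `𝒫_m` of odd prime divisors of `m`, together with `2` in case
`4 ∣ m`. -/
def PsetAd (m : ℕ) : Set ℕ :=
  {p : ℕ | p.Prime ∧ p ∣ m ∧ (p ≠ 2 ∨ 4 ∣ m)}

/-- Characterization of the units `u` of `ℤ/nℤ` satisfying `u^{r_u} = 1`, where
`r_u = gcd(n, ũ − 1)` for a representative `ũ ∈ ℤ` of `u` (these units correspond to the
adequate self-actions of the cyclic group `ℤ/nℤ`): writing `u_p` for the image of `u` in
`(ℤ/p^{v_p(n)}ℤ)^×` and `o(u_p)` for its order, `u^{r_u} = 1` holds if and only if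
(i) `r_u ≠ 1`; (ii) `v_p(n) ≤ 2·v_p(r_u)` for every `p ∈ 𝒫_{r_u}`;
(iii) `2 ≤ o(u_p)` and `o(u_p) ∣ gcd(r_u, p−1)` for every odd prime `p ∈ 𝒫_n \ 𝒫_{r_u}`;
(iv) if `2 ∈ 𝒫_n \ 𝒫_{r_u}` then `ũ ≡ −1 (mod 2^{v_2(n)−1})`. -/
theorem adequate_units_characterization
    (n : ℕ) (hn : 2 ≤ n) (u : (ZMod n)ˣ) (ut : ℤ) (hut : (ut : ZMod n) = (u : ZMod n)) :
    u ^ (Int.gcd (n : ℤ) (ut - 1)) = 1 ↔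
      (Int.gcd (n : ℤ) (ut - 1) ≠ 1 ∧
       (∀ p ∈ PsetAd (Int.gcd (n : ℤ) (ut - 1)),
          n.factorization p ≤ 2 * (Int.gcd (n : ℤ) (ut - 1)).factorization p) ∧
       (∀ p ∈ PsetAd n, p ∉ PsetAd (Int.gcd (n : ℤ) (ut - 1)) → p ≠ 2 →
          2 ≤ orderOf (Units.map (ZMod.castHom (Nat.ordProj_dvd n p)
                (ZMod (p ^ n.factorization p))).toMonoidHom u) ∧
          orderOf (Units.map (ZMod.castHom (Nat.ordProj_dvd n p)
                (ZMod (p ^ n.factorization p))).toMonoidHom u) ∣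
              Nat.gcd (Int.gcd (n : ℤ) (ut - 1)) (p - 1)) ∧
       (2 ∈ PsetAd n → 2 ∉ PsetAd (Int.gcd (n : ℤ) (ut - 1)) →
          (ut : ZMod (2 ^ (n.factorization 2 - 1))) = -1)) := by
  have hn0 : n ≠ 0 := by omega
  by_cases hx1 : ut = 1
  · subst hx1
    have hu : u = 1 := Units.ext (by rw [← hut]; norm_num)
    simp only [sub_self, Int.gcd_zero_right, Int.natAbs_natCast]
    constructor
    · intro _
      exact ⟨by omega, fun p _ => by omega, fun p hpn hpr _ => absurd hpn hpr,
        fun h2n h2r => absurd h2n h2r⟩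
    · intro _
      rw [hu, one_pow]
  -- main case
  set r := Int.gcd (n : ℤ) (ut - 1) with hrdef
  have hxne : ut - 1 ≠ 0 := sub_ne_zero.mpr hx1
  have hA0 : (ut - 1).natAbs ≠ 0 := by simpa using hxne
  have hr0 : r ≠ 0 := by
    intro h
    exact hn0 (by exact_mod_cast (Int.gcd_eq_zero_iff.mp h).1)
  have hrn : r ∣ n := Int.natCast_dvd_natCast.mp (Int.gcd_dvd_left _ _)
  have hrx : (r : ℤ) ∣ ut - 1 := Int.gcd_dvd_right _ _
  have hfactr : ∀ p : ℕ, r.factorization p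
      = min (n.factorization p) ((ut - 1).natAbs.factorization p) := by
    intro p
    have h1 : r = Nat.gcd n (ut - 1).natAbs := by
      rw [hrdef]; simp [Int.gcd]
    rw [h1, Nat.factorization_gcd hn0 hA0, Finsupp.inf_apply]
  have key : u ^ r = 1 ↔
      ∀ p : ℕ, p.Prime → p ∣ n → (p : ℤ) ^ n.factorization p ∣ ut ^ r - 1 := by
    rw [auxPowOneIff u hut r, auxDvdForall hn0]
  -- odd prime dividing ut - 1
  have hodd_iff : ∀ p : ℕ, p.Prime → p ≠ 2 → (p : ℤ) ∣ ut - 1 →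
      ((p : ℤ) ^ n.factorization p ∣ ut ^ r - 1 ↔
        n.factorization p ≤ 2 * r.factorization p) := by
    intro p hp hp2 hpx
    rw [auxOddLTE hp hp2 hpx _ _ hr0, auxEmultInt hp hxne, hfactr p,
      ← Nat.cast_add, Nat.cast_le]
    omega
  -- p = 2, 4 ∣ ut - 1
  have h2a_iff : 2 ∣ n → (4 : ℤ) ∣ ut - 1 →
      ((2 : ℤ) ^ n.factorization 2 ∣ ut ^ r - 1 ↔
        n.factorization 2 ≤ 2 * r.factorization 2) := by
    intro h2n h4x
    have hxodd : ¬ (2 : ℤ) ∣ ut := auxUnitNotDvd Nat.prime_two h2n u hut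
    have h2x : (2 : ℤ) ∣ ut - 1 := dvd_trans (by norm_num) h4x
    have hre : Even r := by
      rw [even_iff_two_dvd]
      have : (2 : ℤ) ∣ (r : ℤ) := Int.dvd_coe_gcd (by exact_mod_cast Int.natCast_dvd_natCast.mpr h2n) h2x
      exact_mod_cast this
    have hE1 : emultiplicity (2 : ℤ) (ut + 1) = 1 := by
      rw [show (1 : ℕ∞) = ((1 : ℕ) : ℕ∞) by norm_num, emultiplicity_eq_coe]
      constructor
      · rw [pow_one]; omega
      · rw [show (2 : ℤ) ^ (1 + 1) = 4 by norm_num]; omega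
    have ha2 : 2 ≤ (ut - 1).natAbs.factorization 2 := by
      rw [← Nat.Prime.pow_dvd_iff_le_factorization Nat.prime_two hA0, ← Int.natCast_dvd]
      exact_mod_cast h4x
    have hEx : emultiplicity (2 : ℤ) (ut - 1) = ((ut - 1).natAbs.factorization 2 : ℕ∞) := by
      simpa using auxEmultInt Nat.prime_two hxne
    rw [auxTwoLTE hxodd hre hr0, hE1, hEx, hfactr 2,
      show (1 : ℕ∞) + ((ut - 1).natAbs.factorization 2 : ℕ∞)
          + ((min (n.factorization 2) ((ut - 1).natAbs.factorization 2) : ℕ) : ℕ∞)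
        = (((ut - 1).natAbs.factorization 2
            + min (n.factorization 2) ((ut - 1).natAbs.factorization 2) : ℕ) : ℕ∞) + 1 by
          push_cast; ring,
      enatAddOneCancel, Nat.cast_le]
    omega
  -- p = 2, 4 ∤ ut - 1, v2(n) ≥ 2
  have h2b_iff : 2 ∣ n → 2 ≤ n.factorization 2 → ¬ (4 : ℤ) ∣ ut - 1 →
      ((2 : ℤ) ^ n.factorization 2 ∣ ut ^ r - 1 ↔
        (ut : ZMod (2 ^ (n.factorization 2 - 1))) = -1) := by
    intro h2n he2 h4x
    have hxodd : ¬ (2 : ℤ) ∣ ut := auxUnitNotDvd Nat.prime_two h2n u hut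
    have h2x : (2 : ℤ) ∣ ut - 1 := by omega
    have hre : Even r := by
      rw [even_iff_two_dvd]
      have : (2 : ℤ) ∣ (r : ℤ) := Int.dvd_coe_gcd (by exact_mod_cast Int.natCast_dvd_natCast.mpr h2n) h2x
      exact_mod_cast this
    have hE1 : emultiplicity (2 : ℤ) (ut - 1) = 1 := by
      rw [show (1 : ℕ∞) = ((1 : ℕ) : ℕ∞) by norm_num, emultiplicity_eq_coe]
      constructor
      · rw [pow_one]; omega
      · rw [show (2 : ℤ) ^ (1 + 1) = 4 by norm_num]; omega
    have hfr : r.factorization 2 = 1 := by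
      have ha1 : (ut - 1).natAbs.factorization 2 = 1 := by
        have hd1 : 2 ^ 1 ∣ (ut - 1).natAbs := by
          rw [← Int.natCast_dvd]; exact_mod_cast (by rwa [pow_one])
        have hd2 : ¬ 2 ^ 2 ∣ (ut - 1).natAbs := by
          rw [← Int.natCast_dvd]; intro h; exact h4x (by exact_mod_cast h)
        have l1 := (Nat.Prime.pow_dvd_iff_le_factorization Nat.prime_two hA0).mp hd1
        have l2 : ¬ 2 ≤ (ut - 1).natAbs.factorization 2 :=
          fun h => hd2 ((Nat.Prime.pow_dvd_iff_le_factorization Nat.prime_two hA0).mpr h)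
        omega
      rw [hfactr 2, ha1]
      omega
    rw [auxTwoLTE hxodd hre hr0, hE1, hfr,
      show emultiplicity (2 : ℤ) (ut + 1) + 1 + ((1 : ℕ) : ℕ∞)
        = (emultiplicity (2 : ℤ) (ut + 1) + 1) + 1 by push_cast; ring,
      enatAddOneCancel,
      show ((n.factorization 2 : ℕ) : ℕ∞) = ((n.factorization 2 - 1 : ℕ) : ℕ∞) + 1 by
        have hh : n.factorization 2 = (n.factorization 2 - 1) + 1 := by omega
        conv_lhs => rw [hh]
        push_cast
        ring,
      enatAddOneCancel, ← pow_dvd_iff_le_emultiplicity]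
    rw [show ((2 : ℤ) ^ (n.factorization 2 - 1)) = ((2 ^ (n.factorization 2 - 1) : ℕ) : ℤ) by
        push_cast; ring]
    rw [← ZMod.intCast_zmod_eq_zero_iff_dvd,
      show ((ut + 1 : ℤ) : ZMod (2 ^ (n.factorization 2 - 1)))
        = (ut : ZMod (2 ^ (n.factorization 2 - 1))) + 1 by push_cast; ring,
      add_eq_zero_iff_eq_neg]
  rw [key]
  constructor
  · intro hQ
    refine ⟨?_, ?_, ?_, ?_⟩
    · -- (i)
      intro hr1
      have hu1 : u = 1 := by
        have := key.mpr hQ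
        rwa [hr1, pow_one] at this
      have hnd : (n : ℤ) ∣ ut - 1 := by
        have h0 : ((ut - 1 : ℤ) : ZMod n) = 0 := by
          push_cast
          rw [hut, hu1, Units.val_one, sub_self]
        exact (ZMod.intCast_zmod_eq_zero_iff_dvd _ _).mp h0
      have hrn' : r = n := by
        have := Int.gcd_eq_left (Int.natCast_nonneg n) hnd; rw [hrdef]; exact_mod_cast this
      omega
    · -- (ii)
      intro p hpP
      obtain ⟨hp, hpr, hp2or⟩ := hpP
      have hpn : p ∣ n := hpr.trans hrn
      rcases eq_or_ne p 2 with rfl | hp2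
      · have h4r : 4 ∣ r := hp2or.resolve_left (by simp)
        have h4x : (4 : ℤ) ∣ ut - 1 :=
          dvd_trans (by exact_mod_cast Int.natCast_dvd_natCast.mpr h4r) hrx
        exact (h2a_iff hpn h4x).mp (hQ 2 hp hpn)
      · have hpx : (p : ℤ) ∣ ut - 1 := dvd_trans (Int.natCast_dvd_natCast.mpr hpr) hrx
        exact (hodd_iff p hp hp2 hpx).mp (hQ p hp hpn)
    · -- (iii)
      intro p hpP hprP hp2
      obtain ⟨hp, hpn, -⟩ := hpP
      have hpx : ¬ (p : ℤ) ∣ ut - 1 := by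
        intro h
        have hpr : p ∣ r := by
          have : (p : ℤ) ∣ (r : ℤ) := Int.dvd_coe_gcd (Int.natCast_dvd_natCast.mpr hpn) h
          exact_mod_cast this
        exact hprP ⟨hp, hpr, Or.inl hp2⟩
      exact (auxOrdCase hn0 hp hpn u hut r hrx hpx).mp (hQ p hp hpn)
    · -- (iv)
      intro h2n h2r
      obtain ⟨-, h2dn, h2or⟩ := h2n
      have h4n : 4 ∣ n := h2or.resolve_left (by simp)
      have he2 : 2 ≤ n.factorization 2 := by
        rw [← Nat.Prime.pow_dvd_iff_le_factorization Nat.prime_two hn0]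
        exact_mod_cast h4n
      have h4x : ¬ (4 : ℤ) ∣ ut - 1 := by
        intro h
        have h4r : 4 ∣ r := by
          have h4nz : (4 : ℤ) ∣ (n : ℤ) := by exact_mod_cast Int.natCast_dvd_natCast.mpr h4n
          have : (4 : ℤ) ∣ (r : ℤ) := Int.dvd_coe_gcd h4nz h
          exact_mod_cast this
        exact h2r ⟨Nat.prime_two, dvd_trans (by norm_num) h4r, Or.inr h4r⟩
      exact (h2b_iff h2dn he2 h4x).mp (hQ 2 Nat.prime_two h2dn)
  · rintro ⟨h1, h2, h3, h4⟩ p hp hpn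
    rcases eq_or_ne p 2 with rfl | hp2
    · by_cases he2 : 2 ≤ n.factorization 2
      · have h4n : 4 ∣ n := by
          have := (Nat.Prime.pow_dvd_iff_le_factorization Nat.prime_two hn0).mpr he2
          exact_mod_cast this
        by_cases h4x : (4 : ℤ) ∣ ut - 1
        · have h4r : 4 ∣ r := by
            have h4nz : (4 : ℤ) ∣ (n : ℤ) := by exact_mod_cast Int.natCast_dvd_natCast.mpr h4n
            have : (4 : ℤ) ∣ (r : ℤ) := Int.dvd_coe_gcd h4nz h4x
            exact_mod_cast this
          exact (h2a_iff hpn h4x).mpr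
            (h2 2 ⟨Nat.prime_two, dvd_trans (by norm_num) h4r, Or.inr h4r⟩)
        · have h2rP : 2 ∉ PsetAd r := by
            rintro ⟨-, -, hor⟩
            rcases hor with h | h4r
            · exact h rfl
            · exact h4x (dvd_trans (by exact_mod_cast Int.natCast_dvd_natCast.mpr h4r) hrx)
          exact (h2b_iff hpn he2 h4x).mpr (h4 ⟨Nat.prime_two, hpn, Or.inr h4n⟩ h2rP)
      · have he1 : n.factorization 2 = 1 := by
          have := Nat.Prime.factorization_pos_of_dvd Nat.prime_two hn0 hpn
          omega
        rw [he1, pow_one]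
        have hxodd : ¬ (2 : ℤ) ∣ ut := auxUnitNotDvd Nat.prime_two hpn u hut
        have hodd : Odd (ut ^ r) := by
          refine Odd.pow ?_
          rcases Int.even_or_odd ut with h | h
          · exact absurd (even_iff_two_dvd.mp h) hxodd
          · exact h
        obtain ⟨k, hk⟩ := hodd
        omega
    · by_cases hpx : (p : ℤ) ∣ ut - 1
      · have hpr : p ∣ r := by
          have : (p : ℤ) ∣ (r : ℤ) := Int.dvd_coe_gcd (Int.natCast_dvd_natCast.mpr hpn) hpx
          exact_mod_cast this
        exact (hodd_iff p hp hp2 hpx).mpr (h2 p ⟨hp, hpr, Or.inl hp2⟩)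
      · have hprP : p ∉ PsetAd r := by
          rintro ⟨-, hpr, -⟩
          exact hpx (dvd_trans (Int.natCast_dvd_natCast.mpr hpr) hrx)
        exact (auxOrdCase hn0 hp hpn u hut r hrx hpx).mpr
          (h3 p ⟨hp, hpn, Or.inl hp2⟩ hprP hp2)
end

section
/- Let η : Γ → 𝔊 be a generating cocycle with kernel Δ, and suppose (Γ,𝔊,η) is a Kneser triple, i.e. η is surjective. Then every ideal of 𝔊 is a Kneser ideal, and S is a section of J: for every ideal a of 𝔊 one has J(S(a)) = a. -/
/-- If `(Γ, 𝔊, η)` is a Kneser triple (i.e. the generating cocycle `η` is surjective), then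
every ideal `a` of `𝔊` is a Kneser ideal (the induced cocycle `η_a : Γ → 𝔊/a` is
surjective), and `S = η⁻¹(·)` is a section of `J`: `J(S(a)) = a` for every ideal `a`. -/
theorem kneser_triple_section
    {Γ 𝔊 : Type*} [Group Γ] [TopologicalSpace Γ] [IsTopologicalGroup Γ]
    [CompactSpace Γ] [T2Space Γ] [TotallyDisconnectedSpace Γ]
    [Group 𝔊] [TopologicalSpace 𝔊] [IsTopologicalGroup 𝔊]
    [CompactSpace 𝔊] [T2Space 𝔊] [TotallyDisconnectedSpace 𝔊]
    [MulDistribMulAction Γ 𝔊] [ContinuousSMul Γ 𝔊]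
    (η : Γ → 𝔊) (hcont : Continuous η)
    (hcoc : ∀ σ τ : Γ, η (σ * τ) = η σ * σ • η τ)
    (hgen : (Subgroup.closure (Set.range η)).topologicalClosure = ⊤)
    (hsurj : Function.Surjective η) :
    (∀ a : Subgroup 𝔊, IsIdealSG Γ a →
        Function.Surjective (fun γ : Γ => (QuotientGroup.mk (η γ) : 𝔊 ⧸ a))) ∧
    (∀ a : Subgroup 𝔊, IsIdealSG Γ a →
        cogalJ Γ η (η ⁻¹' (a : Set 𝔊)) = a) := by
  constructor
  · intro a _ x
    obtain ⟨g, rfl⟩ := QuotientGroup.mk_surjective x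
    obtain ⟨γ, rfl⟩ := hsurj g
    exact ⟨γ, rfl⟩
  · intro a ha
    apply le_antisymm
    · exact sInf_le ⟨ha, fun γ hγ => hγ⟩
    · intro g hg
      obtain ⟨γ, rfl⟩ := hsurj g
      exact Subgroup.mem_sInf.mpr fun b hb => hb.2 γ hg
end

section
/- Let η : Γ → 𝔊 be a generating cocycle. Then: (1) an ideal a of 𝔊 is a Kneser ideal if and only if for every open ideal b of 𝔊 with a ⊆ b the index (Γ : S(b)) equals the index (𝔊 : b); (2) every Kneser ideal of 𝔊 contains a minimal Kneser ideal, i.e. a Kneser ideal that is minimal with respect to inclusion among all Kneser ideals. -/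
/-- An ideal `a` of `𝔊` is a *Kneser ideal* (with respect to a cocycle `η : Γ → 𝔊`) if the
induced cocycle `η_a : Γ → 𝔊/a` is surjective. -/
def IsKneserIdeal {Γ 𝔊 : Type*} [Group 𝔊] [TopologicalSpace 𝔊] [SMul Γ 𝔊]
    (η : Γ → 𝔊) (a : Subgroup 𝔊) : Prop :=
  Function.Surjective (fun γ : Γ => (QuotientGroup.mk (η γ) : 𝔊 ⧸ a))

open Pointwise

set_option linter.unusedSectionVars false

section KCHelpers

variable {Γ 𝔊 : Type*} [Group Γ] [Group 𝔊] [MulDistribMulAction Γ 𝔊]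

theorem KC.eta_one (η : Γ → 𝔊) (hcoc : ∀ σ τ : Γ, η (σ * τ) = η σ * σ • η τ) : η 1 = 1 := by
  have h := hcoc 1 1
  rw [mul_one, one_smul] at h
  exact (left_eq_mul.mp h)

theorem KC.eta_inv (η : Γ → 𝔊) (hcoc : ∀ σ τ : Γ, η (σ * τ) = η σ * σ • η τ) (σ : Γ) :
    η σ⁻¹ = (σ⁻¹ • η σ)⁻¹ := by
  have h := hcoc σ⁻¹ σ
  rw [inv_mul_cancel, KC.eta_one η hcoc] at h
  exact eq_inv_of_mul_eq_one_left h.symm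

theorem KC.smul_mem_iff {b : Subgroup 𝔊} (hb : ∀ (γ : Γ) (g : 𝔊), g ∈ b → γ • g ∈ b)
    (γ : Γ) (g : 𝔊) : γ • g ∈ b ↔ g ∈ b := by
  refine ⟨fun h => ?_, hb γ g⟩
  have := hb γ⁻¹ _ h
  rwa [inv_smul_smul] at this

theorem KC.key (η : Γ → 𝔊) (hcoc : ∀ σ τ : Γ, η (σ * τ) = η σ * σ • η τ)
    {b : Subgroup 𝔊} (hb : ∀ (γ : Γ) (g : 𝔊), g ∈ b → γ • g ∈ b) (σ τ : Γ) :
    η (σ⁻¹ * τ) ∈ b ↔ (η σ)⁻¹ * η τ ∈ b := by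
  have h : η (σ⁻¹ * τ) = σ⁻¹ • ((η σ)⁻¹ * η τ) := by
    rw [hcoc σ⁻¹ τ, KC.eta_inv η hcoc σ, smul_mul', smul_inv']
  rw [h, KC.smul_mem_iff hb]

/-- `S(b) = η⁻¹(b)` as a subgroup of `Γ`. -/
def KC.S (η : Γ → 𝔊) (hcoc : ∀ σ τ : Γ, η (σ * τ) = η σ * σ • η τ)
    (b : Subgroup 𝔊) (hb : ∀ (γ : Γ) (g : 𝔊), g ∈ b → γ • g ∈ b) : Subgroup Γ where
  carrier := η ⁻¹' (b : Set 𝔊)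
  one_mem' := by simp [KC.eta_one η hcoc, Subgroup.one_mem]
  mul_mem' {σ τ} hσ hτ := by
    simp only [Set.mem_preimage, SetLike.mem_coe] at *
    rw [hcoc]
    exact b.mul_mem hσ (hb σ _ hτ)
  inv_mem' {σ} hσ := by
    simp only [Set.mem_preimage, SetLike.mem_coe] at *
    rw [KC.eta_inv η hcoc]
    exact b.inv_mem (hb σ⁻¹ _ hσ)

theorem KC.exists_inducedMap (η : Γ → 𝔊) (hcoc : ∀ σ τ : Γ, η (σ * τ) = η σ * σ • η τ)
    {b : Subgroup 𝔊} [TopologicalSpace 𝔊] (hb : ∀ (γ : Γ) (g : 𝔊), g ∈ b → γ • g ∈ b)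
    {D : Subgroup Γ} (hD : (D : Set Γ) = η ⁻¹' (b : Set 𝔊)) :
    ∃ f : Γ ⧸ D → 𝔊 ⧸ b, Function.Injective f ∧
      ∀ γ : Γ, f (QuotientGroup.mk γ) = (QuotientGroup.mk (η γ) : 𝔊 ⧸ b) := by
  have hmem : ∀ γ : Γ, γ ∈ D ↔ η γ ∈ b := by
    intro γ
    constructor
    · intro h
      have : γ ∈ (D : Set Γ) := h
      rw [hD] at this; exact this
    · intro h
      have : γ ∈ (η ⁻¹' (b : Set 𝔊)) := h
      rw [← hD] at this; exact this
  have hiff : ∀ σ τ : Γ, (QuotientGroup.mk σ : Γ ⧸ D) = QuotientGroup.mk τ ↔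
      (QuotientGroup.mk (η σ) : 𝔊 ⧸ b) = QuotientGroup.mk (η τ) := by
    intro σ τ
    rw [QuotientGroup.eq, QuotientGroup.eq, hmem, KC.key η hcoc hb]
  refine ⟨fun x => Quotient.liftOn' x (fun γ => (QuotientGroup.mk (η γ) : 𝔊 ⧸ b)) ?_, ?_, ?_⟩
  · intro σ τ h
    have h' : (QuotientGroup.mk σ : Γ ⧸ D) = QuotientGroup.mk τ := Quotient.sound' h
    exact (hiff σ τ).mp h'
  · intro x y
    induction x using QuotientGroup.induction_on
    induction y using QuotientGroup.induction_on
    intro h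
    exact (hiff _ _).mpr h
  · intro γ; rfl

end KCHelpers

section KCHelpers2

variable {Γ 𝔊 : Type*} [Group Γ] [Group 𝔊] [MulDistribMulAction Γ 𝔊]
  [TopologicalSpace 𝔊] [IsTopologicalGroup 𝔊] [CompactSpace 𝔊]

/-- If the induced cocycle mod `b` is surjective then indices agree. -/
theorem KC.index_eq (η : Γ → 𝔊) (hcoc : ∀ σ τ : Γ, η (σ * τ) = η σ * σ • η τ)
    {b : Subgroup 𝔊} (hb : ∀ (γ : Γ) (g : 𝔊), g ∈ b → γ • g ∈ b)
    {D : Subgroup Γ} (hD : (D : Set Γ) = η ⁻¹' (b : Set 𝔊))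
    (hsurj : Function.Surjective (fun γ : Γ => (QuotientGroup.mk (η γ) : 𝔊 ⧸ b))) :
    D.index = b.index := by
  obtain ⟨f, hinj, hf⟩ := KC.exists_inducedMap η hcoc hb hD
  have hfsurj : Function.Surjective f := by
    intro q
    obtain ⟨γ, hγ⟩ := hsurj q
    exact ⟨QuotientGroup.mk γ, by rw [hf]; exact hγ⟩
  rw [Subgroup.index_eq_card, Subgroup.index_eq_card]
  exact Nat.card_eq_of_bijective f ⟨hinj, hfsurj⟩

/-- Conversely, for an open `b`, index equality forces surjectivity mod `b`. -/
theorem KC.surj_of_index_eq (η : Γ → 𝔊) (hcoc : ∀ σ τ : Γ, η (σ * τ) = η σ * σ • η τ)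
    {b : Subgroup 𝔊} (hb : ∀ (γ : Γ) (g : 𝔊), g ∈ b → γ • g ∈ b)
    (hbopen : IsOpen (b : Set 𝔊))
    {D : Subgroup Γ} (hD : (D : Set Γ) = η ⁻¹' (b : Set 𝔊))
    (hidx : D.index = b.index) :
    Function.Surjective (fun γ : Γ => (QuotientGroup.mk (η γ) : 𝔊 ⧸ b)) := by
  obtain ⟨f, hinj, hf⟩ := KC.exists_inducedMap η hcoc hb hD
  haveI : Finite (𝔊 ⧸ b) := b.quotient_finite_of_isOpen hbopen
  have hcard : Nat.card (Γ ⧸ D) = Nat.card (𝔊 ⧸ b) := by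
    rw [← Subgroup.index_eq_card, ← Subgroup.index_eq_card]; exact hidx
  have hbij : Function.Bijective f :=
    (Nat.bijective_iff_injective_and_card f).mpr ⟨hinj, hcard⟩
  intro q
  obtain ⟨x, hx⟩ := hbij.2 q
  induction x using QuotientGroup.induction_on with
  | H γ => exact ⟨γ, by simpa [hf γ] using hx⟩

end KCHelpers2

section KCHelpers3

variable {Γ 𝔊 : Type*} [Group Γ] [Group 𝔊]
  [TopologicalSpace Γ] [CompactSpace Γ]
  [TopologicalSpace 𝔊] [IsTopologicalGroup 𝔊]

/-- Compactness: a point of `𝔊` approximated (via `η`, up to coset) by all members of a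
directed family of closed subgroups is approximated by their intersection. -/
theorem KC.exists_mem_all {ι : Type*} [Nonempty ι] (η : Γ → 𝔊) (hcont : Continuous η)
    (s : ι → Subgroup 𝔊) (hclosed : ∀ i, IsClosed ((s i : Set 𝔊)))
    (hdir : ∀ i j, ∃ k, s k ≤ s i ∧ s k ≤ s j)
    (hsurj : ∀ i, Function.Surjective
      (fun γ : Γ => (QuotientGroup.mk (η γ) : 𝔊 ⧸ s i))) (g : 𝔊) :
    ∃ γ : Γ, ∀ i, (η γ)⁻¹ * g ∈ s i := by
  set K : ι → Set Γ := fun i => (fun γ => (η γ)⁻¹ * g) ⁻¹' ((s i : Set 𝔊)) with hK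
  have hKc : ∀ i, IsClosed (K i) := fun i =>
    (hclosed i).preimage ((hcont.inv).mul continuous_const)
  have hKcpt : ∀ i, IsCompact (K i) := fun i => (hKc i).isCompact
  have hKne : ∀ i, (K i).Nonempty := by
    intro i
    obtain ⟨γ, hγ⟩ := hsurj i (QuotientGroup.mk g)
    exact ⟨γ, QuotientGroup.eq.mp hγ⟩
  have hKdir : Directed (· ⊇ ·) K := by
    intro i j
    obtain ⟨k, h1, h2⟩ := hdir i j
    exact ⟨k, fun γ hγ => h1 hγ, fun γ hγ => h2 hγ⟩
  obtain ⟨γ, hγ⟩ := IsCompact.nonempty_iInter_of_directed_nonempty_isCompact_isClosed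
    K hKdir hKne hKcpt hKc
  exact ⟨γ, fun i => Set.mem_iInter.mp hγ i⟩

end KCHelpers3

section KCHelpers4

variable {Γ 𝔊 : Type*} [Group Γ] [Group 𝔊] [MulDistribMulAction Γ 𝔊]
  [TopologicalSpace 𝔊] [IsTopologicalGroup 𝔊] [CompactSpace 𝔊] [T2Space 𝔊]
  [TotallyDisconnectedSpace 𝔊] [TopologicalSpace Γ] [CompactSpace Γ] [ContinuousSMul Γ 𝔊]

/-- Any open subgroup of `𝔊` contains an open ideal. -/
theorem KC.exists_open_ideal_le (H : Subgroup 𝔊) (hHopen : IsOpen (H : Set 𝔊)) :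
    ∃ M : Subgroup 𝔊, IsIdealSG Γ M ∧ IsOpen (M : Set 𝔊) ∧ M ≤ H := by
  have hφ : Continuous (fun p : Γ × 𝔊 => p.1 • p.2) := continuous_smul
  have hO : IsOpen ((fun p : Γ × 𝔊 => p.1 • p.2) ⁻¹' (H : Set 𝔊)) := hHopen.preimage hφ
  have hsub : (Set.univ : Set Γ) ×ˢ ({1} : Set 𝔊) ⊆
      (fun p : Γ × 𝔊 => p.1 • p.2) ⁻¹' (H : Set 𝔊) := by
    rintro ⟨γ, g⟩ ⟨-, hg⟩
    simp only [Set.mem_singleton_iff] at hg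
    subst hg
    simp only [Set.mem_preimage, smul_eq_mul, SetLike.mem_coe]
    rw [smul_one]
    exact H.one_mem
  obtain ⟨u, v, hu, hv, huu, hvv, huv⟩ :=
    generalized_tube_lemma isCompact_univ isCompact_singleton hO hsub
  have h1v : (1 : 𝔊) ∈ v := hvv rfl
  have hΓv : ∀ (γ : Γ) (x : 𝔊), x ∈ v → γ • x ∈ H := by
    intro γ x hx
    exact huv (Set.mk_mem_prod (huu (Set.mem_univ γ)) hx)
  obtain ⟨W, hWclopen, h1W, hWv⟩ := compact_exists_isClopen_in_isOpen hv h1v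
  obtain ⟨V, hV⟩ := IsTopologicalGroup.exist_openNormalSubgroup_sub_clopen_nhds_of_one hWclopen h1W
  set M : Subgroup 𝔊 := ⨆ γ : Γ, γ • V.toSubgroup with hM
  have hle : ∀ γ : Γ, γ • V.toSubgroup ≤ M := fun γ => le_iSup (fun γ : Γ => γ • V.toSubgroup) γ
  have hVM : V.toSubgroup ≤ M := by
    have := hle 1
    rwa [one_smul] at this
  have hMH : M ≤ H := by
    refine iSup_le fun γ => ?_
    intro x hx
    rw [Subgroup.mem_pointwise_smul_iff_inv_smul_mem] at hx
    have : γ • (γ⁻¹ • x) ∈ H := hΓv γ _ (hWv (hV hx))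
    rwa [smul_inv_smul] at this
  have hMopen : IsOpen (M : Set 𝔊) := Subgroup.isOpen_mono hVM V.isOpen
  have hMnormal : M.Normal := by
    constructor
    intro n hn g
    refine Subgroup.iSup_induction _ (C := fun n => g * n * g⁻¹ ∈ M) hn ?_ ?_ ?_
    · intro γ x hx
      refine hle γ ?_
      rw [Subgroup.mem_pointwise_smul_iff_inv_smul_mem] at hx ⊢
      rw [smul_mul', smul_mul', smul_inv']
      exact V.isNormal'.conj_mem _ hx _
    · simpa using M.one_mem
    · intro x y hx hy
      have : g * (x * y) * g⁻¹ = (g * x * g⁻¹) * (g * y * g⁻¹) := by group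
      rw [this]
      exact M.mul_mem hx hy
  have hMinv : ∀ (γ : Γ) (g : 𝔊), g ∈ M → γ • g ∈ M := by
    intro δ n hn
    refine Subgroup.iSup_induction _ (C := fun n => δ • n ∈ M) hn ?_ ?_ ?_
    · intro γ x hx
      refine hle (δ * γ) ?_
      rw [Subgroup.mem_pointwise_smul_iff_inv_smul_mem] at hx ⊢
      rw [mul_inv_rev, mul_smul, inv_smul_smul]
      exact hx
    · simpa using M.one_mem
    · intro x y hx hy
      rw [smul_mul']
      exact M.mul_mem hx hy
  exact ⟨M, ⟨Subgroup.isClosed_of_isOpen M hMopen, hMnormal, hMinv⟩, hMopen, hMH⟩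

/-- Separation: any `g ∉ a` is excluded by some open ideal containing `a`. -/
theorem KC.exists_open_ideal (a : Subgroup 𝔊) (ha : IsIdealSG Γ a) {g : 𝔊} (hg : g ∉ a) :
    ∃ b : Subgroup 𝔊, IsIdealSG Γ b ∧ a ≤ b ∧ IsOpen (b : Set 𝔊) ∧ g ∉ b := by
  obtain ⟨haclosed, hanormal, hainv⟩ := ha
  have hU : IsOpen {x : 𝔊 | g * x ∉ a} := by
    have : {x : 𝔊 | g * x ∉ a} = (fun x => g * x) ⁻¹' ((a : Set 𝔊)ᶜ) := rfl
    rw [this]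
    exact (haclosed.isOpen_compl).preimage (continuous_const.mul continuous_id)
  have h1U : (1 : 𝔊) ∈ {x : 𝔊 | g * x ∉ a} := by simpa using hg
  obtain ⟨W, hWclopen, h1W, hWU⟩ := compact_exists_isClopen_in_isOpen hU h1U
  obtain ⟨V, hV⟩ := IsTopologicalGroup.exist_openNormalSubgroup_sub_clopen_nhds_of_one hWclopen h1W
  obtain ⟨M, hMideal, hMopen, hMV⟩ := KC.exists_open_ideal_le (Γ := Γ) V.toSubgroup V.isOpen
  have hgM : ∀ x ∈ M, g * x ∉ a := fun x hx => hWU (hV (hMV hx))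
  haveI : M.Normal := hMideal.2.1
  haveI : a.Normal := hanormal
  have hset : ((a ⊔ M : Subgroup 𝔊) : Set 𝔊) = (a : Set 𝔊) * (M : Set 𝔊) :=
    Subgroup.mul_normal a M
  have hmem : ∀ x : 𝔊, x ∈ a ⊔ M ↔ x ∈ ((a : Set 𝔊) * (M : Set 𝔊)) := by
    intro x
    rw [← hset, SetLike.mem_coe]
  refine ⟨a ⊔ M, ⟨?_, inferInstance, ?_⟩, le_sup_left, ?_, ?_⟩
  · exact Subgroup.isClosed_of_isOpen _ (Subgroup.isOpen_mono le_sup_right hMopen)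
  · intro γ x hx
    obtain ⟨p, hp, q, hq, hpq⟩ := (hmem x).mp hx
    rw [hmem, ← hpq]
    show γ • (p * q) ∈ (a : Set 𝔊) * (M : Set 𝔊)
    rw [smul_mul']
    exact Set.mul_mem_mul (hainv γ p hp) (hMideal.2.2 γ q hq)
  · exact Subgroup.isOpen_mono le_sup_right hMopen
  · intro hgb
    obtain ⟨p, hp, q, hq, hpq⟩ := (hmem g).mp hgb
    refine hgM q⁻¹ (M.inv_mem hq) ?_
    have : g * q⁻¹ = p := by rw [← hpq]; group
    rw [this]
    exact hp

end KCHelpers4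

/-- For a generating cocycle `η : Γ → 𝔊`:
(1) an ideal `a` of `𝔊` is a Kneser ideal if and only if for every open ideal `b ⊇ a` one has
`(Γ : S(b)) = (𝔊 : b)`, where `S(b) = η⁻¹(b)`;
(2) every Kneser ideal of `𝔊` contains a minimal Kneser ideal. -/
theorem kneser_ideal_criterion_and_minimal
    {Γ 𝔊 : Type*} [Group Γ] [TopologicalSpace Γ] [IsTopologicalGroup Γ]
    [CompactSpace Γ] [T2Space Γ] [TotallyDisconnectedSpace Γ]
    [Group 𝔊] [TopologicalSpace 𝔊] [IsTopologicalGroup 𝔊]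
    [CompactSpace 𝔊] [T2Space 𝔊] [TotallyDisconnectedSpace 𝔊]
    [MulDistribMulAction Γ 𝔊] [ContinuousSMul Γ 𝔊]
    (η : Γ → 𝔊) (hcont : Continuous η)
    (hcoc : ∀ σ τ : Γ, η (σ * τ) = η σ * σ • η τ)
    (hgen : (Subgroup.closure (Set.range η)).topologicalClosure = ⊤) :
    (∀ a : Subgroup 𝔊, IsIdealSG Γ a →
      (IsKneserIdeal η a ↔
        ∀ b : Subgroup 𝔊, IsIdealSG Γ b → a ≤ b → IsOpen (b : Set 𝔊) →
          ∀ D : Subgroup Γ, (D : Set Γ) = η ⁻¹' (b : Set 𝔊) → D.index = b.index)) ∧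
    (∀ a : Subgroup 𝔊, IsIdealSG Γ a → IsKneserIdeal η a →
      ∃ m : Subgroup 𝔊, IsIdealSG Γ m ∧ IsKneserIdeal η m ∧ m ≤ a ∧
        ∀ m' : Subgroup 𝔊, IsIdealSG Γ m' → IsKneserIdeal η m' → m' ≤ m → m' = m) := by
  constructor
  · -- Part (1)
    intro a ha
    constructor
    · -- Kneser ⇒ index equality
      intro hK b hb hab hbopen D hD
      have hsurjb : Function.Surjective
          (fun γ : Γ => (QuotientGroup.mk (η γ) : 𝔊 ⧸ b)) := by
        intro q
        induction q using QuotientGroup.induction_on with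
        | H g =>
          obtain ⟨γ, hγ⟩ := hK (QuotientGroup.mk g)
          refine ⟨γ, QuotientGroup.eq.mpr (hab ?_)⟩
          exact QuotientGroup.eq.mp hγ
      exact KC.index_eq η hcoc hb.2.2 hD hsurjb
    · -- index equality ⇒ Kneser
      intro hidx q
      induction q using QuotientGroup.induction_on with
      | H g =>
        set ι := {b : Subgroup 𝔊 // IsIdealSG Γ b ∧ a ≤ b ∧ IsOpen (b : Set 𝔊)} with hι
        haveI : Nonempty ι := by
          refine ⟨⟨⊤, ⟨?_, inferInstance, fun _ _ _ => trivial⟩, le_top, ?_⟩⟩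
          · rw [Subgroup.coe_top]; exact isClosed_univ
          · rw [Subgroup.coe_top]; exact isOpen_univ
        have hdir : ∀ i j : ι, ∃ k : ι, k.1 ≤ i.1 ∧ k.1 ≤ j.1 := by
          intro i j
          refine ⟨⟨i.1 ⊓ j.1, ⟨?_, ?_, ?_⟩, le_inf i.2.2.1 j.2.2.1, ?_⟩,
            inf_le_left, inf_le_right⟩
          · rw [Subgroup.coe_inf]
            exact (i.2.1.1).inter (j.2.1.1)
          · haveI := i.2.1.2.1
            haveI := j.2.1.2.1
            constructor
            intro n hn x
            rw [Subgroup.mem_inf] at hn ⊢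
            exact ⟨i.2.1.2.1.conj_mem n hn.1 x, j.2.1.2.1.conj_mem n hn.2 x⟩
          · intro γ x hx
            rw [Subgroup.mem_inf] at hx ⊢
            exact ⟨i.2.1.2.2 γ x hx.1, j.2.1.2.2 γ x hx.2⟩
          · rw [Subgroup.coe_inf]
            exact (i.2.2.2).inter (j.2.2.2)
        have hsurj : ∀ i : ι, Function.Surjective
            (fun γ : Γ => (QuotientGroup.mk (η γ) : 𝔊 ⧸ i.1)) := by
          intro i
          refine KC.surj_of_index_eq η hcoc i.2.1.2.2 i.2.2.2
            (D := KC.S η hcoc i.1 i.2.1.2.2) rfl ?_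
          exact hidx i.1 i.2.1 i.2.2.1 i.2.2.2 (KC.S η hcoc i.1 i.2.1.2.2) rfl
        obtain ⟨γ, hγ⟩ := KC.exists_mem_all η hcont (fun i : ι => i.1)
          (fun i => i.2.1.1) hdir hsurj g
        refine ⟨γ, QuotientGroup.eq.mpr ?_⟩
        by_contra hmem
        obtain ⟨b, hbideal, hab, hbopen, hgb⟩ := KC.exists_open_ideal a ha hmem
        exact hgb (hγ ⟨b, hbideal, hab, hbopen⟩)
  · -- Part (2): Zorn's lemma
    intro a ha hK
    set S : Set (Subgroup 𝔊)ᵒᵈ :=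
      {m | IsIdealSG Γ (OrderDual.ofDual m) ∧ IsKneserIdeal η (OrderDual.ofDual m) ∧
        OrderDual.ofDual m ≤ a} with hS
    have hchain : ∀ c ⊆ S, IsChain (· ≤ ·) c → ∀ y ∈ c, ∃ ub ∈ S, ∀ z ∈ c, z ≤ ub := by
      intro c hcS hc y hy
      set c' : Set (Subgroup 𝔊) := {x : Subgroup 𝔊 | OrderDual.toDual x ∈ c} with hc'
      have hyc' : OrderDual.ofDual y ∈ c' := hy
      set m₀ : Subgroup 𝔊 := sInf c' with hm₀
      haveI : Nonempty c' := ⟨⟨OrderDual.ofDual y, hyc'⟩⟩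
      have hclosed : ∀ x ∈ c', IsClosed ((x : Set 𝔊)) := fun x hx => (hcS hx).1.1
      have hKn : ∀ x ∈ c', Function.Surjective
          (fun γ : Γ => (QuotientGroup.mk (η γ) : 𝔊 ⧸ x)) := fun x hx => (hcS hx).2.1
      have hdir : ∀ i j : c', ∃ k : c', (k : Subgroup 𝔊) ≤ i ∧ (k : Subgroup 𝔊) ≤ j := by
        intro i j
        rcases eq_or_ne (OrderDual.toDual i.1) (OrderDual.toDual j.1) with h | h
        · have : i.1 = j.1 := congrArg OrderDual.ofDual h
          exact ⟨i, le_rfl, this ▸ le_rfl⟩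
        · rcases hc i.2 j.2 h with h1 | h1
          · -- in the dual order, i ≤ j means j.1 ≤ i.1
            exact ⟨j, h1, le_rfl⟩
          · exact ⟨i, le_rfl, h1⟩
      have hKm₀ : IsKneserIdeal η m₀ := by
        intro q
        induction q using QuotientGroup.induction_on with
        | H g =>
          obtain ⟨γ, hγ⟩ := KC.exists_mem_all η hcont (fun i : c' => (i : Subgroup 𝔊))
            (fun i => hclosed i.1 i.2) hdir (fun i => hKn i.1 i.2) g
          refine ⟨γ, QuotientGroup.eq.mpr ?_⟩
          exact Subgroup.mem_sInf.mpr fun x hx => hγ ⟨x, hx⟩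
      refine ⟨OrderDual.toDual m₀, ⟨⟨?_, ?_, ?_⟩, hKm₀, ?_⟩, ?_⟩
      · show IsClosed ((sInf c' : Subgroup 𝔊) : Set 𝔊)
        rw [Subgroup.coe_sInf]
        exact isClosed_biInter fun x hx => hclosed x hx
      · constructor
        intro n hn x
        have hn' : n ∈ sInf c' := hn
        show x * n * x⁻¹ ∈ sInf c'
        rw [Subgroup.mem_sInf] at hn' ⊢
        intro p hp
        exact (hcS hp).1.2.1.conj_mem n (hn' p hp) x
      · intro γ x hx
        have hx' : x ∈ sInf c' := hx
        show γ • x ∈ sInf c'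
        rw [Subgroup.mem_sInf] at hx' ⊢
        intro p hp
        exact (hcS hp).1.2.2 γ x (hx' p hp)
      · exact le_trans (sInf_le hyc') (hcS hy).2.2
      · intro z hz
        exact sInf_le (show OrderDual.ofDual z ∈ c' from hz)
    obtain ⟨m, ham, hmS, hmax⟩ := zorn_le_nonempty₀ S hchain (OrderDual.toDual a) ⟨ha, hK, le_rfl⟩
    refine ⟨OrderDual.ofDual m, hmS.1, hmS.2.1, hmS.2.2, ?_⟩
    intro m' hm'ideal hm'K hm'le
    have hm'S : OrderDual.toDual m' ∈ S := ⟨hm'ideal, hm'K, le_trans hm'le hmS.2.2⟩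
    have := hmax hm'S (show m ≤ OrderDual.toDual m' from hm'le)
    exact le_antisymm hm'le this
end

section
/- (Abstract Kneser Criterion) Let η : Γ → 𝔊 be a generating cocycle. Every ideal of 𝔊 that is maximal (with respect to inclusion) among the non-Kneser ideals is an open ideal, and for every ideal a of 𝔊 the following are equivalent: (1) a is a Kneser ideal; (2) a ⊄ m for every ideal m maximal among the non-Kneser ideals of 𝔊. -/
/-- An ideal of `𝔊` maximal (w.r.t. inclusion) among the non-Kneser ideals. -/
def IsMaxNonKneserIdeal (Γ : Type*) {𝔊 : Type*} [Group 𝔊] [TopologicalSpace 𝔊] [SMul Γ 𝔊]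
    (η : Γ → 𝔊) (m : Subgroup 𝔊) : Prop :=
  IsIdealSG Γ m ∧ ¬ IsKneserIdeal η m ∧
    ∀ m' : Subgroup 𝔊, IsIdealSG Γ m' → ¬ IsKneserIdeal η m' → m ≤ m' → m' = m


open Pointwise

section KneserAux

set_option linter.unusedSectionVars false

variable {Γ 𝔊 : Type*} [Group Γ] [TopologicalSpace Γ] [IsTopologicalGroup Γ]
    [CompactSpace Γ] [Group 𝔊] [TopologicalSpace 𝔊] [IsTopologicalGroup 𝔊]
    [CompactSpace 𝔊] [T2Space 𝔊] [TotallyDisconnectedSpace 𝔊]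
    [MulDistribMulAction Γ 𝔊] [ContinuousSMul Γ 𝔊]

lemma kneserAux_mono (η : Γ → 𝔊) {a b : Subgroup 𝔊} (hab : a ≤ b)
    (ha : IsKneserIdeal η a) : IsKneserIdeal η b := by
  intro x
  obtain ⟨g, rfl⟩ := QuotientGroup.mk_surjective x
  obtain ⟨γ, hγ⟩ := ha (QuotientGroup.mk g)
  refine ⟨γ, ?_⟩
  simp only at hγ ⊢
  rw [QuotientGroup.eq] at hγ ⊢
  exact hab hγ

lemma kneserAux_exists_open_ideal_sub {U : Set 𝔊} (hU : IsOpen U) (h1 : (1:𝔊) ∈ U) :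
    ∃ N : Subgroup 𝔊, IsIdealSG Γ N ∧ IsOpen (N : Set 𝔊) ∧ (N : Set 𝔊) ⊆ U := by
  obtain ⟨W, hW, h1W, hWU⟩ := compact_exists_isClopen_in_isOpen hU h1
  obtain ⟨H, hHW⟩ := IsTopologicalGroup.exist_openNormalSubgroup_sub_clopen_nhds_of_one hW h1W
  set N : Subgroup 𝔊 := ⨅ γ : Γ, (H : Subgroup 𝔊).comap (MulDistribMulAction.toMonoidHom 𝔊 γ)
    with hNdef
  have memN : ∀ x : 𝔊, x ∈ N ↔ ∀ γ : Γ, γ • x ∈ (H : Subgroup 𝔊) := by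
    intro x
    simp [hNdef, Subgroup.mem_iInf, Subgroup.mem_comap]
  have hNsub : (N : Set 𝔊) ⊆ (H : Subgroup 𝔊) := by
    intro x hx
    have := (memN x).1 hx (1 : Γ)
    simpa using this
  -- N is open
  have hopen : IsOpen (N : Set 𝔊) := by
    have hn : IsOpen {p : Γ × 𝔊 | p.1 • p.2 ∈ (H : Subgroup 𝔊)} :=
      H.isOpen'.preimage continuous_smul
    obtain ⟨u, v, _, hv, hsu, h1v, huv⟩ := generalized_tube_lemma isCompact_univ
      isCompact_singleton hn (by
        rintro ⟨γ, x⟩ ⟨-, hx⟩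
        simp only [Set.mem_singleton_iff] at hx
        subst hx
        show γ • (1:𝔊) ∈ (H : Subgroup 𝔊)
        rw [smul_one]
        exact (H : Subgroup 𝔊).one_mem)
    apply Subgroup.isOpen_of_mem_nhds
    refine Filter.mem_of_superset (hv.mem_nhds (h1v rfl)) ?_
    intro x hx
    rw [SetLike.mem_coe, memN]
    intro γ
    exact huv (Set.mk_mem_prod (hsu (Set.mem_univ γ)) hx)
  refine ⟨N, ⟨N.isClosed_of_isOpen hopen, ?_, ?_⟩, hopen, fun x hx => hWU (hHW (hNsub hx))⟩
  · constructor
    intro n hn g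
    rw [memN] at hn ⊢
    intro γ
    have : γ • (g * n * g⁻¹) = (γ • g) * (γ • n) * (γ • g)⁻¹ := by
      rw [smul_mul', smul_mul', smul_inv']
    rw [this]
    exact H.isNormal'.conj_mem _ (hn γ) _
  · intro γ g hg
    rw [memN] at hg ⊢
    intro δ
    rw [smul_smul]
    exact hg (δ * γ)

lemma kneserAux_mem_ideal_of_forall_open (a : Subgroup 𝔊) (ha : IsIdealSG Γ a) (x : 𝔊)
    (hx : ∀ b : Subgroup 𝔊, IsIdealSG Γ b → IsOpen (b : Set 𝔊) → a ≤ b → x ∈ b) :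
    x ∈ a := by
  by_contra hxa
  have hU : IsOpen ((fun n : 𝔊 => x * n) ⁻¹' ((a : Set 𝔊)ᶜ)) :=
    (ha.1.isOpen_compl).preimage (continuous_mul_left x)
  have h1U : (1:𝔊) ∈ (fun n : 𝔊 => x * n) ⁻¹' ((a : Set 𝔊)ᶜ) := by
    simpa using hxa
  obtain ⟨N, hNI, hNopen, hNsub⟩ := kneserAux_exists_open_ideal_sub (Γ := Γ) hU h1U
  haveI : N.Normal := hNI.2.1
  haveI : a.Normal := ha.2.1
  -- b = a ⊔ N is an open ideal containing a, and x ∉ b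
  have hmem : ∀ y : 𝔊, y ∈ a ⊔ N ↔ y ∈ (a : Set 𝔊) * (N : Set 𝔊) := by
    intro y
    rw [← Subgroup.mul_normal a N]
    rfl
  have hbI : IsIdealSG Γ (a ⊔ N) := by
    refine ⟨?_, inferInstance, ?_⟩
    · exact (a ⊔ N).isClosed_of_isOpen (Subgroup.isOpen_mono le_sup_right hNopen)
    · intro γ g hg
      rw [hmem] at hg ⊢
      obtain ⟨h, hh, n, hn, rfl⟩ := hg
      exact ⟨γ • h, ha.2.2 γ h hh, γ • n, hNI.2.2 γ n hn, (smul_mul' γ h n).symm⟩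
  have hxb : x ∈ a ⊔ N := hx _ hbI (Subgroup.isOpen_mono le_sup_right hNopen) le_sup_left
  rw [hmem] at hxb
  obtain ⟨h, hh, n, hn, hx'⟩ := hxb
  have : n⁻¹ ∈ N := N.inv_mem hn
  have hcontra := hNsub this
  simp only [Set.mem_preimage, Set.mem_compl_iff, SetLike.mem_coe] at hcontra
  apply hcontra
  have : x * n⁻¹ = h := by rw [← hx']; group
  rwa [this]

lemma kneserAux_kneser_of_open (η : Γ → 𝔊) (hcont : Continuous η) (a : Subgroup 𝔊)
    (ha : IsIdealSG Γ a)
    (h : ∀ b : Subgroup 𝔊, IsIdealSG Γ b → IsOpen (b : Set 𝔊) → a ≤ b → IsKneserIdeal η b) :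
    IsKneserIdeal η a := by
  intro x
  obtain ⟨g, rfl⟩ := QuotientGroup.mk_surjective x
  let B := {b : Subgroup 𝔊 // IsIdealSG Γ b ∧ IsOpen (b : Set 𝔊) ∧ a ≤ b}
  haveI hBne : Nonempty B := ⟨⟨⊤, ⟨by simp, inferInstance, fun _ _ _ => trivial⟩,
    by simp, le_top⟩⟩
  let C : B → Set Γ := fun b => (fun γ => g⁻¹ * η γ) ⁻¹' (b.1 : Set 𝔊)
  have hCclosed : ∀ b : B, IsClosed (C b) := fun b =>
    (b.1.isClosed_of_isOpen b.2.2.1).preimage ((continuous_mul_left g⁻¹).comp hcont)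
  have hCne : ∀ b : B, (C b).Nonempty := by
    intro b
    obtain ⟨γ, hγ⟩ := h b.1 b.2.1 b.2.2.1 b.2.2.2 (QuotientGroup.mk g)
    simp only at hγ
    rw [QuotientGroup.eq] at hγ
    refine ⟨γ, ?_⟩
    show g⁻¹ * η γ ∈ b.1
    have := b.1.inv_mem hγ
    simpa [mul_inv_rev] using this
  have hCdir : Directed (· ⊇ ·) C := by
    intro b₁ b₂
    haveI := b₁.2.1.2.1
    haveI := b₂.2.1.2.1
    refine ⟨⟨b₁.1 ⊓ b₂.1, ⟨b₁.2.1.1.inter b₂.2.1.1, inferInstance,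
      fun γ g hg => ⟨b₁.2.1.2.2 γ g hg.1, b₂.2.1.2.2 γ g hg.2⟩⟩,
      by rw [Subgroup.coe_inf]; exact b₁.2.2.1.inter b₂.2.2.1,
      le_inf b₁.2.2.2 b₂.2.2.2⟩, ?_, ?_⟩
    · intro γ hγ; exact hγ.1
    · intro γ hγ; exact hγ.2
  obtain ⟨γ, hγ⟩ := IsCompact.nonempty_iInter_of_directed_nonempty_isCompact_isClosed
    C hCdir hCne (fun b => (hCclosed b).isCompact) hCclosed
  refine ⟨γ, ?_⟩
  simp only [Set.mem_iInter] at hγ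
  show QuotientGroup.mk (η γ) = QuotientGroup.mk g
  rw [QuotientGroup.eq]
  have hmem : g⁻¹ * η γ ∈ a := by
    apply kneserAux_mem_ideal_of_forall_open a ha
    intro b hbI hbO hab
    exact hγ ⟨b, hbI, hbO, hab⟩
  have := a.inv_mem hmem
  simpa [mul_inv_rev] using this

lemma kneserAux_finite_above (b : Subgroup 𝔊) (hbn : b.Normal) (hb : IsOpen (b : Set 𝔊)) :
    {K : Subgroup 𝔊 | b ≤ K}.Finite := by
  haveI := hbn
  haveI : Finite (𝔊 ⧸ b) := b.quotient_finite_of_isOpen hb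
  haveI : Finite (Subgroup (𝔊 ⧸ b)) :=
    Finite.of_injective (fun K : Subgroup (𝔊 ⧸ b) => (K : Set (𝔊 ⧸ b))) SetLike.coe_injective
  apply Set.Finite.of_finite_image (f := fun K : Subgroup 𝔊 => K.map (QuotientGroup.mk' b))
  · exact Set.toFinite _
  · intro K₁ h₁ K₂ h₂ hK
    have e : ∀ K : Subgroup 𝔊, b ≤ K →
        (K.map (QuotientGroup.mk' b)).comap (QuotientGroup.mk' b) = K := by
      intro K hK
      rw [Subgroup.comap_map_eq, QuotientGroup.ker_mk', sup_eq_left.mpr hK]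
    rw [← e K₁ h₁, ← e K₂ h₂]
    exact congrArg _ hK

end KneserAux

/-- **Abstract Kneser criterion.**  For a generating cocycle `η : Γ → 𝔊`, every ideal of `𝔊`
maximal among the non-Kneser ideals is open, and an ideal `a` of `𝔊` is a Kneser ideal if and
only if `a` is not contained in any such maximal non-Kneser ideal. -/
theorem abstract_kneser_criterion
    {Γ 𝔊 : Type*} [Group Γ] [TopologicalSpace Γ] [IsTopologicalGroup Γ]
    [CompactSpace Γ] [T2Space Γ] [TotallyDisconnectedSpace Γ]
    [Group 𝔊] [TopologicalSpace 𝔊] [IsTopologicalGroup 𝔊]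
    [CompactSpace 𝔊] [T2Space 𝔊] [TotallyDisconnectedSpace 𝔊]
    [MulDistribMulAction Γ 𝔊] [ContinuousSMul Γ 𝔊]
    (η : Γ → 𝔊) (hcont : Continuous η)
    (hcoc : ∀ σ τ : Γ, η (σ * τ) = η σ * σ • η τ)
    (hgen : (Subgroup.closure (Set.range η)).topologicalClosure = ⊤) :
    (∀ m : Subgroup 𝔊, IsMaxNonKneserIdeal Γ η m → IsOpen (m : Set 𝔊)) ∧
    (∀ a : Subgroup 𝔊, IsIdealSG Γ a →
      (IsKneserIdeal η a ↔ ∀ m : Subgroup 𝔊, IsMaxNonKneserIdeal Γ η m → ¬ a ≤ m)) := by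
  have key : ∀ a : Subgroup 𝔊, IsIdealSG Γ a → ¬ IsKneserIdeal η a →
      ∃ b : Subgroup 𝔊, IsIdealSG Γ b ∧ IsOpen (b : Set 𝔊) ∧ a ≤ b ∧ ¬ IsKneserIdeal η b := by
    intro a haI haNK
    by_contra hcon
    push_neg at hcon
    exact haNK (kneserAux_kneser_of_open η hcont a haI fun b hbI hbO hab =>
      hcon b hbI hbO hab)
  constructor
  · intro m hm
    obtain ⟨hmI, hmNK, hmMax⟩ := hm
    obtain ⟨b, hbI, hbO, hmb, hbNK⟩ := key m hmI hmNK
    rw [← hmMax b hbI hbNK hmb]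
    exact hbO
  · intro a haI
    constructor
    · intro haK m hm ham
      exact hm.2.1 (kneserAux_mono η ham haK)
    · intro h
      by_contra haNK
      obtain ⟨b, hbI, hbO, hab, hbNK⟩ := key a haI haNK
      have hfin : {K : Subgroup 𝔊 | IsIdealSG Γ K ∧ ¬ IsKneserIdeal η K ∧ b ≤ K}.Finite :=
        (kneserAux_finite_above b hbI.2.1 hbO).subset (fun K hK => hK.2.2)
      obtain ⟨m, hmS, hmax⟩ := Set.Finite.exists_maximalFor id _ hfin
        ⟨b, hbI, hbNK, le_refl b⟩
      have hmmax : IsMaxNonKneserIdeal Γ η m := by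
        refine ⟨hmS.1, hmS.2.1, fun m' hI hNK hle => ?_⟩
        exact le_antisymm (hmax ⟨hI, hNK, le_trans hmS.2.2 hle⟩ hle) hle
      exact h m hmmax (le_trans hab hmS.2.2)
end

section
/- Let η : Γ → 𝔊 be a generating cocycle and call an ideal a of 𝔊 coGalois if the induced triple (Γ, 𝔊/a, η_a) is a coGalois triple. Then: (1) if a is a coGalois ideal then every ideal containing a is coGalois, and every coGalois ideal is a Kneser ideal; (2) an ideal a is coGalois if and only if every open ideal b of 𝔊 containing a is coGalois; (3) every coGalois ideal of 𝔊 contains a minimal coGalois ideal (minimal with respect to inclusion among coGalois ideals). -/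
/-- `(Γ, 𝔊', η')` is a *coGalois triple* if `η'` is surjective and the operators `J'` and
`S'` are mutually inverse between the closed subgroups of `Γ` containing `ker η'` and the
ideals of `𝔊'`. -/
def IsCoGaloisTriple (Γ : Type*) (𝔊' : Type*) [Group Γ] [TopologicalSpace Γ]
    [Group 𝔊'] [TopologicalSpace 𝔊'] [SMul Γ 𝔊'] (η : Γ → 𝔊') : Prop :=
  Function.Surjective η ∧
  (∀ Λ : Subgroup Γ, IsClosed (Λ : Set Γ) → (∀ γ : Γ, η γ = 1 → γ ∈ Λ) →
      η ⁻¹' ((cogalJ Γ η (Λ : Set Γ) : Subgroup 𝔊') : Set 𝔊') = (Λ : Set Γ)) ∧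
  (∀ a : Subgroup 𝔊', IsIdealSG Γ a → cogalJ Γ η (η ⁻¹' (a : Set 𝔊')) = a)

def quotSMul {Γ 𝔊 : Type*} [Group Γ] [Group 𝔊] [MulDistribMulAction Γ 𝔊]
    (a : Subgroup 𝔊) (hinv : ∀ (γ : Γ) (g : 𝔊), g ∈ a → γ • g ∈ a) :
    SMul Γ (𝔊 ⧸ a) :=
  ⟨fun γ => Quotient.map' (fun g => γ • g) (by
    intro g₁ g₂ h
    rw [QuotientGroup.leftRel_apply] at h ⊢
    have := hinv γ _ h
    rwa [smul_mul', smul_inv'] at this)⟩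

/-- An ideal `a` of `𝔊` is a *coGalois ideal* (w.r.t. `η`) if the induced triple
`(Γ, 𝔊/a, η_a)` is a coGalois triple. -/
def IsCoGaloisIdeal {Γ 𝔊 : Type*} [Group Γ] [TopologicalSpace Γ]
    [Group 𝔊] [TopologicalSpace 𝔊] [MulDistribMulAction Γ 𝔊] (η : Γ → 𝔊)
    (a : Subgroup 𝔊) (hn : a.Normal)
    (hinv : ∀ (γ : Γ) (g : 𝔊), g ∈ a → γ • g ∈ a) : Prop :=
  letI := hn
  letI := quotSMul a hinv
  IsCoGaloisTriple Γ (𝔊 ⧸ a) (fun γ : Γ => (QuotientGroup.mk (η γ) : 𝔊 ⧸ a))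

/-! ### Auxiliary development -/
set_option linter.unusedSectionVars false

section Aux

variable {Γ 𝔊 : Type*} [Group Γ] [TopologicalSpace Γ]
  [Group 𝔊] [TopologicalSpace 𝔊] [MulDistribMulAction Γ 𝔊]

/-- The family of ideals of `𝔊` containing `a` and `η '' Λ`. -/
def JFam (η : Γ → 𝔊) (a : Subgroup 𝔊) (Λ : Subgroup Γ) : Set (Subgroup 𝔊) :=
  {c : Subgroup 𝔊 | IsIdealSG Γ c ∧ a ≤ c ∧ ∀ δ ∈ Λ, η δ ∈ c}

/-- The smallest ideal of `𝔊` containing `a` and `η '' Λ`. -/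
def Jset (η : Γ → 𝔊) (a : Subgroup 𝔊) (Λ : Subgroup Γ) : Subgroup 𝔊 :=
  sInf (JFam η a Λ)

/-- The translation of `IsCoGaloisIdeal` to data purely about `𝔊`. -/
def CoGalP (η : Γ → 𝔊) (a : Subgroup 𝔊) : Prop :=
  (∀ g : 𝔊, ∃ γ : Γ, (η γ)⁻¹ * g ∈ a) ∧
  ∀ Λ : Subgroup Γ, IsClosed (Λ : Set Γ) → (∀ γ : Γ, η γ ∈ a → γ ∈ Λ) →
    ∀ γ : Γ, η γ ∈ Jset η a Λ → γ ∈ Λ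

theorem le_Jset (η : Γ → 𝔊) (a : Subgroup 𝔊) (Λ : Subgroup Γ) : a ≤ Jset η a Λ :=
  le_sInf fun _ hc => hc.2.1

theorem eta_mem_Jset (η : Γ → 𝔊) (a : Subgroup 𝔊) {Λ : Subgroup Γ} {δ : Γ} (hδ : δ ∈ Λ) :
    η δ ∈ Jset η a Λ :=
  Subgroup.mem_sInf.2 fun _ hc => hc.2.2 δ hδ

theorem isIdealSG_top : IsIdealSG Γ (⊤ : Subgroup 𝔊) :=
  ⟨isClosed_univ, inferInstance, fun _ _ _ => trivial⟩

theorem IsIdealSG.inf {a b : Subgroup 𝔊} (ha : IsIdealSG Γ a) (hb : IsIdealSG Γ b) :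
    IsIdealSG Γ (a ⊓ b) := by
  refine ⟨?_, ?_, ?_⟩
  · exact ha.1.inter hb.1
  · haveI := ha.2.1; haveI := hb.2.1
    infer_instance
  · intro γ g hg
    exact ⟨ha.2.2 γ g hg.1, hb.2.2 γ g hg.2⟩

theorem isIdealSG_sInf {S : Set (Subgroup 𝔊)} (h : ∀ c ∈ S, IsIdealSG Γ c) :
    IsIdealSG Γ (sInf S) := by
  refine ⟨?_, ⟨?_⟩, ?_⟩
  · rw [Subgroup.coe_sInf]
    exact isClosed_biInter fun c hc => (h c hc).1
  · intro n hn g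
    rw [Subgroup.mem_sInf] at hn ⊢
    intro c hc
    exact (h c hc).2.1.conj_mem n (hn c hc) g
  · intro γ g hg
    rw [Subgroup.mem_sInf] at hg ⊢
    intro c hc
    exact (h c hc).2.2 γ g (hg c hc)

theorem isIdealSG_Jset (η : Γ → 𝔊) (a : Subgroup 𝔊) (Λ : Subgroup Γ) :
    IsIdealSG Γ (Jset η a Λ) := by
  refine ⟨?_, ⟨?_⟩, ?_⟩
  · rw [Jset, Subgroup.coe_sInf]
    exact isClosed_biInter fun c hc => hc.1.1
  · intro n hn g
    rw [Jset, Subgroup.mem_sInf] at hn ⊢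
    intro c hc
    exact hc.1.2.1.conj_mem n (hn c hc) g
  · intro γ g hg
    rw [Jset, Subgroup.mem_sInf] at hg ⊢
    intro c hc
    exact hc.1.2.2 γ g (hg c hc)

/-- Upward closedness of `CoGalP`. -/
theorem CoGalP.mono {η : Γ → 𝔊} {a b : Subgroup 𝔊} (hab : a ≤ b) (hPa : CoGalP η a) :
    CoGalP η b := by
  constructor
  · intro g
    obtain ⟨γ, h⟩ := hPa.1 g
    exact ⟨γ, hab h⟩
  · intro Λ hΛc hΛk γ hγ
    have hbJ : b ≤ Jset η a Λ := by
      intro x hx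
      obtain ⟨γ', hγ'⟩ := hPa.1 x
      have h1 : η γ' ∈ b := by
        have hx' : ((η γ')⁻¹ * x)⁻¹ ∈ b := (b.inv_mem_iff).2 (hab hγ')
        have : x * ((η γ')⁻¹ * x)⁻¹ = η γ' := by group
        exact this ▸ b.mul_mem hx hx'
      have h3 : η γ' ∈ Jset η a Λ := eta_mem_Jset η a (hΛk γ' h1)
      have hxeq : η γ' * ((η γ')⁻¹ * x) = x := by group
      exact hxeq ▸ (Jset η a Λ).mul_mem h3 (le_Jset η a Λ hγ')
    have hJle : Jset η b Λ ≤ Jset η a Λ :=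
      sInf_le ⟨isIdealSG_Jset η a Λ, hbJ, fun δ hδ => eta_mem_Jset η a hδ⟩
    exact hPa.2 Λ hΛc (fun γ'' h'' => hΛk γ'' (hab h'')) γ (hJle hγ)

end Aux

section Topo
open Pointwise
set_option linter.unusedSectionVars false

variable {G : Type*} [Group G] [TopologicalSpace G] [IsTopologicalGroup G]
  [CompactSpace G] [T2Space G] [TotallyDisconnectedSpace G]

theorem exists_openNormal_subset {U : Set G} (hU : IsOpen U) (h1 : (1:G) ∈ U) :
    ∃ N : Subgroup G, N.Normal ∧ IsOpen (N : Set G) ∧ (N : Set G) ⊆ U := by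
  obtain ⟨V, hV, h1V, hVU⟩ := compact_exists_isClopen_in_isOpen hU h1
  obtain ⟨H, hH⟩ := IsTopologicalGroup.exist_openNormalSubgroup_sub_clopen_nhds_of_one hV h1V
  exact ⟨H.toSubgroup, H.isNormal', H.toOpenSubgroup.isOpen, fun x hx => hVU (hH hx)⟩

/-- In a profinite group with a continuous action of a compact group `Γ`, every open
neighbourhood of `1` contains an open ideal. -/
theorem exists_openIdeal_subset {Γ : Type*} [Group Γ] [TopologicalSpace Γ] [CompactSpace Γ]
    [MulDistribMulAction Γ G] [ContinuousSMul Γ G]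
    {U : Set G} (hU : IsOpen U) (h1 : (1:G) ∈ U) :
    ∃ N : Subgroup G, IsIdealSG Γ N ∧ IsOpen (N : Set G) ∧ (N : Set G) ⊆ U := by
  obtain ⟨N₀, hN₀norm, hN₀open, hN₀U⟩ := exists_openNormal_subset hU h1
  -- tube lemma to find an open `V ∋ 1` with `Γ • V ⊆ N₀`
  have hWopen : IsOpen ((fun p : Γ × G => p.1 • p.2) ⁻¹' (N₀ : Set G)) :=
    hN₀open.preimage continuous_smul
  have hsub : (Set.univ : Set Γ) ×ˢ ({1} : Set G) ⊆ (fun p : Γ × G => p.1 • p.2) ⁻¹' N₀ := by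
    rintro ⟨γ, g⟩ ⟨-, hg⟩
    simp only [Set.mem_singleton_iff] at hg
    subst hg
    show γ • (1:G) ∈ N₀
    simpa [smul_one] using N₀.one_mem
  obtain ⟨u, v, hu, hv, huniv, h1v, huv⟩ :=
    generalized_tube_lemma isCompact_univ isCompact_singleton hWopen hsub
  -- the invariant core
  set N : Subgroup G :=
    { carrier := {g : G | ∀ γ : Γ, γ • g ∈ N₀}
      one_mem' := fun γ => by simpa [smul_one] using N₀.one_mem
      mul_mem' := fun {x y} hx hy γ => by
        rw [smul_mul']; exact N₀.mul_mem (hx γ) (hy γ)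
      inv_mem' := fun {x} hx γ => by
        rw [smul_inv']; exact N₀.inv_mem (hx γ) } with hNdef
  have hmem : ∀ g : G, g ∈ N ↔ ∀ γ : Γ, γ • g ∈ N₀ := fun g => Iff.rfl
  have hvN : v ⊆ (N : Set G) := by
    intro g hg γ
    exact huv (Set.mk_mem_prod (huniv (Set.mem_univ γ)) hg)
  have hNopen : IsOpen (N : Set G) :=
    Subgroup.isOpen_of_mem_nhds N (Filter.mem_of_superset (hv.mem_nhds (h1v rfl)) hvN)
  have hNU : (N : Set G) ⊆ U := by
    intro g hg
    have := hg (1 : Γ)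
    rw [one_smul] at this
    exact hN₀U this
  refine ⟨N, ⟨N.isClosed_of_isOpen hNopen, ⟨?_⟩, ?_⟩, hNopen, hNU⟩
  · intro n hn g γ
    have : γ • (g * n * g⁻¹) = (γ • g) * (γ • n) * (γ • g)⁻¹ := by
      rw [smul_mul', smul_mul', smul_inv']
    rw [this]
    exact hN₀norm.conj_mem _ (hn γ) _
  · intro γ g hg δ
    rw [smul_smul]
    exact hg (δ * γ)

/-- Separating a point from a closed subgroup by an open subgroup of the form `K ⊔ N`. -/
theorem exists_avoid_nhd (K : Subgroup G) (hK : IsClosed (K : Set G)) {x : G} (hx : x ∉ K) :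
    ∃ U : Set G, IsOpen U ∧ (1:G) ∈ U ∧
      ∀ N : Subgroup G, N.Normal → (N : Set G) ⊆ U → x ∉ K ⊔ N := by
  have hD : IsClosed ((fun k => k⁻¹ * x) '' (K : Set G)) := by
    have : IsCompact ((fun k : G => k⁻¹ * x) '' (K : Set G)) :=
      (hK.isCompact.image (by continuity))
    exact this.isClosed
  have h1D : (1:G) ∉ (fun k => k⁻¹ * x) '' (K : Set G) := by
    rintro ⟨k, hk, hk1⟩
    have hxk : x = k := by
      have h2 := congrArg (fun y => k * y) hk1
      simpa [← mul_assoc] using h2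
    exact hx (hxk ▸ hk)
  refine ⟨((fun k => k⁻¹ * x) '' (K : Set G))ᶜ, hD.isOpen_compl, h1D, ?_⟩
  intro N hNnorm hNsub hmem
  haveI := hNnorm
  have hset : x ∈ (K : Set G) * (N : Set G) := by
    rw [← Subgroup.mul_normal K N]
    exact hmem
  obtain ⟨k, hk, n, hn, hkn⟩ := hset
  have : n ∈ ((fun k => k⁻¹ * x) '' (K : Set G)) := ⟨k, hk, by rw [← hkn]; group⟩
  exact hNsub hn this

end Topo

section Sep
open Pointwise
set_option linter.unusedSectionVars false

variable {Γ G : Type*} [Group Γ] [TopologicalSpace Γ] [IsTopologicalGroup Γ] [CompactSpace Γ]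
  [T2Space Γ] [TotallyDisconnectedSpace Γ]
  [Group G] [TopologicalSpace G] [IsTopologicalGroup G]
  [CompactSpace G] [T2Space G] [TotallyDisconnectedSpace G]
  [MulDistribMulAction Γ G] [ContinuousSMul Γ G]

theorem IsIdealSG.sup {a N : Subgroup G} (ha : IsIdealSG Γ a) (hN : IsIdealSG Γ N)
    (hNopen : IsOpen (N : Set G)) : IsIdealSG Γ (a ⊔ N) ∧ IsOpen ((a ⊔ N : Subgroup G) : Set G) := by
  haveI := ha.2.1; haveI := hN.2.1
  have hopen : IsOpen ((a ⊔ N : Subgroup G) : Set G) :=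
    Subgroup.isOpen_mono le_sup_right hNopen
  refine ⟨⟨(a ⊔ N).isClosed_of_isOpen hopen, Subgroup.sup_normal a N, ?_⟩, hopen⟩
  intro γ g hg
  have hset : g ∈ (a : Set G) * (N : Set G) := by
    rw [← Subgroup.mul_normal a N]; exact hg
  obtain ⟨k, hk, n, hn, rfl⟩ := hset
  rw [smul_mul']
  exact Subgroup.mul_mem _ ((le_sup_left : a ≤ a ⊔ N) (ha.2.2 γ k hk))
    ((le_sup_right : N ≤ a ⊔ N) (hN.2.2 γ n hn))

/-- Separation of a point from a closed ideal by an open ideal. -/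
theorem exists_open_ideal_avoid {a : Subgroup G} (ha : IsIdealSG Γ a) {x : G} (hx : x ∉ a) :
    ∃ b : Subgroup G, IsIdealSG Γ b ∧ IsOpen (b : Set G) ∧ a ≤ b ∧ x ∉ b := by
  obtain ⟨U, hUopen, h1U, hU⟩ := exists_avoid_nhd a ha.1 hx
  obtain ⟨N, hNideal, hNopen, hNU⟩ := exists_openIdeal_subset (Γ := Γ) hUopen h1U
  obtain ⟨hideal, hopen⟩ := ha.sup hNideal hNopen
  exact ⟨a ⊔ N, hideal, hopen, le_sup_left, hU N hNideal.2.1 hNU⟩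

/-- Separation of a point from a closed subgroup by an open subgroup. -/
theorem exists_open_subgroup_avoid {Λ : Subgroup Γ} (hΛ : IsClosed (Λ : Set Γ)) {x : Γ}
    (hx : x ∉ Λ) : ∃ M : Subgroup Γ, IsOpen (M : Set Γ) ∧ Λ ≤ M ∧ x ∉ M := by
  obtain ⟨U, hUopen, h1U, hU⟩ := exists_avoid_nhd Λ hΛ hx
  obtain ⟨N, hNnorm, hNopen, hNU⟩ := exists_openNormal_subset hUopen h1U
  exact ⟨Λ ⊔ N, Subgroup.isOpen_mono le_sup_right hNopen, le_sup_left, hU N hNnorm hNU⟩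

end Sep

section Main
set_option linter.unusedSectionVars false

variable {Γ 𝔊 : Type*} [Group Γ] [TopologicalSpace Γ] [IsTopologicalGroup Γ]
  [CompactSpace Γ] [T2Space Γ] [TotallyDisconnectedSpace Γ]
  [Group 𝔊] [TopologicalSpace 𝔊] [IsTopologicalGroup 𝔊]
  [CompactSpace 𝔊] [T2Space 𝔊] [TotallyDisconnectedSpace 𝔊]
  [MulDistribMulAction Γ 𝔊] [ContinuousSMul Γ 𝔊]

theorem mem_of_forall_openIdeal {a : Subgroup 𝔊} (ha : IsIdealSG Γ a) {x : 𝔊}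
    (h : ∀ b : Subgroup 𝔊, IsIdealSG Γ b → a ≤ b → IsOpen (b : Set 𝔊) → x ∈ b) : x ∈ a := by
  by_contra hx
  obtain ⟨b, hb1, hb2, hb3, hb4⟩ := exists_open_ideal_avoid ha hx
  exact hb4 (h b hb1 hb3 hb2)

theorem coGalP_of_forall_open {η : Γ → 𝔊} (hcont : Continuous η) {a : Subgroup 𝔊}
    (ha : IsIdealSG Γ a)
    (h : ∀ b : Subgroup 𝔊, IsIdealSG Γ b → a ≤ b → IsOpen (b : Set 𝔊) → CoGalP η b) :
    CoGalP η a := by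
  let ι := {b : Subgroup 𝔊 // IsIdealSG Γ b ∧ a ≤ b ∧ IsOpen (b : Set 𝔊)}
  have hb₀ : ∀ u : Finset ι,
      IsIdealSG Γ (u.inf fun i => i.1) ∧ a ≤ (u.inf fun i => i.1) ∧
        IsOpen ((u.inf fun i => i.1 : Subgroup 𝔊) : Set 𝔊) := by
    intro u
    refine Finset.inf_induction (p := fun b : Subgroup 𝔊 => IsIdealSG Γ b ∧ a ≤ b ∧ IsOpen (b : Set 𝔊))
      ⟨isIdealSG_top, le_top, isOpen_univ⟩ ?_ ?_
    · rintro b₁ ⟨h1, h2, h3⟩ b₂ ⟨h1', h2', h3'⟩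
      refine ⟨h1.inf h1', le_inf h2 h2', ?_⟩
      rw [Subgroup.coe_inf]
      exact h3.inter h3'
    · exact fun i _ => i.2
  constructor
  · -- surjectivity
    intro g
    by_contra hg
    push_neg at hg
    have hempty : (Set.univ : Set Γ) ∩ ⋂ i : ι, {γ : Γ | (η γ)⁻¹ * g ∈ i.1} = ∅ := by
      rw [Set.eq_empty_iff_forall_notMem]
      rintro γ ⟨-, hγ⟩
      rw [Set.mem_iInter] at hγ
      exact hg γ (mem_of_forall_openIdeal ha fun b h1 h2 h3 => hγ ⟨b, h1, h2, h3⟩)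
    obtain ⟨u, hu⟩ := isCompact_univ.elim_finite_subfamily_closed
      (t := fun i : ι => {γ : Γ | (η γ)⁻¹ * g ∈ i.1})
      (fun i : ι => (i.1.isClosed_of_isOpen i.2.2.2).preimage
        (by continuity : Continuous fun γ : Γ => (η γ)⁻¹ * g)) hempty
    obtain ⟨γ, hγ⟩ := (h _ (hb₀ u).1 (hb₀ u).2.1 (hb₀ u).2.2).1 g
    have : γ ∈ (Set.univ : Set Γ) ∩ ⋂ i ∈ u, {γ : Γ | (η γ)⁻¹ * g ∈ i.1} := by
      refine ⟨trivial, ?_⟩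
      rw [Set.mem_iInter₂]
      exact fun i hi => (Finset.inf_le hi : u.inf (fun i => i.1) ≤ i.1) hγ
    rw [hu] at this
    exact this
  · -- the second condition
    intro Λ hΛc hΛk γ₀ hγ₀
    by_contra hγΛ
    obtain ⟨M, hMopen, hΛM, hγM⟩ := exists_open_subgroup_avoid hΛc hγΛ
    have hempty : ((M : Set Γ))ᶜ ∩ ⋂ i : ι, η ⁻¹' (i.1 : Set 𝔊) = ∅ := by
      rw [Set.eq_empty_iff_forall_notMem]
      rintro γ ⟨hγM', hγ⟩
      rw [Set.mem_iInter] at hγ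
      have : η γ ∈ a := mem_of_forall_openIdeal ha fun b h1 h2 h3 => hγ ⟨b, h1, h2, h3⟩
      exact hγM' (hΛM (hΛk γ this))
    obtain ⟨u, hu⟩ := (hMopen.isClosed_compl.isCompact).elim_finite_subfamily_closed
      (t := fun i : ι => η ⁻¹' (i.1 : Set 𝔊))
      (fun i : ι => i.2.1.1.preimage hcont) hempty
    have hb₀M : ∀ γ : Γ, η γ ∈ u.inf (fun i => i.1) → γ ∈ M := by
      intro γ hγ
      by_contra hγM'
      have : γ ∈ ((M : Set Γ))ᶜ ∩ ⋂ i ∈ u, η ⁻¹' (i.1 : Set 𝔊) := by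
        refine ⟨hγM', ?_⟩
        rw [Set.mem_iInter₂]
        exact fun i hi => (Finset.inf_le hi : u.inf (fun i => i.1) ≤ i.1) hγ
      rw [hu] at this
      exact this
    have hP := h _ (hb₀ u).1 (hb₀ u).2.1 (hb₀ u).2.2
    have hJle : Jset η a Λ ≤ Jset η (u.inf fun i => i.1) M := by
      refine le_sInf fun c hc => sInf_le ?_
      exact ⟨hc.1, le_trans (hb₀ u).2.1 hc.2.1, fun δ hδ => hc.2.2 δ (hΛM hδ)⟩
    exact hγM (hP.2 M (M.isClosed_of_isOpen hMopen) hb₀M γ₀ (hJle hγ₀))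

end Main

section Zorn
set_option linter.unusedSectionVars false

variable {Γ 𝔊 : Type*} [Group Γ] [TopologicalSpace Γ] [IsTopologicalGroup Γ]
  [CompactSpace Γ] [T2Space Γ] [TotallyDisconnectedSpace Γ]
  [Group 𝔊] [TopologicalSpace 𝔊] [IsTopologicalGroup 𝔊]
  [CompactSpace 𝔊] [T2Space 𝔊] [TotallyDisconnectedSpace 𝔊]
  [MulDistribMulAction Γ 𝔊] [ContinuousSMul Γ 𝔊]

open scoped Classical in
theorem exists_minimal_coGalP {η : Γ → 𝔊} (hcont : Continuous η) {a : Subgroup 𝔊}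
    (ha : IsIdealSG Γ a) (hP : CoGalP η a) :
    ∃ m : Subgroup 𝔊, (IsIdealSG Γ m ∧ CoGalP η m) ∧ m ≤ a ∧
      ∀ m' : Subgroup 𝔊, IsIdealSG Γ m' → CoGalP η m' → m' ≤ m → m' = m := by
  set S : Set (Subgroup 𝔊)ᵒᵈ :=
    {m | IsIdealSG Γ (OrderDual.ofDual m) ∧ CoGalP η (OrderDual.ofDual m) ∧
      OrderDual.ofDual m ≤ a} with hSdef
  have hzorn := zorn_le_nonempty₀ S ?_ (OrderDual.toDual a) ⟨ha, hP, le_rfl⟩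
  · obtain ⟨m, ham, hmax⟩ := hzorn
    refine ⟨OrderDual.ofDual m, ⟨hmax.1.1, hmax.1.2.1⟩, ham, ?_⟩
    intro m' hm'i hm'P hm'le
    have hm'S : OrderDual.toDual m' ∈ S := ⟨hm'i, hm'P, le_trans hm'le ham⟩
    have := hmax.2 hm'S (show m ≤ OrderDual.toDual m' from hm'le)
    exact le_antisymm hm'le this
  · -- chains have lower bounds
    intro c hcS hchain y hyc
    set C : Set (Subgroup 𝔊) := {m | OrderDual.toDual m ∈ c} with hCdef
    have hCchain : ∀ x ∈ C, ∀ z ∈ C, x ≤ z ∨ z ≤ x := by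
      intro x hx z hz
      rcases eq_or_ne x z with rfl | hne
      · exact Or.inl le_rfl
      · rcases hchain hx hz (fun h => hne (congrArg OrderDual.ofDual h)) with h | h
        · exact Or.inr h
        · exact Or.inl h
    have hCideal : ∀ x ∈ C, IsIdealSG Γ x ∧ CoGalP η x ∧ x ≤ a := fun x hx => hcS hx
    set mI : Subgroup 𝔊 := sInf C with hminf
    have hmIle : ∀ x ∈ C, mI ≤ x := fun x hx => sInf_le hx
    have hmIideal : IsIdealSG Γ mI := isIdealSG_sInf fun x hx => (hCideal x hx).1
    -- every open ideal containing `mI` contains a member of the chain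
    have hkey : ∀ b : Subgroup 𝔊, IsOpen (b : Set 𝔊) → mI ≤ b → ∃ x ∈ C, x ≤ b := by
      intro b hbopen hmIb
      have hempty : ((b : Set 𝔊))ᶜ ∩ ⋂ i : C, (i.1 : Set 𝔊) = ∅ := by
        rw [Set.eq_empty_iff_forall_notMem]
        rintro x ⟨hxb, hx⟩
        rw [Set.mem_iInter] at hx
        have : x ∈ mI := Subgroup.mem_sInf.2 fun p hp => hx ⟨p, hp⟩
        exact hxb (hmIb this)
      obtain ⟨u, hu⟩ := (hbopen.isClosed_compl.isCompact).elim_finite_subfamily_closed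
        (t := fun i : C => (i.1 : Set 𝔊))
        (fun i : C => (hCideal i.1 i.2).1.1) hempty
      rcases u.eq_empty_or_nonempty with rfl | hune
      · refine ⟨OrderDual.ofDual y, hyc, ?_⟩
        intro x hx
        by_contra hxb
        have : x ∈ ((b : Set 𝔊))ᶜ ∩ ⋂ i ∈ (∅ : Finset C), (i.1 : Set 𝔊) := by
          refine ⟨hxb, ?_⟩
          simp
        rw [hu] at this
        exact this
      · -- find the least element of the finite subfamily
        obtain ⟨m₀, hm₀mem, hm₀min⟩ := u.exists_minimal hune
        have hm₀C : (m₀ : Subgroup 𝔊) ∈ C := m₀.2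
        have hm₀le : ∀ i : C, i ∈ u → (m₀ : Subgroup 𝔊) ≤ i.1 := by
          intro i hiu
          rcases hCchain m₀.1 hm₀C i.1 i.2 with h | h
          · exact h
          · rcases eq_or_ne i.1 m₀.1 with heq | hne
            · exact heq.ge
            · exact hm₀min hiu h
        refine ⟨(m₀ : Subgroup 𝔊), hm₀C, ?_⟩
        intro x hx
        by_contra hxb
        have : x ∈ ((b : Set 𝔊))ᶜ ∩ ⋂ i ∈ u, (i.1 : Set 𝔊) := by
          refine ⟨hxb, ?_⟩
          rw [Set.mem_iInter₂]
          exact fun i hiu => hm₀le i hiu hx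
        rw [hu] at this
        exact this
    have hmIP : CoGalP η mI := by
      refine coGalP_of_forall_open hcont hmIideal ?_
      intro b hbi hab hbopen
      obtain ⟨x, hxC, hxb⟩ := hkey b hbopen hab
      exact CoGalP.mono hxb (hCideal x hxC).2.1
    refine ⟨OrderDual.toDual mI, ⟨hmIideal, hmIP, ?_⟩, fun z hz => hmIle _ hz⟩
    exact le_trans (hmIle _ hyc) (hcS hyc).2.2
end Zorn

section Trans
set_option linter.unusedSectionVars false

variable {Γ 𝔊 : Type*} [Group Γ] [TopologicalSpace Γ]
  [Group 𝔊] [TopologicalSpace 𝔊] [IsTopologicalGroup 𝔊] [MulDistribMulAction Γ 𝔊]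

/-- The third condition in `IsCoGaloisTriple` follows from surjectivity alone. -/
theorem cogalJ_preimage {G' : Type*} [Group G'] [TopologicalSpace G'] [SMul Γ G']
    (η' : Γ → G') (hs : Function.Surjective η') (b : Subgroup G') (hb : IsIdealSG Γ b) :
    cogalJ Γ η' (η' ⁻¹' (b : Set G')) = b := by
  apply le_antisymm
  · exact sInf_le ⟨hb, fun γ hγ => hγ⟩
  · refine le_sInf fun c hc => ?_
    intro x hx
    obtain ⟨γ, rfl⟩ := hs x
    exact hc.2 γ hx

theorem isCoGaloisIdeal_iff_coGalP (η : Γ → 𝔊) (a : Subgroup 𝔊) (ha : IsIdealSG Γ a) :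
    IsCoGaloisIdeal η a ha.2.1 ha.2.2 ↔ CoGalP η a := by
  letI := ha.2.1
  letI := quotSMul a ha.2.2
  have hsmul : ∀ (γ : Γ) (g : 𝔊),
      γ • (QuotientGroup.mk g : 𝔊 ⧸ a) = QuotientGroup.mk (γ • g) := fun γ g => rfl
  show IsCoGaloisTriple Γ (𝔊 ⧸ a) (fun γ : Γ => (QuotientGroup.mk (η γ) : 𝔊 ⧸ a)) ↔ CoGalP η a
  have hsurj : Function.Surjective (fun γ : Γ => (QuotientGroup.mk (η γ) : 𝔊 ⧸ a)) ↔
      ∀ g : 𝔊, ∃ γ : Γ, (η γ)⁻¹ * g ∈ a := by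
    constructor
    · intro hs g
      obtain ⟨γ, hγ⟩ := hs (QuotientGroup.mk g)
      exact ⟨γ, QuotientGroup.eq.mp hγ⟩
    · intro hs q
      obtain ⟨g, rfl⟩ := QuotientGroup.mk_surjective q
      obtain ⟨γ, hγ⟩ := hs g
      exact ⟨γ, QuotientGroup.eq.mpr hγ⟩
  have hkey : ∀ (Λ : Subgroup Γ) (g : 𝔊),
      (QuotientGroup.mk g : 𝔊 ⧸ a) ∈
          cogalJ Γ (fun γ : Γ => (QuotientGroup.mk (η γ) : 𝔊 ⧸ a)) (Λ : Set Γ)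
        ↔ g ∈ Jset η a Λ := by
    intro Λ g
    constructor
    · intro hg
      rw [Jset, Subgroup.mem_sInf]
      intro c hc
      have hsat : QuotientGroup.mk ⁻¹'
          ((Subgroup.map (QuotientGroup.mk' a) c : Subgroup (𝔊 ⧸ a)) : Set (𝔊 ⧸ a))
            = (c : Set 𝔊) := by
        ext x
        simp only [Set.mem_preimage, SetLike.mem_coe, Subgroup.mem_map]
        constructor
        · rintro ⟨y, hy, hyx⟩
          have h1 : y⁻¹ * x ∈ a := QuotientGroup.eq.mp hyx
          have h2 : y⁻¹ * x ∈ c := hc.2.1 h1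
          have h3 : y * (y⁻¹ * x) = x := by group
          exact h3 ▸ c.mul_mem hy h2
        · intro hx
          exact ⟨x, hx, rfl⟩
      have hmap : Subgroup.map (QuotientGroup.mk' a) c ∈
          {b : Subgroup (𝔊 ⧸ a) | IsIdealSG Γ b ∧
            ∀ γ ∈ (Λ : Set Γ), (QuotientGroup.mk (η γ) : 𝔊 ⧸ a) ∈ b} := by
        refine ⟨⟨?_, ?_, ?_⟩, ?_⟩
        · rw [← (QuotientGroup.isQuotientMap_mk a).isClosed_preimage, hsat]
          exact hc.1.1
        · exact hc.1.2.1.map _ (QuotientGroup.mk'_surjective a)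
        · rintro γ q hq
          obtain ⟨x, hx, rfl⟩ := hq
          rw [show ((QuotientGroup.mk' a) x : 𝔊 ⧸ a) = QuotientGroup.mk x from rfl, hsmul]
          exact ⟨γ • x, hc.1.2.2 γ x hx, rfl⟩
        · intro γ hγ
          exact ⟨η γ, hc.2.2 γ hγ, rfl⟩
      have hmem := Subgroup.mem_sInf.1 hg _ hmap
      have : g ∈ QuotientGroup.mk ⁻¹'
          ((Subgroup.map (QuotientGroup.mk' a) c : Subgroup (𝔊 ⧸ a)) : Set (𝔊 ⧸ a)) := hmem
      rw [hsat] at this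
      exact this
    · intro hg
      rw [cogalJ, Subgroup.mem_sInf]
      intro b hb
      have hcom : Subgroup.comap (QuotientGroup.mk' a) b ∈ JFam η a Λ := by
        refine ⟨⟨?_, ?_, ?_⟩, ?_, ?_⟩
        · have hpre : ((Subgroup.comap (QuotientGroup.mk' a) b : Subgroup 𝔊) : Set 𝔊)
              = QuotientGroup.mk ⁻¹' (b : Set (𝔊 ⧸ a)) := rfl
          rw [hpre]
          exact hb.1.1.preimage (QuotientGroup.isQuotientMap_mk a).continuous
        · exact hb.1.2.1.comap _
        · intro γ g' hg'
          show QuotientGroup.mk (γ • g') ∈ b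
          rw [← hsmul]
          exact hb.1.2.2 γ _ hg'
        · intro x hx
          show QuotientGroup.mk x ∈ b
          rw [(QuotientGroup.eq_one_iff x).2 hx]
          exact b.one_mem
        · intro δ hδ
          exact hb.2 δ hδ
      exact Subgroup.mem_sInf.1 hg _ hcom
  constructor
  · rintro ⟨h1, h2, h3⟩
    refine ⟨hsurj.1 h1, ?_⟩
    intro Λ hΛc hΛk γ hγ
    have heq := h2 Λ hΛc (fun γ' hγ' => hΛk γ' ((QuotientGroup.eq_one_iff _).1 hγ'))
    have hmem : γ ∈ (fun γ : Γ => (QuotientGroup.mk (η γ) : 𝔊 ⧸ a)) ⁻¹'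
        ((cogalJ Γ (fun γ : Γ => (QuotientGroup.mk (η γ) : 𝔊 ⧸ a)) (Λ : Set Γ)
          : Subgroup (𝔊 ⧸ a)) : Set (𝔊 ⧸ a)) := (hkey Λ (η γ)).2 hγ
    rw [heq] at hmem
    exact hmem
  · rintro ⟨h1, h2⟩
    refine ⟨hsurj.2 h1, ?_, ?_⟩
    · intro Λ hΛc hΛk
      ext γ
      constructor
      · intro hγ
        exact h2 Λ hΛc (fun γ' h' => hΛk γ' ((QuotientGroup.eq_one_iff _).2 h')) γ
          ((hkey Λ (η γ)).1 hγ)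
      · intro hγ
        exact (hkey Λ (η γ)).2 (eta_mem_Jset η a hγ)
    · intro b hb
      exact cogalJ_preimage _ (hsurj.2 h1) b hb

theorem isKneserIdeal_iff (η : Γ → 𝔊) (a : Subgroup 𝔊) :
    IsKneserIdeal η a ↔ ∀ g : 𝔊, ∃ γ : Γ, (η γ)⁻¹ * g ∈ a := by
  constructor
  · intro hs g
    obtain ⟨γ, hγ⟩ := hs (QuotientGroup.mk g)
    exact ⟨γ, QuotientGroup.eq.mp hγ⟩
  · intro hs q
    obtain ⟨g, rfl⟩ := QuotientGroup.mk_surjective q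
    obtain ⟨γ, hγ⟩ := hs g
    exact ⟨γ, QuotientGroup.eq.mpr hγ⟩

end Trans
/-- Properties of coGalois ideals for a generating cocycle `η : Γ → 𝔊`:
(1) the coGalois ideals form an upper subset of the ideals of `𝔊`, contained in the Kneser
ideals;
(2) an ideal `a` is coGalois if and only if every open ideal containing `a` is coGalois;
(3) every coGalois ideal contains a minimal coGalois ideal. -/
theorem coGalois_ideal_properties
    {Γ 𝔊 : Type*} [Group Γ] [TopologicalSpace Γ] [IsTopologicalGroup Γ]
    [CompactSpace Γ] [T2Space Γ] [TotallyDisconnectedSpace Γ]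
    [Group 𝔊] [TopologicalSpace 𝔊] [IsTopologicalGroup 𝔊]
    [CompactSpace 𝔊] [T2Space 𝔊] [TotallyDisconnectedSpace 𝔊]
    [MulDistribMulAction Γ 𝔊] [ContinuousSMul Γ 𝔊]
    (η : Γ → 𝔊) (hcont : Continuous η)
    (hcoc : ∀ σ τ : Γ, η (σ * τ) = η σ * σ • η τ)
    (hgen : (Subgroup.closure (Set.range η)).topologicalClosure = ⊤) :
    -- (1)
    ((∀ a b : Subgroup 𝔊, ∀ (ha : IsIdealSG Γ a) (hb : IsIdealSG Γ b), a ≤ b →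
        IsCoGaloisIdeal η a ha.2.1 ha.2.2 → IsCoGaloisIdeal η b hb.2.1 hb.2.2) ∧
      (∀ a : Subgroup 𝔊, ∀ ha : IsIdealSG Γ a,
        IsCoGaloisIdeal η a ha.2.1 ha.2.2 → IsKneserIdeal η a)) ∧
    -- (2)
    (∀ a : Subgroup 𝔊, ∀ ha : IsIdealSG Γ a,
      (IsCoGaloisIdeal η a ha.2.1 ha.2.2 ↔
        ∀ b : Subgroup 𝔊, ∀ hb : IsIdealSG Γ b, a ≤ b → IsOpen (b : Set 𝔊) →
          IsCoGaloisIdeal η b hb.2.1 hb.2.2)) ∧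
    -- (3)
    (∀ a : Subgroup 𝔊, ∀ ha : IsIdealSG Γ a, IsCoGaloisIdeal η a ha.2.1 ha.2.2 →
      ∃ m : Subgroup 𝔊, ∃ hm : IsIdealSG Γ m, IsCoGaloisIdeal η m hm.2.1 hm.2.2 ∧ m ≤ a ∧
        ∀ m' : Subgroup 𝔊, ∀ hm' : IsIdealSG Γ m',
          IsCoGaloisIdeal η m' hm'.2.1 hm'.2.2 → m' ≤ m → m' = m) := by
  have tr : ∀ (a : Subgroup 𝔊) (ha : IsIdealSG Γ a),
      IsCoGaloisIdeal η a ha.2.1 ha.2.2 ↔ CoGalP η a := fun a ha =>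
    isCoGaloisIdeal_iff_coGalP η a ha
  refine ⟨⟨?_, ?_⟩, ?_, ?_⟩
  · intro a b ha hb hab hca
    exact (tr b hb).2 (CoGalP.mono hab ((tr a ha).1 hca))
  · intro a ha hca
    exact (isKneserIdeal_iff η a).2 ((tr a ha).1 hca).1
  · intro a ha
    constructor
    · intro hca b hb hab hbopen
      exact (tr b hb).2 (CoGalP.mono hab ((tr a ha).1 hca))
    · intro hall
      refine (tr a ha).2 (coGalP_of_forall_open hcont ha ?_)
      intro b hbi hab hbopen
      exact (tr b hbi).1 (hall b hbi hab hbopen)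
  · intro a ha hca
    obtain ⟨m, ⟨hmi, hmP⟩, hma, hmin⟩ := exists_minimal_coGalP hcont ha ((tr a ha).1 hca)
    exact ⟨m, hmi, (tr m hmi).2 hmP, hma,
      fun m' hm' hcm' hle => hmin m' hm' ((tr m' hm').1 hcm') hle⟩
end

section
/- (Abstract coGalois Criterion) Let η : Γ → 𝔊 be a surjective generating cocycle, and call an ideal a of 𝔊 coGalois if the induced triple (Γ, 𝔊/a, η_a) is a coGalois triple. Every ideal maximal (with respect to inclusion) among the non-coGalois ideals of 𝔊 is open, and for every ideal a of 𝔊 the following are equivalent: (1) a is a coGalois ideal; (2) a ⊄ m for every ideal m maximal among the non-coGalois ideals of 𝔊. -/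
/-- An ideal of `𝔊` maximal (w.r.t. inclusion) among the non-coGalois ideals. -/
def IsMaxNonCoGaloisIdeal {Γ 𝔊 : Type*} [Group Γ] [TopologicalSpace Γ]
    [Group 𝔊] [TopologicalSpace 𝔊] [MulDistribMulAction Γ 𝔊] (η : Γ → 𝔊)
    (m : Subgroup 𝔊) : Prop :=
  ∃ hm : IsIdealSG Γ m, ¬ IsCoGaloisIdeal η m hm.2.1 hm.2.2 ∧
    ∀ m' : Subgroup 𝔊, ∀ hm' : IsIdealSG Γ m',
      ¬ IsCoGaloisIdeal η m' hm'.2.1 hm'.2.2 → m ≤ m' → m' = m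

section AuxCoGalois

open Pointwise

/-! ### Generic lemmas about `cogalJ` -/

section CogalJBasic

variable {Γ H : Type*} [Group H] [TopologicalSpace H] [SMul Γ H] (η' : Γ → H)

lemma aux_mem_cogalJ_self {X : Set Γ} {γ : Γ} (hγ : γ ∈ X) : η' γ ∈ cogalJ Γ η' X :=
  Subgroup.mem_sInf.2 fun _ hq => hq.2 γ hγ

lemma aux_cogalJ_le {X : Set Γ} {q : Subgroup H} (hq : IsIdealSG Γ q)
    (h : ∀ γ ∈ X, η' γ ∈ q) : cogalJ Γ η' X ≤ q :=
  sInf_le ⟨hq, h⟩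

lemma aux_cogalJ_mono {X Y : Set Γ} (h : X ⊆ Y) : cogalJ Γ η' X ≤ cogalJ Γ η' Y :=
  le_sInf fun q hq => sInf_le ⟨hq.1, fun γ hγ => hq.2 γ (h hγ)⟩

lemma aux_cogalJ_isIdeal (X : Set Γ) : IsIdealSG Γ (cogalJ Γ η' X) := by
  refine ⟨?_, ⟨?_⟩, ?_⟩
  · rw [cogalJ, Subgroup.coe_sInf]
    exact isClosed_biInter fun q hq => hq.1.1
  · intro n hn g
    rw [cogalJ, Subgroup.mem_sInf] at hn ⊢
    exact fun q hq => hq.1.2.1.conj_mem n (hn q hq) g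
  · intro γ g hg
    rw [cogalJ, Subgroup.mem_sInf] at hg ⊢
    exact fun q hq => hq.1.2.2 γ g (hg q hq)

end CogalJBasic

/-! ### Cocycle basics -/

section Cocycle

variable {Γ 𝔊 : Type*} [Group Γ] [Group 𝔊] [MulDistribMulAction Γ 𝔊]
variable {η : Γ → 𝔊}

lemma aux_coc_one (hcoc : ∀ σ τ : Γ, η (σ * τ) = η σ * σ • η τ) : η 1 = 1 := by
  have h := hcoc 1 1
  rw [mul_one, one_smul] at h
  exact (left_eq_mul.1 h)

lemma aux_coc_inv (hcoc : ∀ σ τ : Γ, η (σ * τ) = η σ * σ • η τ) (σ : Γ) :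
    η σ⁻¹ = σ⁻¹ • (η σ)⁻¹ := by
  have h := hcoc σ⁻¹ σ
  rw [inv_mul_cancel, aux_coc_one hcoc] at h
  rw [smul_inv']
  exact eq_inv_of_mul_eq_one_left h.symm

/-- The preimage of an invariant subgroup under a cocycle is a subgroup. -/
def auxKerSub (η : Γ → 𝔊) (hcoc : ∀ σ τ : Γ, η (σ * τ) = η σ * σ • η τ)
    (b : Subgroup 𝔊) (hb : ∀ (γ : Γ) (g : 𝔊), g ∈ b → γ • g ∈ b) : Subgroup Γ where
  carrier := {γ | η γ ∈ b}
  one_mem' := by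
    simp only [Set.mem_setOf_eq, aux_coc_one hcoc]
    exact b.one_mem
  mul_mem' := by
    intro σ τ hσ hτ
    simp only [Set.mem_setOf_eq, hcoc σ τ]
    exact b.mul_mem hσ (hb σ _ hτ)
  inv_mem' := by
    intro σ hσ
    simp only [Set.mem_setOf_eq, aux_coc_inv hcoc σ]
    exact hb _ _ (b.inv_mem hσ)

@[simp] lemma auxKerSub_mem {η : Γ → 𝔊} (hcoc : ∀ σ τ : Γ, η (σ * τ) = η σ * σ • η τ)
    {b : Subgroup 𝔊} (hb : ∀ (γ : Γ) (g : 𝔊), g ∈ b → γ • g ∈ b) {γ : Γ} :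
    γ ∈ auxKerSub η hcoc b hb ↔ η γ ∈ b := Iff.rfl

end Cocycle

end AuxCoGalois
section Cond1Sec

variable {Γ 𝔊 : Type*} [Group Γ] [TopologicalSpace Γ] [Group 𝔊] [TopologicalSpace 𝔊]
  [MulDistribMulAction Γ 𝔊]

/-- The essential "coGalois" condition for an ideal `a`: the operator `S∘J` is the identity
on closed subgroups of `Γ` containing the kernel. -/
def Cond1 (η : Γ → 𝔊) (a : Subgroup 𝔊) (hn : a.Normal)
    (hinv : ∀ (γ : Γ) (g : 𝔊), g ∈ a → γ • g ∈ a) : Prop :=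
  letI := hn
  letI := quotSMul a hinv
  ∀ Λ : Subgroup Γ, IsClosed (Λ : Set Γ) → (∀ γ : Γ, η γ ∈ a → γ ∈ Λ) →
    ∀ γ : Γ, (QuotientGroup.mk (η γ) : 𝔊 ⧸ a) ∈
      cogalJ Γ (fun δ : Γ => (QuotientGroup.mk (η δ) : 𝔊 ⧸ a)) (Λ : Set Γ) → γ ∈ Λ

lemma isCoGaloisIdeal_iff_cond1 (η : Γ → 𝔊) (hsurj : Function.Surjective η)
    (a : Subgroup 𝔊) (ha : IsIdealSG Γ a) :
    IsCoGaloisIdeal η a ha.2.1 ha.2.2 ↔ Cond1 η a ha.2.1 ha.2.2 := by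
  letI := ha.2.1
  letI := quotSMul a ha.2.2
  constructor
  · intro h
    have h' : Function.Surjective (fun γ : Γ => (QuotientGroup.mk (η γ) : 𝔊 ⧸ a)) ∧
        (∀ Λ : Subgroup Γ, IsClosed (Λ : Set Γ) →
          (∀ γ : Γ, (QuotientGroup.mk (η γ) : 𝔊 ⧸ a) = 1 → γ ∈ Λ) →
          (fun γ : Γ => (QuotientGroup.mk (η γ) : 𝔊 ⧸ a)) ⁻¹'
            ((cogalJ Γ (fun δ : Γ => (QuotientGroup.mk (η δ) : 𝔊 ⧸ a)) (Λ : Set Γ) :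
              Subgroup (𝔊 ⧸ a)) : Set (𝔊 ⧸ a)) = (Λ : Set Γ)) ∧
        (∀ q : Subgroup (𝔊 ⧸ a), IsIdealSG Γ q →
          cogalJ Γ (fun δ : Γ => (QuotientGroup.mk (η δ) : 𝔊 ⧸ a))
            ((fun γ : Γ => (QuotientGroup.mk (η γ) : 𝔊 ⧸ a)) ⁻¹' (q : Set (𝔊 ⧸ a))) = q) := h
    intro Λ hcl hker γ hγ
    have := h'.2.1 Λ hcl (fun δ hδ => hker δ ((QuotientGroup.eq_one_iff _).1 hδ))
    rw [Set.ext_iff] at this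
    exact (this γ).1 hγ
  · intro h
    refine ⟨?_, ?_, ?_⟩
    · intro x
      obtain ⟨g, rfl⟩ := QuotientGroup.mk_surjective x
      obtain ⟨γ, rfl⟩ := hsurj g
      exact ⟨γ, rfl⟩
    · intro Λ hcl hker
      apply Set.eq_of_subset_of_subset
      · intro γ hγ
        exact h Λ hcl (fun δ hδ => hker δ ((QuotientGroup.eq_one_iff _).2 hδ)) γ hγ
      · intro γ hγ
        exact aux_mem_cogalJ_self _ hγ
    · intro q hq
      refine le_antisymm (sInf_le ⟨hq, fun γ hγ => hγ⟩) (le_sInf fun r hr x hx => ?_)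
      obtain ⟨g, rfl⟩ := QuotientGroup.mk_surjective x
      obtain ⟨γ, rfl⟩ := hsurj g
      exact hr.2 γ hx

end Cond1Sec
section MonoSec

variable {Γ 𝔊 : Type*} [Group Γ] [TopologicalSpace Γ]
  [Group 𝔊] [TopologicalSpace 𝔊] [IsTopologicalGroup 𝔊] [CompactSpace 𝔊]
  [MulDistribMulAction Γ 𝔊]

lemma cond1_mono (η : Γ → 𝔊) (hsurj : Function.Surjective η)
    {a b : Subgroup 𝔊} (ha : IsIdealSG Γ a) (hb : IsIdealSG Γ b) (hab : a ≤ b)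
    (h : Cond1 η a ha.2.1 ha.2.2) : Cond1 η b hb.2.1 hb.2.2 := by
  letI := ha.2.1; letI := hb.2.1
  letI := quotSMul a ha.2.2; letI := quotSMul b hb.2.2
  haveI : IsClosed (b : Set 𝔊) := hb.1
  have h' : (∀ Λ : Subgroup Γ, IsClosed (Λ : Set Γ) → (∀ γ : Γ, η γ ∈ a → γ ∈ Λ) →
      ∀ γ : Γ, (QuotientGroup.mk (η γ) : 𝔊 ⧸ a) ∈
        cogalJ Γ (fun δ : Γ => (QuotientGroup.mk (η δ) : 𝔊 ⧸ a)) (Λ : Set Γ) → γ ∈ Λ) := h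
  show ∀ Λ : Subgroup Γ, IsClosed (Λ : Set Γ) → (∀ γ : Γ, η γ ∈ b → γ ∈ Λ) →
      ∀ γ : Γ, (QuotientGroup.mk (η γ) : 𝔊 ⧸ b) ∈
        cogalJ Γ (fun δ : Γ => (QuotientGroup.mk (η δ) : 𝔊 ⧸ b)) (Λ : Set Γ) → γ ∈ Λ
  intro Λ hcl hker γ0 hγ0
  set ηa : Γ → 𝔊 ⧸ a := fun δ => QuotientGroup.mk (η δ) with hηa
  set ηb : Γ → 𝔊 ⧸ b := fun δ => QuotientGroup.mk (η δ) with hηb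
  set π : 𝔊 ⧸ a →* 𝔊 ⧸ b := QuotientGroup.map a b (MonoidHom.id 𝔊) hab with hπdef
  have hπmk : ∀ g : 𝔊, π (QuotientGroup.mk g) = QuotientGroup.mk g := fun g => rfl
  have hπsm : ∀ (γ : Γ) (x : 𝔊 ⧸ a), π (γ • x) = γ • π x := fun γ x =>
    QuotientGroup.induction_on x fun _ => rfl
  have hπc : Continuous π := by
    rw [(QuotientGroup.isQuotientMap_mk a).continuous_iff]
    exact QuotientGroup.continuous_mk
  have hπsurj : Function.Surjective π := by
    intro x
    obtain ⟨g, rfl⟩ := QuotientGroup.mk_surjective x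
    exact ⟨QuotientGroup.mk g, rfl⟩
  set Ja := cogalJ Γ ηa (Λ : Set Γ) with hJadef
  have hJa : IsIdealSG Γ Ja := aux_cogalJ_isIdeal ηa _
  set D : Subgroup (𝔊 ⧸ b) := Subgroup.map π Ja with hDdef
  have hD : IsIdealSG Γ D := by
    refine ⟨?_, ⟨?_⟩, ?_⟩
    · exact ((hJa.1.isCompact).image hπc).isClosed
    · rintro n ⟨x, hx, rfl⟩ g
      obtain ⟨y, rfl⟩ := hπsurj g
      exact ⟨y * x * y⁻¹, hJa.2.1.conj_mem x hx y, by rw [map_mul, map_mul, map_inv]⟩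
    · rintro γ n ⟨x, hx, rfl⟩
      exact ⟨γ • x, hJa.2.2 γ x hx, hπsm γ x⟩
  have hηbD : ∀ δ ∈ (Λ : Set Γ), ηb δ ∈ D :=
    fun δ hδ => ⟨ηa δ, aux_mem_cogalJ_self ηa hδ, hπmk (η δ)⟩
  have hJbD : cogalJ Γ ηb (Λ : Set Γ) ≤ D := aux_cogalJ_le ηb hD hηbD
  obtain ⟨x, hx, hxe⟩ := hJbD hγ0
  have hkerJa : ∀ y : 𝔊 ⧸ a, π y = 1 → y ∈ Ja := by
    intro y hy
    obtain ⟨g, rfl⟩ := QuotientGroup.mk_surjective y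
    rw [hπmk] at hy
    obtain ⟨δ, rfl⟩ := hsurj g
    exact aux_mem_cogalJ_self ηa (hker δ ((QuotientGroup.eq_one_iff _).1 hy))
  have hmul : ηa γ0 ∈ Ja := by
    have h1 : π (ηa γ0 * x⁻¹) = 1 := by
      rw [map_mul, map_inv, hxe, show π (ηa γ0) = ηb γ0 from hπmk (η γ0)]
      exact mul_inv_cancel _
    have h2 := Ja.mul_mem (hkerJa _ h1) hx
    rwa [inv_mul_cancel_right] at h2
  exact h' Λ hcl (fun δ hδ => hker δ (hab hδ)) γ0 hmul

end MonoSec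
section OpenIdeals

open Pointwise

variable {Γ 𝔊 : Type*} [Group Γ] [TopologicalSpace Γ] [IsTopologicalGroup Γ] [CompactSpace Γ]
  [Group 𝔊] [TopologicalSpace 𝔊] [IsTopologicalGroup 𝔊]
  [CompactSpace 𝔊] [T2Space 𝔊] [TotallyDisconnectedSpace 𝔊]
  [MulDistribMulAction Γ 𝔊] [ContinuousSMul Γ 𝔊]

/-- Every element outside a closed ideal is excluded by some open ideal containing it:
closed ideals are intersections of open ideals. -/
lemma aux_mem_of_forall_open_ideal {a : Subgroup 𝔊} (ha : IsIdealSG Γ a) {x : 𝔊}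
    (hx : ∀ b : Subgroup 𝔊, IsIdealSG Γ b → a ≤ b → IsOpen (b : Set 𝔊) → x ∈ b) :
    x ∈ a := by
  by_contra hxa
  have hT : IsOpen ((fun y : 𝔊 => x * y) ⁻¹' (↑a)ᶜ) :=
    ha.1.isOpen_compl.preimage (continuous_mul_left x)
  have h1T : (1 : 𝔊) ∈ (fun y : 𝔊 => x * y) ⁻¹' (↑a)ᶜ := by
    simp only [Set.mem_preimage, mul_one, Set.mem_compl_iff, SetLike.mem_coe]
    exact hxa
  obtain ⟨V, hVclopen, hV1, hVT⟩ := compact_exists_isClopen_in_isOpen hT h1T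
  obtain ⟨W, hW⟩ :=
    IsTopologicalGroup.exist_openNormalSubgroup_sub_clopen_nhds_of_one hVclopen hV1
  set W' : Subgroup 𝔊 := W.toSubgroup with hW'def
  have hWopen : IsOpen (W' : Set 𝔊) := W.toOpenSubgroup.isOpen
  have hWnormal : W'.Normal := W.isNormal'
  set V' : Subgroup 𝔊 := ⨅ γ : Γ, γ • W' with hV'def
  have hV'mem : ∀ g : 𝔊, g ∈ V' ↔ ∀ γ : Γ, γ⁻¹ • g ∈ W' := by
    intro g
    rw [hV'def, Subgroup.mem_iInf]
    exact forall_congr' fun γ => Subgroup.mem_pointwise_smul_iff_inv_smul_mem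
  have hV'le : V' ≤ W' := by
    intro g hg
    have := (hV'mem g).1 hg 1
    rwa [inv_one, one_smul] at this
  have hV'open : IsOpen (V' : Set 𝔊) := by
    have hcont2 : Continuous fun p : Γ × 𝔊 => p.1⁻¹ • p.2 :=
      (continuous_fst.inv).smul continuous_snd
    have hF : IsOpen {p : Γ × 𝔊 | p.1⁻¹ • p.2 ∈ W'} := hWopen.preimage hcont2
    have hsub : (Set.univ : Set Γ) ×ˢ ({1} : Set 𝔊) ⊆ {p : Γ × 𝔊 | p.1⁻¹ • p.2 ∈ W'} := by
      rintro ⟨γ, g⟩ ⟨-, hg⟩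
      simp only [Set.mem_singleton_iff] at hg
      subst hg
      simp only [Set.mem_setOf_eq, smul_one]
      exact W'.one_mem
    obtain ⟨u, v, -, hvopen, hu, h1v, huv⟩ :=
      generalized_tube_lemma isCompact_univ isCompact_singleton hF hsub
    refine Subgroup.isOpen_of_mem_nhds V'
      (Filter.mem_of_superset (hvopen.mem_nhds (h1v rfl)) ?_)
    intro g hg
    rw [SetLike.mem_coe, hV'mem g]
    intro γ
    have hmem : (γ, g) ∈ u ×ˢ v := Set.mem_prod.2 ⟨hu (Set.mem_univ γ), hg⟩
    exact huv hmem
  have hV'normal : V'.Normal := by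
    constructor
    intro n hn g
    rw [hV'mem] at hn ⊢
    intro γ
    have h2 : γ⁻¹ • (g * n * g⁻¹) = (γ⁻¹ • g) * (γ⁻¹ • n) * (γ⁻¹ • g)⁻¹ := by
      rw [smul_mul', smul_mul', smul_inv']
    rw [h2]
    exact hWnormal.conj_mem _ (hn γ) _
  have hV'inv : ∀ (γ : Γ) (g : 𝔊), g ∈ V' → γ • g ∈ V' := by
    intro γ g hg
    rw [hV'mem] at hg ⊢
    intro δ
    rw [smul_smul]
    simpa [mul_inv_rev] using hg (γ⁻¹ * δ)
  set b : Subgroup 𝔊 := a ⊔ V' with hbdef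
  haveI := ha.2.1
  haveI := hV'normal
  have hbopen : IsOpen (b : Set 𝔊) := Subgroup.isOpen_mono le_sup_right hV'open
  have hbn : b.Normal := inferInstance
  have hbinv : ∀ (γ : Γ) (g : 𝔊), g ∈ b → γ • g ∈ b := by
    intro γ g hg
    have hg' : g ∈ (↑a * ↑V' : Set 𝔊) := by
      rw [← Subgroup.mul_normal a V']
      exact hg
    obtain ⟨y, hy, w, hw, rfl⟩ := hg'
    rw [smul_mul']
    exact Subgroup.mul_mem _ (Subgroup.mem_sup_left (ha.2.2 γ y hy))
      (Subgroup.mem_sup_right (hV'inv γ w hw))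
  have hxb := hx b ⟨Subgroup.isClosed_of_isOpen b hbopen, hbn, hbinv⟩ le_sup_left hbopen
  have hxb' : x ∈ (↑a * ↑V' : Set 𝔊) := by
    rw [← Subgroup.mul_normal a V']
    exact hxb
  obtain ⟨y, hy, w, hw, hyw⟩ := hxb'
  have hxw : x * w⁻¹ ∉ a := by
    have hwV : w⁻¹ ∈ V := hW (W'.inv_mem (hV'le hw))
    have := hVT hwV
    simpa only [Set.mem_preimage, Set.mem_compl_iff, SetLike.mem_coe] using this
  apply hxw
  have : x * w⁻¹ = y := by rw [← hyw]; group
  rw [this]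
  exact hy

end OpenIdeals
section LimitSec

open Pointwise

variable {Γ 𝔊 : Type*} [Group Γ] [TopologicalSpace Γ] [IsTopologicalGroup Γ]
  [CompactSpace Γ] [T2Space Γ] [TotallyDisconnectedSpace Γ]
  [Group 𝔊] [TopologicalSpace 𝔊] [IsTopologicalGroup 𝔊]
  [CompactSpace 𝔊] [T2Space 𝔊] [TotallyDisconnectedSpace 𝔊]
  [MulDistribMulAction Γ 𝔊] [ContinuousSMul Γ 𝔊]

lemma cond1_of_open (η : Γ → 𝔊) (hcont : Continuous η)
    (hcoc : ∀ σ τ : Γ, η (σ * τ) = η σ * σ • η τ)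
    {a : Subgroup 𝔊} (ha : IsIdealSG Γ a)
    (h : ∀ b : Subgroup 𝔊, ∀ hb : IsIdealSG Γ b, a ≤ b → IsOpen (b : Set 𝔊) →
      Cond1 η b hb.2.1 hb.2.2) :
    Cond1 η a ha.2.1 ha.2.2 := by
  letI := ha.2.1
  letI := quotSMul a ha.2.2
  show ∀ Λ : Subgroup Γ, IsClosed (Λ : Set Γ) → (∀ γ : Γ, η γ ∈ a → γ ∈ Λ) →
      ∀ γ : Γ, (QuotientGroup.mk (η γ) : 𝔊 ⧸ a) ∈
        cogalJ Γ (fun δ : Γ => (QuotientGroup.mk (η δ) : 𝔊 ⧸ a)) (Λ : Set Γ) → γ ∈ Λ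
  intro Λ hcl hker γ0 hγ0
  by_contra hγ0Λ
  -- choose an open subgroup `O ⊇ Λ` avoiding `γ0`
  have hT : IsOpen ((fun x : Γ => γ0 * x) ⁻¹' (↑Λ)ᶜ) :=
    hcl.isOpen_compl.preimage (continuous_mul_left γ0)
  have h1T : (1 : Γ) ∈ (fun x : Γ => γ0 * x) ⁻¹' (↑Λ)ᶜ := by
    simp only [Set.mem_preimage, mul_one, Set.mem_compl_iff, SetLike.mem_coe]
    exact hγ0Λ
  obtain ⟨V, hVclopen, hV1, hVT⟩ := compact_exists_isClopen_in_isOpen hT h1T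
  obtain ⟨U, hU⟩ :=
    IsTopologicalGroup.exist_openNormalSubgroup_sub_clopen_nhds_of_one hVclopen hV1
  set U' : Subgroup Γ := U.toSubgroup with hU'def
  haveI : U'.Normal := U.isNormal'
  set O : Subgroup Γ := Λ ⊔ U' with hOdef
  have hOopen : IsOpen (O : Set Γ) := Subgroup.isOpen_mono le_sup_right U.toOpenSubgroup.isOpen
  have hγ0O : γ0 ∉ O := by
    intro hmem
    have hmem' : γ0 ∈ ((Λ : Set Γ) * (U' : Set Γ)) := by
      rw [← Subgroup.mul_normal Λ U']
      exact hmem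
    obtain ⟨l, hl, u, hu, hlu⟩ := hmem'
    have h2 := hVT (hU (U'.inv_mem hu))
    simp only [Set.mem_preimage, Set.mem_compl_iff, SetLike.mem_coe] at h2
    apply h2
    have h3 : γ0 * u⁻¹ = l := by rw [← hlu]; group
    rw [h3]; exact hl
  -- the directed family of open ideals above `a`
  haveI hne : Nonempty {b : Subgroup 𝔊 // IsIdealSG Γ b ∧ a ≤ b ∧ IsOpen (b : Set 𝔊)} :=
    ⟨⟨⊤, ⟨by rw [Subgroup.coe_top]; exact isClosed_univ, inferInstance,
      fun _ _ _ => Subgroup.mem_top _⟩, le_top, by rw [Subgroup.coe_top]; exact isOpen_univ⟩⟩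
  set Z : {b : Subgroup 𝔊 // IsIdealSG Γ b ∧ a ≤ b ∧ IsOpen (b : Set 𝔊)} → Set Γ :=
    fun b => η ⁻¹' (b.1 : Set 𝔊) with hZdef
  have hZc : ∀ b, IsClosed (Z b) := fun b => b.2.1.1.preimage hcont
  have hZO : ((O : Set Γ)ᶜ ∩ ⋂ b, Z b) = ∅ := by
    rw [Set.eq_empty_iff_forall_notMem]
    rintro δ ⟨hδO, hδZ⟩
    rw [Set.mem_iInter] at hδZ
    have hδa : η δ ∈ a := aux_mem_of_forall_open_ideal ha
      (fun b hb hab hbo => hδZ ⟨b, hb, hab, hbo⟩)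
    exact hδO (SetLike.mem_coe.2 (Subgroup.mem_sup_left (hker δ hδa)))
  have hdir : Directed (· ⊇ ·) Z := by
    rintro b c
    refine ⟨⟨b.1 ⊓ c.1, ⟨?_, ⟨?_⟩, ?_⟩, le_inf b.2.2.1 c.2.2.1, ?_⟩, ?_, ?_⟩
    · rw [Subgroup.coe_inf]; exact b.2.1.1.inter c.2.1.1
    · intro n hn g
      rw [Subgroup.mem_inf] at hn ⊢
      exact ⟨b.2.1.2.1.conj_mem n hn.1 g, c.2.1.2.1.conj_mem n hn.2 g⟩
    · intro γ g hg
      rw [Subgroup.mem_inf] at hg ⊢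
      exact ⟨b.2.1.2.2 γ g hg.1, c.2.1.2.2 γ g hg.2⟩
    · rw [Subgroup.coe_inf]; exact b.2.2.2.inter c.2.2.2
    · intro δ hδ
      exact (Subgroup.mem_inf.1 hδ).1
    · intro δ hδ
      exact (Subgroup.mem_inf.1 hδ).2
  obtain ⟨b₀, hb₀⟩ := IsCompact.elim_directed_family_closed
    (hOopen.isClosed_compl.isCompact) Z hZc hZO hdir
  have hZb₀O : Z b₀ ⊆ (O : Set Γ) := by
    intro δ hδ
    by_contra hδO
    exact Set.eq_empty_iff_forall_notMem.1 hb₀ δ ⟨hδO, hδ⟩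
  -- pass to the closed subgroup generated by `Λ` and the kernel at level `b₀`
  set K : Subgroup Γ := auxKerSub η hcoc b₀.1 b₀.2.1.2.2 with hKdef
  set Λ' : Subgroup Γ := (Λ ⊔ K).topologicalClosure with hΛ'def
  have hΛΛ' : Λ ≤ Λ' := le_trans le_sup_left (Subgroup.le_topologicalClosure _)
  have hKΛ' : K ≤ Λ' := le_trans le_sup_right (Subgroup.le_topologicalClosure _)
  have hΛ'O : Λ' ≤ O := by
    apply Subgroup.topologicalClosure_minimal
    · apply sup_le
      · exact le_sup_left
      · intro δ hδ
        exact hZb₀O hδ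
    · exact Subgroup.isClosed_of_isOpen O hOopen
  letI := b₀.2.1.2.1
  letI := quotSMul b₀.1 b₀.2.1.2.2
  have hC' : (∀ Λ'' : Subgroup Γ, IsClosed (Λ'' : Set Γ) → (∀ γ : Γ, η γ ∈ b₀.1 → γ ∈ Λ'') →
      ∀ γ : Γ, (QuotientGroup.mk (η γ) : 𝔊 ⧸ b₀.1) ∈
        cogalJ Γ (fun δ : Γ => (QuotientGroup.mk (η δ) : 𝔊 ⧸ b₀.1)) (Λ'' : Set Γ) → γ ∈ Λ'') :=
    h b₀.1 b₀.2.1 b₀.2.2.1 b₀.2.2.2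
  -- transfer `hγ0` along the projection `π`
  set π : 𝔊 ⧸ a →* 𝔊 ⧸ b₀.1 := QuotientGroup.map a b₀.1 (MonoidHom.id 𝔊) b₀.2.2.1 with hπdef
  have hπmk : ∀ g : 𝔊, π (QuotientGroup.mk g) = QuotientGroup.mk g := fun g => rfl
  have hπsm : ∀ (γ : Γ) (x : 𝔊 ⧸ a), π (γ • x) = γ • π x := fun γ x =>
    QuotientGroup.induction_on x fun _ => rfl
  have hπc : Continuous π := by
    rw [(QuotientGroup.isQuotientMap_mk a).continuous_iff]
    exact QuotientGroup.continuous_mk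
  set Jb := cogalJ Γ (fun δ : Γ => (QuotientGroup.mk (η δ) : 𝔊 ⧸ b₀.1)) (Λ' : Set Γ) with hJbdef
  have hJbI : IsIdealSG Γ Jb := aux_cogalJ_isIdeal _ _
  have hcomapI : IsIdealSG Γ (Jb.comap π) := by
    refine ⟨hJbI.1.preimage hπc, ⟨?_⟩, ?_⟩
    · intro n hn g
      rw [Subgroup.mem_comap] at hn ⊢
      rw [map_mul, map_mul, map_inv]
      exact hJbI.2.1.conj_mem _ hn _
    · intro γ x hxm
      rw [Subgroup.mem_comap] at hxm ⊢
      rw [hπsm]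
      exact hJbI.2.2 γ _ hxm
  have hle : cogalJ Γ (fun δ : Γ => (QuotientGroup.mk (η δ) : 𝔊 ⧸ a)) (Λ : Set Γ) ≤
      Jb.comap π := by
    apply aux_cogalJ_le _ hcomapI
    intro δ hδ
    rw [Subgroup.mem_comap]
    show π (QuotientGroup.mk (η δ)) ∈ Jb
    rw [hπmk]
    exact aux_mem_cogalJ_self _ (hΛΛ' hδ)
  have hmem : (QuotientGroup.mk (η γ0) : 𝔊 ⧸ b₀.1) ∈ Jb := by
    have h4 := hle hγ0
    rw [Subgroup.mem_comap] at h4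
    rwa [show π (QuotientGroup.mk (η γ0)) = QuotientGroup.mk (η γ0) from hπmk _] at h4
  have hγ0Λ' : γ0 ∈ Λ' :=
    hC' Λ' (Subgroup.isClosed_topologicalClosure _) (fun δ hδ => hKΛ' hδ) γ0 hmem
  exact hγ0O (hΛ'O hγ0Λ')

end LimitSec
section MainSec

variable {Γ 𝔊 : Type*} [Group Γ] [TopologicalSpace Γ] [IsTopologicalGroup Γ]
  [CompactSpace Γ] [T2Space Γ] [TotallyDisconnectedSpace Γ]
  [Group 𝔊] [TopologicalSpace 𝔊] [IsTopologicalGroup 𝔊]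
  [CompactSpace 𝔊] [T2Space 𝔊] [TotallyDisconnectedSpace 𝔊]
  [MulDistribMulAction Γ 𝔊] [ContinuousSMul Γ 𝔊]

/-- A *bad* (non-coGalois) ideal. -/
def BadI (η : Γ → 𝔊) (b : Subgroup 𝔊) : Prop :=
  ∃ hb : IsIdealSG Γ b, ¬ IsCoGaloisIdeal η b hb.2.1 hb.2.2

omit [IsTopologicalGroup Γ] [CompactSpace Γ] [T2Space Γ] [TotallyDisconnectedSpace Γ]
  [IsTopologicalGroup 𝔊] [CompactSpace 𝔊] [T2Space 𝔊] [TotallyDisconnectedSpace 𝔊]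
  [ContinuousSMul Γ 𝔊] in
lemma aux_finite_above (b : Subgroup 𝔊) (hbn : b.Normal) (hfin : Finite (𝔊 ⧸ b)) :
    {c : Subgroup 𝔊 | b ≤ c}.Finite := by
  haveI := hbn
  haveI : Finite (Subgroup (𝔊 ⧸ b)) :=
    Finite.of_injective (fun H : Subgroup (𝔊 ⧸ b) => (H : Set (𝔊 ⧸ b))) SetLike.coe_injective
  have hinj : Set.InjOn (fun c : Subgroup 𝔊 => Subgroup.map (QuotientGroup.mk' b) c)
      {c : Subgroup 𝔊 | b ≤ c} := by
    intro c hc c' hc' hcc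
    have h1 : ∀ d : Subgroup 𝔊, b ≤ d →
        Subgroup.comap (QuotientGroup.mk' b) (Subgroup.map (QuotientGroup.mk' b) d) = d := by
      intro d hd
      rw [Subgroup.comap_map_eq, QuotientGroup.ker_mk', sup_eq_left.2 hd]
    rw [← h1 c hc, ← h1 c' hc']
    simp only at hcc
    rw [hcc]
  exact Set.Finite.of_finite_image (Set.toFinite _) hinj

lemma exists_max_bad (η : Γ → 𝔊) (hcont : Continuous η)
    (hcoc : ∀ σ τ : Γ, η (σ * τ) = η σ * σ • η τ) (hsurj : Function.Surjective η)
    {a : Subgroup 𝔊} (ha : IsIdealSG Γ a)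
    (hbad : ¬ IsCoGaloisIdeal η a ha.2.1 ha.2.2) :
    ∃ m : Subgroup 𝔊, a ≤ m ∧ IsOpen (m : Set 𝔊) ∧ IsMaxNonCoGaloisIdeal η m := by
  -- find an open bad ideal above `a`
  have hex : ∃ b : Subgroup 𝔊, BadI η b ∧ a ≤ b ∧ IsOpen (b : Set 𝔊) := by
    by_contra hne
    push_neg at hne
    apply hbad
    rw [isCoGaloisIdeal_iff_cond1 η hsurj a ha]
    apply cond1_of_open η hcont hcoc ha
    intro b hb hab hob
    by_contra hc1
    exact hne b ⟨hb, fun hcg => hc1 ((isCoGaloisIdeal_iff_cond1 η hsurj b hb).1 hcg)⟩ hab hob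
  obtain ⟨b, hbbad, hab, hbo⟩ := hex
  have hfinq : Finite (𝔊 ⧸ b) := Subgroup.quotient_finite_of_isOpen b hbo
  have hfin : {c : Subgroup 𝔊 | BadI η c ∧ b ≤ c}.Finite :=
    (aux_finite_above b hbbad.1.2.1 hfinq).subset fun c hc => hc.2
  have hnonempty : {c : Subgroup 𝔊 | BadI η c ∧ b ≤ c}.Nonempty := ⟨b, hbbad, le_refl b⟩
  obtain ⟨m, hmS, hmax⟩ := Set.Finite.exists_maximalFor id _ hfin hnonempty
  obtain ⟨hmI, hmNC⟩ := hmS.1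
  refine ⟨m, le_trans hab hmS.2, Subgroup.isOpen_mono hmS.2 hbo, hmI, hmNC, ?_⟩
  intro m' hm' hnc' hmm'
  exact le_antisymm (hmax ⟨⟨hm', hnc'⟩, le_trans hmS.2 hmm'⟩ hmm') hmm'

end MainSec


/-- **Abstract coGalois criterion.**  For a surjective generating cocycle `η : Γ → 𝔊`, every
ideal of `𝔊` maximal among the non-coGalois ideals is open, and an ideal `a` of `𝔊` is a
coGalois ideal if and only if `a` is not contained in any such maximal non-coGalois ideal. -/
theorem abstract_coGalois_criterion
    {Γ 𝔊 : Type*} [Group Γ] [TopologicalSpace Γ] [IsTopologicalGroup Γ]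
    [CompactSpace Γ] [T2Space Γ] [TotallyDisconnectedSpace Γ]
    [Group 𝔊] [TopologicalSpace 𝔊] [IsTopologicalGroup 𝔊]
    [CompactSpace 𝔊] [T2Space 𝔊] [TotallyDisconnectedSpace 𝔊]
    [MulDistribMulAction Γ 𝔊] [ContinuousSMul Γ 𝔊]
    (η : Γ → 𝔊) (hcont : Continuous η)
    (hcoc : ∀ σ τ : Γ, η (σ * τ) = η σ * σ • η τ)
    (hgen : (Subgroup.closure (Set.range η)).topologicalClosure = ⊤)
    (hsurj : Function.Surjective η) :
    (∀ m : Subgroup 𝔊, IsMaxNonCoGaloisIdeal η m → IsOpen (m : Set 𝔊)) ∧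
    (∀ a : Subgroup 𝔊, ∀ ha : IsIdealSG Γ a,
      (IsCoGaloisIdeal η a ha.2.1 ha.2.2 ↔
        ∀ m : Subgroup 𝔊, IsMaxNonCoGaloisIdeal η m → ¬ a ≤ m)) := by
  constructor
  · rintro m ⟨hm, hnc, hmax⟩
    obtain ⟨m', hm_le, hopen, hmax'⟩ := exists_max_bad η hcont hcoc hsurj hm hnc
    obtain ⟨hm'I, hm'nc, -⟩ := hmax'
    have heq := hmax m' hm'I hm'nc hm_le
    rw [← heq]
    exact hopen
  · intro a ha
    constructor
    · rintro hcg m ⟨hmI, hmnc, -⟩ ham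
      exact hmnc ((isCoGaloisIdeal_iff_cond1 η hsurj m hmI).2
        (cond1_mono η hsurj ha hmI ham ((isCoGaloisIdeal_iff_cond1 η hsurj a ha).1 hcg)))
    · intro hall
      by_contra hnc
      obtain ⟨m, ham, -, hmax⟩ := exists_max_bad η hcont hcoc hsurj ha hnc
      exact hall m hmax ham
end
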